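/- arXiv:1304.5958 — 5 statements merged into one kernel-verified Lean document; each statement's English description precedes it below -/
import Mathlib

section
/- Let μ be a finite positive Borel measure on the unit circle ∂𝔻 and let σ > −1. There exists a constant C > 0, depending only on σ, such that for every analytic function f on 𝔻, ∫_𝔻 |f'(z)|² P_μ(z) dA(z) ≤ C ∫_𝔻 ∫_𝔻 |f(z)−f(w)|² / |1−z̄w|^{4+2σ} · P_μ(z) (1−|z|²)^σ (1−|w|²)^σ dA(z) dA(w). -/
open MeasureTheory Set Real

noncomputable section

/-- The Poisson integral `P_μ(z) = (1/2π) ∫_{∂𝔻} (1-|z|²)/|ζ-z|² dμ(ζ)` of a measure `μ`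
on the unit circle. -/
def poissonInt (μ : Measure ℂ) (z : ℂ) : ℝ :=
  (2 * Real.pi)⁻¹ * ∫ ζ, (1 - ‖z‖ ^ 2) / ‖ζ - z‖ ^ 2 ∂μ

theorem lintegral_comp_polarCoord_symm' (f : ℝ × ℝ → ENNReal) :
    ∫⁻ p in polarCoord.target, ENNReal.ofReal p.1 * f (polarCoord.symm p) = ∫⁻ p, f p := by
  set B : ℝ × ℝ → ℝ × ℝ →L[ℝ] ℝ × ℝ := fun p =>
    LinearMap.toContinuousLinearMap (Matrix.toLin (Module.Basis.finTwoProd ℝ) (Module.Basis.finTwoProd ℝ)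
      !![Real.cos p.2, -p.1 * Real.sin p.2; Real.sin p.2, p.1 * Real.cos p.2])
  have B_det : ∀ p, (B p).det = p.1 := by
    intro p
    conv_rhs => rw [← one_mul p.1, ← Real.cos_sq_add_sin_sq p.2]
    simp only [B, neg_mul, LinearMap.det_toContinuousLinearMap, LinearMap.det_toLin,
      Matrix.det_fin_two_of, sub_neg_eq_add]
    ring
  symm
  calc
    ∫⁻ p, f p = ∫⁻ p in polarCoord.source, f p := by
      rw [← setLIntegral_univ]
      exact setLIntegral_congr polarCoord_source_ae_eq_univ.symm
    _ = ∫⁻ p in polarCoord.symm '' polarCoord.target, f p := by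
      rw [polarCoord.symm_image_target_eq_source]
    _ = ∫⁻ p in polarCoord.target, ENNReal.ofReal |(B p).det| * f (polarCoord.symm p) := by
      convert lintegral_image_eq_lintegral_abs_det_fderiv_mul volume
        polarCoord.open_target.measurableSet
        (fun p _ => (hasFDerivAt_polarCoord_symm p).hasFDerivWithinAt)
        polarCoord.symm.injOn f using 4
      rw [B_det, det_fderivPolarCoordSymm]
    _ = ∫⁻ p in polarCoord.target, ENNReal.ofReal p.1 * f (polarCoord.symm p) := by
      refine setLIntegral_congr_fun polarCoord.open_target.measurableSet
        (fun p hp => ?_)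
      rw [B_det, abs_of_pos hp.1]

theorem Complex.lintegral_comp_polarCoord_symm' (f : ℂ → ENNReal) :
    ∫⁻ p in polarCoord.target, ENNReal.ofReal p.1 * f (Complex.polarCoord.symm p) = ∫⁻ z, f z := by
  rw [← (Complex.volume_preserving_equiv_real_prod.symm).lintegral_comp_emb
    Complex.measurableEquivRealProd.symm.measurableEmbedding, ← _root_.lintegral_comp_polarCoord_symm']
  rfl

theorem meanval {h : ℂ → ℂ} {c : ℂ} {s : ℝ} (hs : 0 < s)
    (hd : DiffContOnCl ℂ h (Metric.ball c s)) :
    ∫ θ in (0:ℝ)..(2*π), h (circleMap c s θ) = (2*π : ℝ) • h c := by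
  have H := hd.circleIntegral_sub_inv_smul (Metric.mem_ball_self hs)
  rw [circleIntegral] at H
  have key : ∀ θ : ℝ, deriv (circleMap c s) θ • (circleMap c s θ - c)⁻¹ • h (circleMap c s θ)
      = Complex.I * h (circleMap c s θ) := by
    intro θ
    rw [deriv_circleMap, circleMap_sub_center, smul_eq_mul, smul_eq_mul]
    have hne : circleMap 0 s θ ≠ 0 := circleMap_ne_center hs.ne'
    field_simp
  rw [intervalIntegral.integral_congr (fun θ _ => key θ),
    intervalIntegral.integral_const_mul] at H
  have H3 : Complex.I * (∫ θ in (0:ℝ)..(2*π), h (circleMap c s θ))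
      = Complex.I * ((2*π : ℝ) • h c) := by
    rw [H, smul_eq_mul, Complex.real_smul]
    push_cast
    ring
  exact mul_left_cancel₀ Complex.I_ne_zero H3

theorem meanval_norm {h : ℂ → ℂ} {c : ℂ} {s : ℝ} (hs : 0 < s)
    (hd : DiffContOnCl ℂ h (Metric.ball c s)) :
    2*π*‖h c‖ ≤ ∫ θ in (0:ℝ)..(2*π), ‖h (circleMap c s θ)‖ := by
  have h1 : 2*π*‖h c‖ = ‖∫ θ in (0:ℝ)..(2*π), h (circleMap c s θ)‖ := by
    rw [meanval hs hd, norm_smul, Real.norm_eq_abs,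
      abs_of_pos (by positivity : (0:ℝ) < 2*π)]
  rw [h1]
  exact intervalIntegral.norm_integral_le_integral_norm (by positivity)

theorem circle_bound {h : ℂ → ℂ} {c : ℂ} {s : ℝ} (hs : 0 < s)
    (hd : DiffContOnCl ℂ h (Metric.ball c s)) :
    ENNReal.ofReal (2*π*‖h c‖)
      ≤ ∫⁻ θ in Ioo (-π) π, ENNReal.ofReal (‖h (circleMap c s θ)‖) := by
  have hcont : Continuous fun θ => h (circleMap c s θ) := by
    refine hd.continuousOn.comp_continuous (continuous_circleMap c s) fun θ => ?_
    rw [closure_ball c hs.ne']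
    exact Metric.sphere_subset_closedBall (circleMap_mem_sphere c hs.le θ)
  have per : (fun θ => ‖h (circleMap c s θ)‖).Periodic (2*π) := fun θ => by
    simp [periodic_circleMap c s θ]
  have shift : ∫ θ in (0:ℝ)..(2*π), ‖h (circleMap c s θ)‖
      = ∫ θ in (-π)..π, ‖h (circleMap c s θ)‖ := by
    have h2 := per.intervalIntegral_add_eq 0 (-π)
    rw [zero_add, show -π + 2*π = π by ring] at h2
    exact h2
  have hle : 2*π*‖h c‖ ≤ ∫ θ in (-π)..π, ‖h (circleMap c s θ)‖ :=
    shift ▸ meanval_norm hs hd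
  have hIoc : ∫ θ in (-π)..π, ‖h (circleMap c s θ)‖
      = ∫ θ in Ioc (-π) π, ‖h (circleMap c s θ)‖ :=
    intervalIntegral.integral_of_le (by linarith [pi_pos])
  calc ENNReal.ofReal (2*π*‖h c‖)
      ≤ ENNReal.ofReal (∫ θ in Ioc (-π) π, ‖h (circleMap c s θ)‖) := by
        exact ENNReal.ofReal_le_ofReal (hIoc ▸ hle)
    _ = ∫⁻ θ in Ioc (-π) π, ENNReal.ofReal (‖h (circleMap c s θ)‖) := by
        refine ofReal_integral_eq_lintegral_ofReal ?_ ?_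
        · exact (hcont.norm.integrableOn_Ioc)
        · exact Filter.Eventually.of_forall fun θ => norm_nonneg _
    _ = ∫⁻ θ in Ioo (-π) π, ENNReal.ofReal (‖h (circleMap c s θ)‖) :=
        (setLIntegral_congr Ioo_ae_eq_Ioc).symm

def Kern (σ : ℝ) (f : ℂ → ℂ) (z w : ℂ) : ℝ :=
  ‖f z - f w‖ ^ 2 / ‖1 - (starRingEnd ℂ) z * w‖ ^ (4 + 2 * σ)
    * ((1 - ‖z‖ ^ 2) ^ σ * (1 - ‖w‖ ^ 2) ^ σ)

theorem rpow_min_le {σ r x : ℝ} (hr : 0 < r) (h1 : r ≤ x) (h2 : x ≤ 6*r) :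
    min 1 ((6:ℝ)^σ) * r^σ ≤ x^σ := by
  rcases le_or_gt 0 σ with hσ | hσ
  · calc min 1 ((6:ℝ)^σ) * r^σ
        ≤ 1 * r^σ := mul_le_mul_of_nonneg_right (min_le_left _ _) (Real.rpow_nonneg hr.le σ)
    _ = r^σ := one_mul _
    _ ≤ x^σ := Real.rpow_le_rpow hr.le h1 hσ
  · calc min 1 ((6:ℝ)^σ) * r^σ
        ≤ (6:ℝ)^σ * r^σ := mul_le_mul_of_nonneg_right (min_le_right _ _) (Real.rpow_nonneg hr.le σ)
    _ = (6*r)^σ := (Real.mul_rpow (by norm_num) hr.le).symm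
    _ ≤ x^σ := Real.rpow_le_rpow_of_nonpos (lt_of_lt_of_le hr h1) h2 hσ.le

theorem kern_lower (σ : ℝ) (hσ : -1 < σ) (f : ℂ → ℂ) {z w : ℂ}
    (hz : z ∈ Metric.ball (0:ℂ) 1) (hw : w ∈ Metric.ball z ((1 - ‖z‖)/2)) :
    ‖f w - f z‖^2 ≤ ((5:ℝ) ^ (4+2*σ) / (min 1 ((6:ℝ) ^ σ))^2) * ((1 - ‖z‖)/2)^4
      * Kern σ f z w := by
  set r := (1 - ‖z‖)/2 with hrdef
  have hz1 : ‖z‖ < 1 := by simpa [Metric.mem_ball] using hz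
  have hz0 : 0 ≤ ‖z‖ := norm_nonneg z
  have hr : 0 < r := by simp only [hrdef]; linarith
  have hr2 : 2*r = 1 - ‖z‖ := by simp only [hrdef]; ring
  have hwz : ‖w - z‖ < r := by simpa [Metric.mem_ball, dist_eq_norm] using hw
  have hwub : ‖w‖ < ‖z‖ + r := by
    have := norm_add_le (w - z) z
    simp only [sub_add_cancel] at this
    linarith
  have hwlb : ‖z‖ - r < ‖w‖ := by
    have h := norm_sub_norm_le z w
    rw [norm_sub_rev] at h
    linarith
  have hw1 : ‖w‖ < 1 := by linarith
  have hw0 : 0 ≤ ‖w‖ := norm_nonneg w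
  have hAw1 : r ≤ 1 - ‖w‖^2 := by nlinarith
  have hAw2 : 1 - ‖w‖^2 ≤ 6*r := by nlinarith
  have hAz1 : r ≤ 1 - ‖z‖^2 := by nlinarith
  have hAz2 : 1 - ‖z‖^2 ≤ 6*r := by nlinarith
  set D := ‖1 - (starRingEnd ℂ) z * w‖ with hDdef
  have hDub : D ≤ 5*r := by
    have h1 : (1 : ℂ) - (starRingEnd ℂ) z * w
        = (1 - (starRingEnd ℂ) z * z) + (starRingEnd ℂ) z * (z - w) := by ring
    have h2 : ‖(1:ℂ) - (starRingEnd ℂ) z * z‖ = 1 - ‖z‖^2 := by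
      rw [Complex.conj_mul']
      rw [show ((1:ℂ) - (‖z‖:ℂ)^2) = ((1 - ‖z‖^2 : ℝ) : ℂ) by push_cast; ring]
      rw [Complex.norm_real, Real.norm_of_nonneg (by nlinarith)]
    have h3 : ‖(starRingEnd ℂ) z * (z - w)‖ ≤ r := by
      rw [norm_mul, RCLike.norm_conj]
      rw [norm_sub_rev] at hwz
      nlinarith
    calc D ≤ ‖(1:ℂ) - (starRingEnd ℂ) z * z‖ + ‖(starRingEnd ℂ) z * (z - w)‖ := by
          rw [hDdef, h1]; exact norm_add_le _ _
    _ ≤ 5*r := by rw [h2]; nlinarith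
  have hDlb : r ≤ D := by
    have h1 : ‖(starRingEnd ℂ) z * w‖ ≤ ‖w‖ := by
      rw [norm_mul, RCLike.norm_conj]
      nlinarith
    have h2 := norm_sub_norm_le (1:ℂ) ((starRingEnd ℂ) z * w)
    rw [norm_one] at h2
    have h3 : 1 - ‖w‖ ≤ D := by rw [hDdef]; linarith
    linarith
  have hDpos : 0 < D := lt_of_lt_of_le hr hDlb
  have he : (0:ℝ) ≤ 4 + 2*σ := by linarith
  have hm : 0 < min 1 ((6:ℝ)^σ) := lt_min one_pos (Real.rpow_pos_of_pos (by norm_num) σ)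
  have hr4 : r^((4:ℝ)) = r^(4:ℕ) := by
    rw [← Real.rpow_natCast r 4]; norm_num
  have hDe : D^(4+2*σ) ≤ 5^(4+2*σ) * (r^(4:ℕ) * r^(2*σ)) := by
    calc D^(4+2*σ) ≤ (5*r)^(4+2*σ) := Real.rpow_le_rpow hDpos.le hDub he
    _ = 5^(4+2*σ) * r^(4+2*σ) := Real.mul_rpow (by norm_num) hr.le
    _ = 5^(4+2*σ) * (r^(4:ℕ) * r^(2*σ)) := by
        rw [show (4+2*σ) = (4:ℝ) + 2*σ by norm_num, Real.rpow_add hr, hr4]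
  have hWz : min 1 ((6:ℝ)^σ) * r^σ ≤ (1 - ‖z‖^2)^σ := rpow_min_le hr hAz1 hAz2
  have hWw : min 1 ((6:ℝ)^σ) * r^σ ≤ (1 - ‖w‖^2)^σ := rpow_min_le hr hAw1 hAw2
  have hrσ : 0 < r^σ := Real.rpow_pos_of_pos hr σ
  have hW : (min 1 ((6:ℝ)^σ))^2 * r^(2*σ) ≤ (1 - ‖z‖^2)^σ * (1 - ‖w‖^2)^σ := by
    have h2σ : r^(2*σ) = r^σ * r^σ := by
      rw [show 2*σ = σ + σ by ring, Real.rpow_add hr]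
    rw [h2σ]
    calc (min 1 ((6:ℝ)^σ))^2 * (r^σ * r^σ)
        = (min 1 ((6:ℝ)^σ) * r^σ) * (min 1 ((6:ℝ)^σ) * r^σ) := by ring
    _ ≤ (1 - ‖z‖^2)^σ * (1 - ‖w‖^2)^σ :=
        mul_le_mul hWz hWw (by positivity) (le_trans (by positivity) hWz)
  have hDepos : 0 < D^(4+2*σ) := Real.rpow_pos_of_pos hDpos _
  have h5e : 0 < (5:ℝ)^(4+2*σ) := Real.rpow_pos_of_pos (by norm_num) _
  have hfactor : D^(4+2*σ)
      ≤ ((5:ℝ)^(4+2*σ) / (min 1 ((6:ℝ)^σ))^2) * r^(4:ℕ)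
        * ((1 - ‖z‖^2)^σ * (1 - ‖w‖^2)^σ) := by
    calc D^(4+2*σ) ≤ 5^(4+2*σ) * (r^(4:ℕ) * r^(2*σ)) := hDe
    _ = ((5:ℝ)^(4+2*σ) / (min 1 ((6:ℝ)^σ))^2) * r^(4:ℕ)
        * ((min 1 ((6:ℝ)^σ))^2 * r^(2*σ)) := by
        field_simp
    _ ≤ _ := mul_le_mul_of_nonneg_left hW (by positivity)
  have hone : 1 ≤ ((5:ℝ)^(4+2*σ) / (min 1 ((6:ℝ)^σ))^2) * r^(4:ℕ)
      * ((1 - ‖z‖^2)^σ * (1 - ‖w‖^2)^σ) / D^(4+2*σ) :=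
    (one_le_div hDepos).mpr hfactor
  have hrw : ‖f z - f w‖^2 = ‖f w - f z‖^2 := by rw [norm_sub_rev]
  calc ‖f w - f z‖^2 = ‖f w - f z‖^2 * 1 := (mul_one _).symm
  _ ≤ ‖f w - f z‖^2 * (((5:ℝ)^(4+2*σ) / (min 1 ((6:ℝ)^σ))^2) * r^(4:ℕ)
      * ((1 - ‖z‖^2)^σ * (1 - ‖w‖^2)^σ) / D^(4+2*σ)) :=
      mul_le_mul_of_nonneg_left hone (by positivity)
  _ = ((5:ℝ) ^ (4+2*σ) / (min 1 ((6:ℝ) ^ σ))^2) * r^(4:ℕ) * Kern σ f z w := by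
      simp only [Kern, hrw, ← hDdef]
      field_simp
  _ = ((5:ℝ) ^ (4+2*σ) / (min 1 ((6:ℝ) ^ σ))^2) * ((1 - ‖z‖)/2)^4 * Kern σ f z w := by
      rw [← hrdef]

theorem core (σ : ℝ) (hσ : -1 < σ) {f : ℂ → ℂ}
    (hf : DifferentiableOn ℂ f (Metric.ball (0:ℂ) 1))
    {z : ℂ} (hz : z ∈ Metric.ball (0:ℂ) 1) :
    ENNReal.ofReal (‖deriv f z‖^2)
      ≤ ENNReal.ofReal (8 * ((5:ℝ) ^ (4+2*σ) / (min 1 ((6:ℝ) ^ σ))^2) / π) *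
        ∫⁻ w in Metric.ball (0:ℂ) 1, ENNReal.ofReal (Kern σ f z w) := by
  set r := (1 - ‖z‖)/2 with hrdef
  have hz1 : ‖z‖ < 1 := by simpa [Metric.mem_ball] using hz
  have hr : 0 < r := by simp only [hrdef]; linarith
  have hsub : Metric.closedBall z r ⊆ Metric.ball (0:ℂ) 1 := by
    intro x hx
    simp only [Metric.mem_closedBall, dist_eq_norm] at hx
    simp only [Metric.mem_ball, dist_eq_norm, sub_zero]
    calc ‖x‖ ≤ ‖x - z‖ + ‖z‖ := by
          simpa using norm_add_le (x - z) z
    _ < 1 := by simp only [hrdef] at hx; linarith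
  set g := dslope f z with hgdef
  have hg : DifferentiableOn ℂ g (Metric.ball (0:ℂ) 1) :=
    (Complex.differentiableOn_dslope (Metric.isOpen_ball.mem_nhds hz)).mpr hf
  have hgc : ContinuousOn g (Metric.ball (0:ℂ) 1) := hg.continuousOn
  have hh : DifferentiableOn ℂ (fun w => (g w)^2) (Metric.ball (0:ℂ) 1) := hg.pow 2
  -- step 1 : circle bound
  have step1 : ∀ s ∈ Ioo (r/2) r,
      ENNReal.ofReal (2*π*‖deriv f z‖^2)
        ≤ ∫⁻ θ in Ioo (-π) π, ENNReal.ofReal (‖g (circleMap z s θ)‖^2) := by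
    intro s hs
    have hs0 : 0 < s := lt_trans (by positivity) hs.1
    have hd : DiffContOnCl ℂ (fun w => (g w)^2) (Metric.ball z s) :=
      hh.diffContOnCl_ball ((Metric.closedBall_subset_closedBall hs.2.le).trans hsub)
    have := circle_bound hs0 hd
    simp only [norm_pow] at this
    rw [hgdef] at this
    rw [dslope_same] at this
    simpa [hgdef] using this
  -- the annulus
  set ann : Set ℂ := Metric.ball z r \ Metric.closedBall z (r/2) with hanndef
  have meas_ann : MeasurableSet ann :=
    measurableSet_ball.diff measurableSet_closedBall
  have hann_sub : ann ⊆ Metric.ball (0:ℂ) 1 :=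
    (diff_subset.trans Metric.ball_subset_closedBall).trans hsub
  set A := (5:ℝ) ^ (4+2*σ) / (min 1 ((6:ℝ) ^ σ))^2 with hAdef
  have hApos : 0 < A := by
    have hm : 0 < min 1 ((6:ℝ)^σ) := lt_min one_pos (Real.rpow_pos_of_pos (by norm_num) σ)
    have : 0 < (5:ℝ)^(4+2*σ) := Real.rpow_pos_of_pos (by norm_num) _
    positivity
  -- step 2 : annulus lower bound via polar coordinates
  have step2 : ENNReal.ofReal (r/2) * ENNReal.ofReal (2*π*‖deriv f z‖^2)
        * ENNReal.ofReal (r/2)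
      ≤ ∫⁻ w in ann, ENNReal.ofReal (‖g w‖^2) := by
    set Find : ℂ → ENNReal := fun w => ann.indicator (fun w => ENNReal.ofReal (‖g w‖^2)) w
      with hFdef
    have htrans : ∫⁻ w in ann, ENNReal.ofReal (‖g w‖^2) = ∫⁻ v, Find (z + v) := by
      rw [← lintegral_indicator meas_ann]
      exact (lintegral_add_left_eq_self Find z).symm
    have hpolar : ∫⁻ v, Find (z + v)
        = ∫⁻ p in polarCoord.target,
            ENNReal.ofReal p.1 * Find (z + Complex.polarCoord.symm p) :=
      (Complex.lintegral_comp_polarCoord_symm' (fun v => Find (z + v))).symm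
    set S : Set (ℝ × ℝ) := Ioo (r/2) r ×ˢ Ioo (-π) π with hSdef
    have hS_sub : S ⊆ polarCoord.target := by
      rw [polarCoord_target]
      rintro ⟨s, θ⟩ ⟨h1, h2⟩
      exact ⟨lt_trans (by positivity) h1.1, h2⟩
    have hmapeq : ∀ p : ℝ × ℝ, z + Complex.polarCoord.symm p = circleMap z p.1 p.2 := by
      intro p
      simp only [Complex.polarCoord_symm_apply, circleMap, Complex.exp_mul_I,
        Complex.ofReal_cos, Complex.ofReal_sin]
    have hcongr : ∀ p ∈ S, ENNReal.ofReal p.1 * Find (z + Complex.polarCoord.symm p)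
        = ENNReal.ofReal (p.1 * ‖g (circleMap z p.1 p.2)‖^2) := by
      rintro ⟨s, θ⟩ ⟨h1, h2⟩
      have hs0 : 0 < s := lt_trans (by positivity) h1.1
      have hdist : dist (circleMap z s θ) z = s := by
        have h := circleMap_mem_sphere z hs0.le θ
        rwa [mem_sphere_iff_norm, ← dist_eq_norm] at h
      have hmem : z + Complex.polarCoord.symm (s, θ) ∈ ann := by
        rw [hmapeq]
        simp only [hanndef, mem_diff, Metric.mem_ball, Metric.mem_closedBall, not_le, hdist]
        exact ⟨h1.2, h1.1⟩
      rw [hFdef]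
      simp only [indicator_of_mem hmem]
      rw [hmapeq]
      exact (ENNReal.ofReal_mul hs0.le).symm
    have hconst : ∫⁻ _s in Ioo (r/2) r,
        (ENNReal.ofReal (r/2) * ENNReal.ofReal (2*π*‖deriv f z‖^2))
        = ENNReal.ofReal (r/2) * ENNReal.ofReal (2*π*‖deriv f z‖^2) * ENNReal.ofReal (r/2) := by
      rw [setLIntegral_const, Real.volume_Ioo]
      congr 2
      ring
    have hinner : ∀ s ∈ Ioo (r/2) r,
        ENNReal.ofReal (r/2) * ENNReal.ofReal (2*π*‖deriv f z‖^2)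
          ≤ ∫⁻ θ in Ioo (-π) π, ENNReal.ofReal (s * ‖g (circleMap z s θ)‖^2) := by
      intro s hs
      have hs0 : 0 < s := lt_trans (by positivity) hs.1
      have heq : ∫⁻ θ in Ioo (-π) π, ENNReal.ofReal (s * ‖g (circleMap z s θ)‖^2)
          = ENNReal.ofReal s * ∫⁻ θ in Ioo (-π) π, ENNReal.ofReal (‖g (circleMap z s θ)‖^2) := by
        rw [← lintegral_const_mul' _ _ ENNReal.ofReal_ne_top]
        apply lintegral_congr
        intro θ
        rw [ENNReal.ofReal_mul hs0.le]
      rw [heq]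
      exact mul_le_mul' (ENNReal.ofReal_le_ofReal hs.1.le) (step1 s hs)
    have hmapc : Continuous (fun p : ℝ × ℝ => circleMap z p.1 p.2) := by
      simp only [circleMap]
      fun_prop
    have hmapsTo : MapsTo (fun p : ℝ × ℝ => circleMap z p.1 p.2) S (Metric.ball (0:ℂ) 1) := by
      rintro ⟨s, θ⟩ ⟨h1, h2⟩
      have hs0 : 0 < s := lt_trans (by positivity) h1.1
      have hdist : dist (circleMap z s θ) z = s := by
        have h := circleMap_mem_sphere z hs0.le θ
        rwa [mem_sphere_iff_norm, ← dist_eq_norm] at h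
      apply hsub
      apply Metric.ball_subset_closedBall
      rw [Metric.mem_ball, hdist]
      exact h1.2
    have hGcont : ContinuousOn (fun p : ℝ × ℝ => p.1 * ‖g (circleMap z p.1 p.2)‖^2) S :=
      (continuous_fst.continuousOn).mul
        (((hgc.comp hmapc.continuousOn hmapsTo).norm).pow 2)
    have hmeasG : AEMeasurable (fun p : ℝ × ℝ => ENNReal.ofReal (p.1 * ‖g (circleMap z p.1 p.2)‖^2))
        ((volume.restrict (Ioo (r/2) r)).prod (volume.restrict (Ioo (-π) π))) := by
      rw [Measure.prod_restrict]
      exact (hGcont.aemeasurable (measurableSet_Ioo.prod measurableSet_Ioo)).ennreal_ofReal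
    have htonelli : ∫⁻ p in S, ENNReal.ofReal (p.1 * ‖g (circleMap z p.1 p.2)‖^2)
        = ∫⁻ s in Ioo (r/2) r, ∫⁻ θ in Ioo (-π) π,
            ENNReal.ofReal (s * ‖g (circleMap z s θ)‖^2) := by
      rw [hSdef, Measure.volume_eq_prod, ← Measure.prod_restrict]
      exact lintegral_prod _ hmeasG
    calc ENNReal.ofReal (r/2) * ENNReal.ofReal (2*π*‖deriv f z‖^2) * ENNReal.ofReal (r/2)
        = ∫⁻ _s in Ioo (r/2) r,
            (ENNReal.ofReal (r/2) * ENNReal.ofReal (2*π*‖deriv f z‖^2)) := hconst.symm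
    _ ≤ ∫⁻ s in Ioo (r/2) r, ∫⁻ θ in Ioo (-π) π,
          ENNReal.ofReal (s * ‖g (circleMap z s θ)‖^2) :=
        lintegral_mono_ae ((ae_restrict_iff' measurableSet_Ioo).mpr (ae_of_all _ hinner))
    _ = ∫⁻ p in S, ENNReal.ofReal (p.1 * ‖g (circleMap z p.1 p.2)‖^2) := htonelli.symm
    _ = ∫⁻ p in S, ENNReal.ofReal p.1 * Find (z + Complex.polarCoord.symm p) :=
        setLIntegral_congr_fun (measurableSet_Ioo.prod measurableSet_Ioo)
          (fun p hp => (hcongr p hp).symm)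
    _ ≤ ∫⁻ p in polarCoord.target,
          ENNReal.ofReal p.1 * Find (z + Complex.polarCoord.symm p) :=
        lintegral_mono_set hS_sub
    _ = ∫⁻ v, Find (z + v) := hpolar.symm
    _ = ∫⁻ w in ann, ENNReal.ofReal (‖g w‖^2) := htrans.symm
  -- step 3 : kernel comparison on the annulus
  set I := ∫⁻ w in Metric.ball (0:ℂ) 1, ENNReal.ofReal (Kern σ f z w) with hIdef
  have step3 : ∫⁻ w in ann, ENNReal.ofReal (‖g w‖^2) ≤ ENNReal.ofReal (4*A*r^2) * I := by
    have hpt : ∀ w ∈ ann,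
        ENNReal.ofReal (‖g w‖^2) ≤ ENNReal.ofReal (4*A*r^2 * Kern σ f z w) := by
      intro w hw
      rcases hw with ⟨hw1, hw2⟩
      have hwz1 : ‖w - z‖ < r := by simpa [Metric.mem_ball, dist_eq_norm] using hw1
      have hwz2 : r/2 < ‖w - z‖ := by
        simp only [Metric.mem_closedBall, dist_eq_norm, not_le] at hw2
        exact hw2
      have ht : 0 < ‖w - z‖ := lt_trans (by positivity) hwz2
      have hne : w ≠ z := by
        intro h
        rw [h, sub_self, norm_zero] at hwz2
        linarith
      have hw1' : w ∈ Metric.ball z ((1 - ‖z‖)/2) := by rw [← hrdef]; exact hw1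
      have hk := kern_lower σ hσ f hz hw1'
      rw [← hAdef, ← hrdef] at hk
      have hK0 : 0 ≤ Kern σ f z w := by
        have hA4 : 0 < A * r^4 := by positivity
        nlinarith [sq_nonneg ‖f w - f z‖]
      have hgw : ‖g w‖ = ‖w - z‖⁻¹ * ‖f w - f z‖ := by
        rw [hgdef, dslope_of_ne f hne, slope_def_module, norm_smul, norm_inv]
      apply ENNReal.ofReal_le_ofReal
      have h1 : ‖g w‖^2 = ‖f w - f z‖^2 / ‖w - z‖^2 := by
        rw [hgw]
        field_simp
      have h2 : ‖f w - f z‖^2 / ‖w - z‖^2 ≤ ‖f w - f z‖^2 / (r/2)^2 := by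
        apply div_le_div_of_nonneg_left (by positivity) (by positivity)
        nlinarith
      have h3 : ‖f w - f z‖^2 / (r/2)^2 ≤ (A * r^4 * Kern σ f z w) / (r/2)^2 := by
        exact (div_le_div_iff_of_pos_right (by positivity)).mpr hk
      have h4 : (A * r^4 * Kern σ f z w) / (r/2)^2 = 4*A*r^2 * Kern σ f z w := by
        field_simp
        ring
      rw [h1]
      rw [h4] at h3
      exact le_trans h2 h3
    calc ∫⁻ w in ann, ENNReal.ofReal (‖g w‖^2)
        ≤ ∫⁻ w in ann, ENNReal.ofReal (4*A*r^2 * Kern σ f z w) :=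
        lintegral_mono_ae ((ae_restrict_iff' meas_ann).mpr (ae_of_all _ hpt))
    _ = ENNReal.ofReal (4*A*r^2) * ∫⁻ w in ann, ENNReal.ofReal (Kern σ f z w) := by
        rw [← lintegral_const_mul' _ _ ENNReal.ofReal_ne_top]
        apply lintegral_congr
        intro w
        rw [← ENNReal.ofReal_mul (by positivity)]
    _ ≤ ENNReal.ofReal (4*A*r^2) * I := by
        rw [hIdef]
        exact mul_le_mul_right (lintegral_mono_set hann_sub) _
  -- assemble
  have combined : ENNReal.ofReal (π * r^2/2 * ‖deriv f z‖^2) ≤ ENNReal.ofReal (4*A*r^2) * I := by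
    calc ENNReal.ofReal (π * r^2/2 * ‖deriv f z‖^2)
        = ENNReal.ofReal (r/2) * ENNReal.ofReal (2*π*‖deriv f z‖^2) * ENNReal.ofReal (r/2) := by
          rw [← ENNReal.ofReal_mul (by positivity), ← ENNReal.ofReal_mul (by positivity)]
          congr 1
          ring
    _ ≤ ∫⁻ w in ann, ENNReal.ofReal (‖g w‖^2) := step2
    _ ≤ ENNReal.ofReal (4*A*r^2) * I := step3
  have h0 : ENNReal.ofReal (π * r^2/2) ≠ 0 := (ENNReal.ofReal_pos.mpr (by positivity)).ne'
  refine (ENNReal.mul_le_mul_iff_right h0 ENNReal.ofReal_ne_top).mp ?_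
  calc ENNReal.ofReal (π * r^2/2) * ENNReal.ofReal (‖deriv f z‖^2)
      = ENNReal.ofReal (π * r^2/2 * ‖deriv f z‖^2) := (ENNReal.ofReal_mul (by positivity)).symm
  _ ≤ ENNReal.ofReal (4*A*r^2) * I := combined
  _ = ENNReal.ofReal (π * r^2/2) * (ENNReal.ofReal (8 * A / π) * I) := by
      rw [← mul_assoc, ← ENNReal.ofReal_mul (by positivity)]
      congr 2
      field_simp
      ring

theorem stmt5 (σ : ℝ) (hσ : -1 < σ) :
    ∃ C : ℝ, 0 < C ∧
      ∀ μ : Measure ℂ, IsFiniteMeasure μ → μ ((Metric.sphere (0:ℂ) 1)ᶜ) = 0 →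
      ∀ f : ℂ → ℂ, DifferentiableOn ℂ f (Metric.ball (0:ℂ) 1) →
        (∫⁻ z in Metric.ball (0:ℂ) 1,
            ENNReal.ofReal (‖deriv f z‖ ^ 2 * poissonInt μ z))
          ≤ ENNReal.ofReal C *
            ∫⁻ w in Metric.ball (0:ℂ) 1, ∫⁻ z in Metric.ball (0:ℂ) 1,
              ENNReal.ofReal (‖f z - f w‖ ^ 2 / ‖1 - (starRingEnd ℂ) z * w‖ ^ (4 + 2 * σ)
                * (poissonInt μ z * ((1 - ‖z‖ ^ 2) ^ σ * (1 - ‖w‖ ^ 2) ^ σ))) := by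
  refine ⟨8 * ((5:ℝ) ^ (4+2*σ) / (min 1 ((6:ℝ) ^ σ))^2) / π, ?_, ?_⟩
  · have hm : 0 < min 1 ((6:ℝ)^σ) := lt_min one_pos (Real.rpow_pos_of_pos (by norm_num) σ)
    have h5 : 0 < (5:ℝ)^(4+2*σ) := Real.rpow_pos_of_pos (by norm_num) _
    have := pi_pos
    positivity
  intro μ hμfin hμs f hf
  haveI := hμfin
  set B : Set ℂ := Metric.ball (0:ℂ) 1 with hBdef
  set C : ℝ := 8 * ((5:ℝ) ^ (4+2*σ) / (min 1 ((6:ℝ) ^ σ))^2) / π with hCdef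
  set SI : ℂ → ℂ → ℝ := fun z w =>
    ‖f z - f w‖ ^ 2 / ‖1 - (starRingEnd ℂ) z * w‖ ^ (4 + 2 * σ)
      * (poissonInt μ z * ((1 - ‖z‖ ^ 2) ^ σ * (1 - ‖w‖ ^ 2) ^ σ)) with hSIdef
  have hP0 : ∀ z ∈ B, 0 ≤ poissonInt μ z := by
    intro z hz
    have hz1 : ‖z‖ < 1 := by simpa [hBdef, Metric.mem_ball] using hz
    unfold poissonInt
    refine mul_nonneg (by positivity) (integral_nonneg fun ζ => ?_)
    apply div_nonneg (by nlinarith [norm_nonneg z]) (by positivity)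
  have hPm : Measurable (poissonInt μ) := by
    have hm1 : Measurable (fun q : ℂ × ℂ => (1 - ‖q.1‖^2) / ‖q.2 - q.1‖^2) :=
      (measurable_const.sub ((measurable_fst.norm).pow_const 2)).div
        (((measurable_snd.sub measurable_fst).norm).pow_const 2)
    have hm2 : StronglyMeasurable (fun z => ∫ ζ, (1 - ‖z‖^2) / ‖ζ - z‖^2 ∂μ) :=
      hm1.stronglyMeasurable.integral_prod_right'
    unfold poissonInt
    exact measurable_const.mul hm2.measurable
  -- measurability of the double integrand
  have hBB : MeasurableSet (B ×ˢ B) := (measurableSet_ball.prod measurableSet_ball)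
  have hfc : ContinuousOn f B := hf.continuousOn
  have hf1 : ContinuousOn (fun p : ℂ × ℂ => f p.1) (B ×ˢ B) :=
    hfc.comp continuous_fst.continuousOn (fun p hp => hp.1)
  have hf2 : ContinuousOn (fun p : ℂ × ℂ => f p.2) (B ×ˢ B) :=
    hfc.comp continuous_snd.continuousOn (fun p hp => hp.2)
  have hnum : ContinuousOn (fun p : ℂ × ℂ => ‖f p.1 - f p.2‖^2) (B ×ˢ B) :=
    ((hf1.sub hf2).norm).pow 2
  have hbase : Continuous (fun p : ℂ × ℂ => ‖1 - (starRingEnd ℂ) p.1 * p.2‖) :=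
    (continuous_const.sub ((continuous_star.comp continuous_fst).mul continuous_snd)).norm
  have hbasepos : ∀ p : ℂ × ℂ, p ∈ B ×ˢ B → 0 < ‖1 - (starRingEnd ℂ) p.1 * p.2‖ := by
    rintro ⟨z, w⟩ ⟨hz, hw⟩
    have hz1 : ‖z‖ < 1 := by simpa [hBdef, Metric.mem_ball] using hz
    have hw1 : ‖w‖ < 1 := by simpa [hBdef, Metric.mem_ball] using hw
    rw [norm_pos_iff]
    intro hcontra
    have h1 : (starRingEnd ℂ) z * w = 1 := by
      have := sub_eq_zero.mp hcontra
      exact this.symm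
    have h2 : ‖(starRingEnd ℂ) z * w‖ = 1 := by rw [h1, norm_one]
    rw [norm_mul, RCLike.norm_conj] at h2
    nlinarith [norm_nonneg z, norm_nonneg w]
  have hden : ContinuousOn (fun p : ℂ × ℂ => ‖1 - (starRingEnd ℂ) p.1 * p.2‖ ^ (4 + 2*σ))
      (B ×ˢ B) :=
    (hbase.rpow_const fun p => Or.inr (by linarith)).continuousOn
  have hdiv : ContinuousOn
      (fun p : ℂ × ℂ => ‖f p.1 - f p.2‖^2 / ‖1 - (starRingEnd ℂ) p.1 * p.2‖ ^ (4 + 2*σ))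
      (B ×ˢ B) :=
    hnum.div hden (fun p hp => (Real.rpow_pos_of_pos (hbasepos p hp) _).ne')
  have hwz : ContinuousOn (fun p : ℂ × ℂ => (1 - ‖p.1‖^2) ^ σ) (B ×ˢ B) := by
    refine ContinuousOn.rpow_const ((continuous_const.sub ((continuous_fst.norm).pow 2)).continuousOn)
      fun p hp => Or.inl ?_
    have hz1 : ‖p.1‖ < 1 := by
      have := hp.1
      simpa [hBdef, Metric.mem_ball] using this
    have : 0 < 1 - ‖p.1‖^2 := by nlinarith [norm_nonneg p.1]
    exact this.ne'
  have hww : ContinuousOn (fun p : ℂ × ℂ => (1 - ‖p.2‖^2) ^ σ) (B ×ˢ B) := by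
    refine ContinuousOn.rpow_const ((continuous_const.sub ((continuous_snd.norm).pow 2)).continuousOn)
      fun p hp => Or.inl ?_
    have hz1 : ‖p.2‖ < 1 := by
      have := hp.2
      simpa [hBdef, Metric.mem_ball] using this
    have : 0 < 1 - ‖p.2‖^2 := by nlinarith [norm_nonneg p.2]
    exact this.ne'
  have hSIcont : ContinuousOn
      (fun p : ℂ × ℂ => ‖f p.1 - f p.2‖^2 / ‖1 - (starRingEnd ℂ) p.1 * p.2‖ ^ (4 + 2*σ)
        * ((1 - ‖p.1‖^2) ^ σ * (1 - ‖p.2‖^2) ^ σ)) (B ×ˢ B) :=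
    hdiv.mul (hwz.mul hww)
  have hswap : AEMeasurable (Function.uncurry fun z w => ENNReal.ofReal (SI z w))
      ((volume.restrict B).prod (volume.restrict B)) := by
    rw [Measure.prod_restrict]
    simp only [Function.uncurry, hSIdef]
    have hmul : AEMeasurable
        (fun p : ℂ × ℂ => ‖f p.1 - f p.2‖^2 / ‖1 - (starRingEnd ℂ) p.1 * p.2‖ ^ (4 + 2*σ)
          * (poissonInt μ p.1 * ((1 - ‖p.1‖^2) ^ σ * (1 - ‖p.2‖^2) ^ σ)))
        ((volume.prod volume).restrict (B ×ˢ B)) := by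
      have h1 := hdiv.aemeasurable (μ := volume.prod volume) hBB
      have h2 := (hwz.mul hww).aemeasurable (μ := volume.prod volume) hBB
      have h3 : AEMeasurable (fun p : ℂ × ℂ => poissonInt μ p.1)
          ((volume.prod volume).restrict (B ×ˢ B)) :=
        (hPm.comp measurable_fst).aemeasurable
      exact h1.mul (h3.mul h2)
    exact hmul.ennreal_ofReal
  -- pointwise bound in z
  have stepA : ∀ z ∈ B,
      ENNReal.ofReal (‖deriv f z‖ ^ 2 * poissonInt μ z)
        ≤ ENNReal.ofReal C * ∫⁻ w in B, ENNReal.ofReal (SI z w) := by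
    intro z hz
    have hc := core σ hσ hf hz
    rw [← hCdef, ← hBdef] at hc
    calc ENNReal.ofReal (‖deriv f z‖ ^ 2 * poissonInt μ z)
        = ENNReal.ofReal (poissonInt μ z) * ENNReal.ofReal (‖deriv f z‖^2) := by
          rw [← ENNReal.ofReal_mul (hP0 z hz)]
          congr 1
          ring
    _ ≤ ENNReal.ofReal (poissonInt μ z)
          * (ENNReal.ofReal C * ∫⁻ w in B, ENNReal.ofReal (Kern σ f z w)) := by
        exact mul_le_mul_right hc _
    _ = ENNReal.ofReal C * ∫⁻ w in B, ENNReal.ofReal (poissonInt μ z)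
          * ENNReal.ofReal (Kern σ f z w) := by
        rw [lintegral_const_mul' _ _ ENNReal.ofReal_ne_top]
        ring
    _ = ENNReal.ofReal C * ∫⁻ w in B, ENNReal.ofReal (SI z w) := by
        congr 1
        refine setLIntegral_congr_fun measurableSet_ball (fun w hw => ?_)
        rw [← ENNReal.ofReal_mul (hP0 z hz)]
        congr 1
        simp only [hSIdef, Kern]
        ring
  calc ∫⁻ z in B, ENNReal.ofReal (‖deriv f z‖ ^ 2 * poissonInt μ z)
      ≤ ∫⁻ z in B, ENNReal.ofReal C * ∫⁻ w in B, ENNReal.ofReal (SI z w) :=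
      lintegral_mono_ae ((ae_restrict_iff' measurableSet_ball).mpr (ae_of_all _ stepA))
  _ = ENNReal.ofReal C * ∫⁻ z in B, ∫⁻ w in B, ENNReal.ofReal (SI z w) :=
      lintegral_const_mul' _ _ ENNReal.ofReal_ne_top
  _ = ENNReal.ofReal C * ∫⁻ w in B, ∫⁻ z in B, ENNReal.ofReal (SI z w) := by
      rw [lintegral_lintegral_swap hswap]
end
end

section
/- Let μ be a finite positive Borel measure on the unit circle ∂𝔻 and let n be a nonnegative integer. There exists a constant C > 0, depending only on n (independent of μ), such that for every analytic function f on 𝔻, ∫_𝔻 |f^{(n+1)}(z)|² (1−|z|²)^{2n} P_μ(z) dA(z) ≤ C ∫_𝔻 |f'(z)|² P_μ(z) dA(z). -/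
open MeasureTheory

noncomputable section

namespace Stmt11Aux

open Metric Set intervalIntegral
open scoped Real ENNReal


lemma poissonInt_nonneg (μ : Measure ℂ) {z : ℂ} (hz : ‖z‖ ≤ 1) : 0 ≤ poissonInt μ z := by
  apply mul_nonneg (by positivity)
  apply MeasureTheory.integral_nonneg
  intro ζ
  have : ‖z‖ ^ 2 ≤ 1 := by nlinarith [norm_nonneg z]
  exact div_nonneg (by linarith) (by positivity)

lemma ae_sphere {μ : Measure ℂ} (hsp : μ ((Metric.sphere (0:ℂ) 1)ᶜ) = 0) :
    ∀ᵐ ζ ∂μ, ‖ζ‖ = 1 := by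
  rw [ae_iff]
  have h : {ζ : ℂ | ¬ ‖ζ‖ = 1} = (Metric.sphere (0:ℂ) 1)ᶜ := by
    ext ζ
    simp [mem_sphere_iff_norm]
  rw [h]
  exact hsp

lemma kernel_meas (z : ℂ) : Measurable (fun ζ : ℂ => (1 - ‖z‖ ^ 2) / ‖ζ - z‖ ^ 2) := by
  apply Measurable.div measurable_const
  exact (((continuous_id.sub continuous_const).norm.pow 2)).measurable

lemma kernel_integrable {μ : Measure ℂ} [IsFiniteMeasure μ]
    (hsp : μ ((Metric.sphere (0:ℂ) 1)ᶜ) = 0) {z : ℂ} (hz : ‖z‖ < 1) :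
    Integrable (fun ζ : ℂ => (1 - ‖z‖ ^ 2) / ‖ζ - z‖ ^ 2) μ := by
  refine Integrable.mono' (integrable_const ((1 - ‖z‖ ^ 2) / (1 - ‖z‖) ^ 2))
    (kernel_meas z).aestronglyMeasurable ?_
  filter_upwards [ae_sphere hsp] with ζ hζ
  have h1 : 1 - ‖z‖ ≤ ‖ζ - z‖ := by
    have := norm_sub_norm_le ζ z
    linarith
  have h0 : 0 < 1 - ‖z‖ := by linarith
  have h2 : (1 - ‖z‖) ^ 2 ≤ ‖ζ - z‖ ^ 2 := by nlinarith
  have hnum : 0 ≤ 1 - ‖z‖ ^ 2 := by nlinarith [norm_nonneg z]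
  rw [Real.norm_of_nonneg (by positivity)]
  exact div_le_div_of_nonneg_left hnum (by positivity) h2

lemma poissonInt_le_bound {μ : Measure ℂ} [IsFiniteMeasure μ]
    (hsp : μ ((Metric.sphere (0:ℂ) 1)ᶜ) = 0) {z : ℂ} (hz : ‖z‖ < 1) :
    poissonInt μ z ≤ (μ Set.univ).toReal * (2 * (1 - ‖z‖)⁻¹) := by
  have h0 : 0 < 1 - ‖z‖ := by linarith
  have hb : ∫ ζ, (1 - ‖z‖ ^ 2) / ‖ζ - z‖ ^ 2 ∂μ
      ≤ ∫ _ζ, 2 * (1 - ‖z‖)⁻¹ ∂μ := by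
    refine integral_mono_ae (kernel_integrable hsp hz) (integrable_const _) ?_
    filter_upwards [ae_sphere hsp] with ζ hζ
    have h1 : 1 - ‖z‖ ≤ ‖ζ - z‖ := by
      have := norm_sub_norm_le ζ z
      linarith
    have h2 : (1 - ‖z‖) ^ 2 ≤ ‖ζ - z‖ ^ 2 := by nlinarith
    have hnum : 0 ≤ 1 - ‖z‖ ^ 2 := by nlinarith [norm_nonneg z]
    calc (1 - ‖z‖ ^ 2) / ‖ζ - z‖ ^ 2 ≤ (1 - ‖z‖ ^ 2) / (1 - ‖z‖) ^ 2 :=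
          div_le_div_of_nonneg_left hnum (by positivity) h2
      _ ≤ 2 * (1 - ‖z‖)⁻¹ := by
          rw [div_le_iff₀ (by positivity)]
          have : (1 - ‖z‖^2) = (1 - ‖z‖) * (1 + ‖z‖) := by ring
          rw [this]
          have hzn : 1 + ‖z‖ ≤ 2 := by linarith
          have hinv : (1 - ‖z‖)⁻¹ * (1 - ‖z‖) = 1 := inv_mul_cancel₀ h0.ne'
          have heq : 2 * (1 - ‖z‖)⁻¹ * (1 - ‖z‖) ^ 2 = 2 * (1 - ‖z‖) := by
            rw [sq]
            calc 2 * (1 - ‖z‖)⁻¹ * ((1 - ‖z‖) * (1 - ‖z‖))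
                = 2 * (((1 - ‖z‖)⁻¹ * (1 - ‖z‖)) * (1 - ‖z‖)) := by ring
              _ = 2 * (1 - ‖z‖) := by rw [hinv]; ring
          rw [heq]
          nlinarith [norm_nonneg z]
  rw [MeasureTheory.integral_const] at hb
  simp only [smul_eq_mul] at hb
  calc poissonInt μ z ≤ 1 * ((μ Set.univ).toReal * (2 * (1 - ‖z‖)⁻¹)) := by
        unfold poissonInt
        apply mul_le_mul
        · rw [inv_le_one_iff₀]; right; nlinarith [Real.pi_gt_three]
        · exact hb
        · apply MeasureTheory.integral_nonneg; intro ζ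
          have : ‖z‖ ^ 2 ≤ 1 := by nlinarith [norm_nonneg z]
          exact div_nonneg (by linarith) (by positivity)
        · norm_num
    _ = (μ Set.univ).toReal * (2 * (1 - ‖z‖)⁻¹) := one_mul _

lemma ball_subset_unit {z : ℂ} (hz : ‖z‖ < 1) {w : ℂ}
    (hw : dist w z < (1 - ‖z‖) / 2) : ‖w‖ < 1 ∧ (1 - ‖z‖) / 2 ≤ 1 - ‖w‖ := by
  have h1 : ‖w‖ ≤ ‖z‖ + dist w z := by
    have := norm_sub_norm_le w z
    rw [dist_eq_norm] at hw ⊢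
    linarith
  constructor <;> [skip; skip] <;> rw [dist_eq_norm] at hw h1 <;> linarith

lemma poissonInt_compare {μ : Measure ℂ} [IsFiniteMeasure μ]
    (hsp : μ ((Metric.sphere (0:ℂ) 1)ᶜ) = 0) {z w : ℂ} (hz : ‖z‖ < 1)
    (hw : dist w z < (1 - ‖z‖) / 2) :
    poissonInt μ z ≤ 9 * poissonInt μ w := by
  obtain ⟨hw1, hw2⟩ := ball_subset_unit hz hw
  have h0 : 0 < 1 - ‖z‖ := by linarith
  have key : ∫ ζ, (1 - ‖z‖ ^ 2) / ‖ζ - z‖ ^ 2 ∂μ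
      ≤ ∫ ζ, 9 * ((1 - ‖w‖ ^ 2) / ‖ζ - w‖ ^ 2) ∂μ := by
    refine integral_mono_ae (kernel_integrable hsp hz)
      ((kernel_integrable hsp hw1).const_mul 9) ?_
    filter_upwards [ae_sphere hsp] with ζ hζ
    set a := ‖ζ - z‖ with ha
    set b := ‖ζ - w‖ with hb
    have haz : 1 - ‖z‖ ≤ a := by
      have := norm_sub_norm_le ζ z; rw [← ha] at *; linarith
    have hbw : 1 - ‖w‖ ≤ b := by
      have := norm_sub_norm_le ζ w; linarith
    have ha0 : 0 < a := by linarith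
    have hb0 : 0 < b := by linarith
    have hba : b ≤ a + (1 - ‖z‖) / 2 := by
      have : b ≤ a + dist w z := by
        calc b ≤ ‖ζ - z‖ + ‖z - w‖ := by
              simpa using norm_sub_le_norm_sub_add_norm_sub ζ z w
          _ = a + dist w z := by rw [dist_comm, dist_eq_norm]
      linarith
    have hba2 : b ≤ (3 / 2) * a := by linarith
    have huv : 1 - ‖z‖ ^ 2 ≤ 4 * (1 - ‖w‖ ^ 2) := by
      have hw0 : 0 ≤ ‖w‖ := norm_nonneg w
      have hz0 : 0 ≤ ‖z‖ := norm_nonneg z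
      rw [dist_eq_norm] at hw
      have : ‖w‖ ≤ ‖z‖ + ‖w - z‖ := by
        have := norm_sub_norm_le w z; linarith
      nlinarith
    have hv0 : 0 ≤ 1 - ‖w‖ ^ 2 := by nlinarith [norm_nonneg w]
    have hu0 : 0 ≤ 1 - ‖z‖ ^ 2 := by nlinarith [norm_nonneg z]
    rw [div_le_iff₀ (by positivity), mul_comm 9 _, mul_assoc, div_mul_eq_mul_div,
      le_div_iff₀ (by positivity)]
    nlinarith [sq_nonneg a, sq_nonneg b, mul_le_mul huv (sq_le_sq' (by linarith) hba2)
      (sq_nonneg b) (by linarith)]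
  unfold poissonInt
  rw [MeasureTheory.integral_const_mul] at key
  have hc : (0:ℝ) ≤ (2 * Real.pi)⁻¹ := by positivity
  calc (2 * Real.pi)⁻¹ * ∫ ζ, (1 - ‖z‖ ^ 2) / ‖ζ - z‖ ^ 2 ∂μ
      ≤ (2 * Real.pi)⁻¹ * (9 * ∫ ζ, (1 - ‖w‖ ^ 2) / ‖ζ - w‖ ^ 2 ∂μ) :=
        mul_le_mul_of_nonneg_left key hc
    _ = 9 * ((2 * Real.pi)⁻¹ * ∫ ζ, (1 - ‖w‖ ^ 2) / ‖ζ - w‖ ^ 2 ∂μ) := by ring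

lemma poissonInt_measurable (μ : Measure ℂ) [IsFiniteMeasure μ] :
    Measurable (poissonInt μ) := by
  apply Measurable.const_mul
  have : Measurable (fun p : ℂ × ℂ => (1 - ‖p.1‖ ^ 2) / ‖p.2 - p.1‖ ^ 2) := by
    apply Measurable.div
    · exact (measurable_const.sub ((measurable_fst.norm).pow measurable_const))
    · exact ((measurable_snd.sub measurable_fst).norm.pow measurable_const)
  exact (this.stronglyMeasurable.integral_prod_right').measurable



lemma closedBall_sub_unit {z : ℂ} (hz : ‖z‖ < 1) {r : ℝ}
    (hrR : r ≤ (1 - ‖z‖) / 2) : closedBall z r ⊆ ball (0:ℂ) 1 := by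
  intro w hw
  rw [mem_closedBall, dist_eq_norm] at hw
  have : ‖w‖ ≤ ‖z‖ + ‖w - z‖ := by
    have := norm_sub_norm_le w z; linarith
  rw [mem_ball, dist_eq_norm, sub_zero]
  linarith

lemma cauchy_circle_bound {h : ℂ → ℂ} (hd : DifferentiableOn ℂ h (ball (0:ℂ) 1))
    {z : ℂ} (hz : ‖z‖ < 1) {r : ℝ} (hr : 0 < r) (hrR : r ≤ (1 - ‖z‖) / 2) :
    2 * π * r ^ 2 * ‖deriv h z‖ ≤ r * ∫ θ in (0:ℝ)..2 * π, ‖h (circleMap z r θ)‖ := by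
  have hsub : closedBall z r ⊆ ball (0:ℂ) 1 := closedBall_sub_unit hz hrR
  have hdc : DiffContOnCl ℂ h (ball z r) := by
    apply DifferentiableOn.diffContOnCl
    rw [closure_ball z hr.ne']
    exact hd.mono hsub
  have hder : deriv h z = (2 * π * Complex.I : ℂ)⁻¹ •
      circleIntegral (fun w => (w - z) ^ (-2 : ℤ) • h w) z r := by
    have := hdc.circleIntegral_one_div_sub_center_pow_smul hr 1
    rw [iteratedDeriv_one] at this
    have e : (fun w => (w - z) ^ (-2 : ℤ) • h w) = fun w => (1 / (w - z) ^ (1 + 1)) • h w := by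
      funext w; simp [zpow_neg, one_div]
    rw [e, this, Nat.factorial_one, Nat.cast_one, div_one, smul_smul,
      inv_mul_cancel₀ (by simp [Real.pi_ne_zero]), one_smul]
  have hnorm : ‖deriv h z‖ ≤ (2 * π)⁻¹ *
      ∫ θ in (0:ℝ)..2 * π, r⁻¹ * ‖h (circleMap z r θ)‖ := by
    rw [hder, norm_smul]
    have hc : ‖((2 * ↑π * Complex.I)⁻¹ : ℂ)‖ = (2 * π)⁻¹ := by
      rw [norm_inv]
      simp [Complex.norm_real, abs_of_pos Real.pi_pos]
    rw [hc]
    apply mul_le_mul_of_nonneg_left _ (by positivity)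
    rw [circleIntegral]
    calc ‖∫ θ in (0:ℝ)..2 * π, deriv (circleMap z r) θ •
            ((circleMap z r θ - z) ^ (-2 : ℤ) • h (circleMap z r θ))‖
        ≤ ∫ θ in (0:ℝ)..2 * π, ‖deriv (circleMap z r) θ •
            ((circleMap z r θ - z) ^ (-2 : ℤ) • h (circleMap z r θ))‖ :=
          intervalIntegral.norm_integral_le_integral_norm (by positivity)
      _ = ∫ θ in (0:ℝ)..2 * π, r⁻¹ * ‖h (circleMap z r θ)‖ := by
          apply intervalIntegral.integral_congr
          intro θ _
          dsimp only
          rw [norm_smul, norm_smul, deriv_circleMap, circleMap_sub_center]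
          have h1 : ‖circleMap 0 r θ * Complex.I‖ = r := by
            simp [norm_circleMap_zero, abs_of_pos hr]
          have h2 : ‖(circleMap 0 r θ) ^ (-2 : ℤ)‖ = (r ^ 2)⁻¹ := by
            rw [norm_zpow]
            simp only [norm_circleMap_zero, abs_of_pos hr]
            rw [zpow_neg, zpow_two]
            ring_nf
          rw [h1, h2]
          rw [← mul_assoc]
          congr 1
          field_simp
  rw [intervalIntegral.integral_const_mul, ← mul_assoc] at hnorm
  have hpi : (0:ℝ) < 2 * π := by positivity
  have hint_nonneg : 0 ≤ ∫ θ in (0:ℝ)..2 * π, ‖h (circleMap z r θ)‖ := by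
    apply intervalIntegral.integral_nonneg (by positivity)
    intro θ _
    positivity
  calc 2 * π * r ^ 2 * ‖deriv h z‖
      ≤ 2 * π * r ^ 2 * ((2 * π)⁻¹ * r⁻¹ * ∫ θ in (0:ℝ)..2 * π, ‖h (circleMap z r θ)‖) :=
        mul_le_mul_of_nonneg_left hnorm (by positivity)
    _ = r * ((2*π) * ((2*π)⁻¹) * (r * r⁻¹)) * ∫ θ in (0:ℝ)..2 * π, ‖h (circleMap z r θ)‖ := by
        ring
    _ = r * ∫ θ in (0:ℝ)..2 * π, ‖h (circleMap z r θ)‖ := by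
        rw [mul_inv_cancel₀ hpi.ne', mul_inv_cancel₀ hr.ne']
        ring

lemma circleMap_eq_polar (z : ℂ) (r θ : ℝ) :
    circleMap z r θ = z + Complex.polarCoord.symm (r, θ) := by
  rw [Complex.polarCoord_symm_apply]
  simp only [circleMap]
  congr 1
  rw [show ((θ:ℂ) * Complex.I) = ((θ:ℝ):ℂ) * Complex.I from rfl, Complex.exp_mul_I]
  simp [Complex.ofReal_cos, Complex.ofReal_sin]

lemma circle_lower {h : ℂ → ℂ} (hd : DifferentiableOn ℂ h (ball (0:ℂ) 1))
    {z : ℂ} (hz : ‖z‖ < 1) {r : ℝ} (hr : 0 < r) (hrR : r ≤ (1 - ‖z‖) / 2) :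
    2 * π * r ^ 2 * ‖deriv h z‖ ≤
      ∫ θ in Ioo (-π) π, r * ‖h (z + Complex.polarCoord.symm (r, θ))‖ := by
  have key := cauchy_circle_bound hd hz hr hrR
  have hper : Function.Periodic (fun θ : ℝ => ‖h (circleMap z r θ)‖) (2 * π) :=
    fun θ => by simp [periodic_circleMap z r θ]
  have hshift : ∫ θ in (0:ℝ)..2 * π, ‖h (circleMap z r θ)‖
      = ∫ θ in (-π)..π, ‖h (circleMap z r θ)‖ := by
    have := hper.intervalIntegral_add_eq 0 (-π)
    simp only [zero_add] at this
    rw [this, show -π + 2 * π = π by ring]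
  rw [hshift] at key
  have hIoo : ∫ θ in (-π)..π, ‖h (circleMap z r θ)‖
      = ∫ θ in Ioo (-π) π, ‖h (circleMap z r θ)‖ := by
    rw [intervalIntegral.integral_of_le (by linarith [Real.pi_pos]),
      MeasureTheory.integral_Ioc_eq_integral_Ioo]
  rw [hIoo] at key
  calc 2 * π * r ^ 2 * ‖deriv h z‖
      ≤ r * ∫ θ in Ioo (-π) π, ‖h (circleMap z r θ)‖ := key
    _ = ∫ θ in Ioo (-π) π, r * ‖h (z + Complex.polarCoord.symm (r, θ))‖ := by
        rw [← MeasureTheory.integral_const_mul]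
        apply MeasureTheory.integral_congr_ae
        filter_upwards with θ
        rw [circleMap_eq_polar]



lemma continuous_polar_symm : Continuous (fun p : ℝ × ℝ => Complex.polarCoord.symm p) := by
  have : (fun p : ℝ × ℝ => Complex.polarCoord.symm p)
      = fun p : ℝ × ℝ => (p.1 : ℂ) * (Real.cos p.2 + Real.sin p.2 * Complex.I) := by
    funext p
    rw [Complex.polarCoord_symm_apply]
  rw [this]
  fun_prop

lemma area_lower {h : ℂ → ℂ} (hd : DifferentiableOn ℂ h (ball (0:ℂ) 1))
    {z : ℂ} (hz : ‖z‖ < 1) :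
    2 * π * (((1 - ‖z‖) / 2) ^ 3 / 3) * ‖deriv h z‖ ≤
      ∫ w in ball z ((1 - ‖z‖) / 2), ‖h w‖ := by
  set R := (1 - ‖z‖) / 2 with hR_def
  have hR : 0 < R := by rw [hR_def]; linarith
  have hcont : ContinuousOn h (ball (0:ℂ) 1) := hd.continuousOn
  set φ : ℝ × ℝ → ℂ := fun p => z + Complex.polarCoord.symm p with hφ_def
  have hφc : Continuous φ := continuous_const.add continuous_polar_symm
  set F : ℝ × ℝ → ℝ := fun p => p.1 * ‖h (φ p)‖ with hF_def
  -- Step (a): translation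
  have hstep_a : ∫ w in ball z R, ‖h w‖ = ∫ w in ball (0:ℂ) R, ‖h (z + w)‖ := by
    have hemb : MeasurableEmbedding (fun w : ℂ => z + w) :=
      (MeasurableEquiv.addLeft z).measurableEmbedding
    have hmp : MeasurePreserving (fun w : ℂ => z + w) volume volume :=
      measurePreserving_add_left volume z
    have key := hmp.setIntegral_preimage_emb hemb (fun w => ‖h w‖) (ball z R)
    rw [← key]
    congr 1
    ext w
    simp [dist_eq_norm, add_comm, add_sub_cancel_left]
  -- Step (b): polar coordinates
  have habs : ∀ p : ℝ × ℝ, ‖Complex.polarCoord.symm p‖ = |p.1| := by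
    intro p
    rw [Complex.norm_polarCoord_symm]
  have hstep_b : ∫ w in ball (0:ℂ) R, ‖h (z + w)‖
      = ∫ p in Ioo (0:ℝ) R ×ˢ Ioo (-π) π, F p := by
    have hpolar := Complex.integral_comp_polarCoord_symm
      (Set.indicator (ball (0:ℂ) R) (fun w => ‖h (z + w)‖))
    rw [MeasureTheory.integral_indicator measurableSet_ball] at hpolar
    rw [← hpolar]
    have htarget : polarCoord.target = Ioi (0:ℝ) ×ˢ Ioo (-π) π := rfl
    rw [htarget]
    have hcongr : ∀ p ∈ Ioi (0:ℝ) ×ˢ Ioo (-π) π,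
        p.1 • (Set.indicator (ball (0:ℂ) R) (fun w => ‖h (z + w)‖)
          (Complex.polarCoord.symm p))
        = Set.indicator (Ioo (0:ℝ) R ×ˢ Ioo (-π) π) F p := by
      rintro ⟨r, θ⟩ ⟨hr, hθ⟩
      simp only [mem_Ioi] at hr
      have hmem : Complex.polarCoord.symm (r, θ) ∈ ball (0:ℂ) R ↔ r < R := by
        rw [mem_ball, dist_eq_norm, sub_zero, habs]
        rw [abs_of_pos hr]
      rcases lt_or_ge r R with hrlt | hrge
      · rw [Set.indicator_of_mem (hmem.mpr hrlt),
          Set.indicator_of_mem (show ((r,θ) : ℝ × ℝ) ∈ Ioo (0:ℝ) R ×ˢ Ioo (-π) π from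
            ⟨⟨hr, hrlt⟩, hθ⟩)]
        simp [hF_def, hφ_def, smul_eq_mul]
      · rw [Set.indicator_of_notMem (fun hc => absurd (hmem.mp hc) (not_lt.2 hrge)),
          Set.indicator_of_notMem (fun hc => absurd hc.1.2 (not_lt.2 hrge))]
        simp
    rw [setIntegral_congr_fun (measurableSet_Ioi.prod measurableSet_Ioo) hcongr,
      setIntegral_indicator (measurableSet_Ioo.prod measurableSet_Ioo),
      Set.prod_inter_prod, Set.inter_self,
      Set.inter_eq_self_of_subset_right Ioo_subset_Ioi_self]
  -- Integrability of F on the rectangle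
  have hK : IsCompact (Icc (0:ℝ) R ×ˢ Icc (-π) π) := isCompact_Icc.prod isCompact_Icc
  have hmaps : Set.MapsTo φ (Icc (0:ℝ) R ×ˢ Icc (-π) π) (ball (0:ℂ) 1) := by
    rintro ⟨r, θ⟩ ⟨hr, hθ⟩
    apply closedBall_sub_unit hz (le_refl R)
    rw [mem_closedBall, dist_eq_norm]
    simp only [hφ_def, add_sub_cancel_left]
    rw [habs]
    exact abs_le.2 ⟨by simpa using le_trans (by linarith [hr.1]) hr.1, hr.2⟩
  have hFcont : ContinuousOn F (Icc (0:ℝ) R ×ˢ Icc (-π) π) := by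
    apply ContinuousOn.mul continuous_fst.continuousOn
    exact (hcont.comp hφc.continuousOn hmaps).norm
  have hFint : IntegrableOn F (Ioo (0:ℝ) R ×ˢ Ioo (-π) π) volume :=
    (hFcont.integrableOn_compact hK).mono_set
      (Set.prod_mono Ioo_subset_Icc_self Ioo_subset_Icc_self)
  -- Step (c): iterated integral
  have hstep_c : ∫ p in Ioo (0:ℝ) R ×ˢ Ioo (-π) π, F p
      = ∫ r in Ioo (0:ℝ) R, ∫ θ in Ioo (-π) π, F (r, θ) := by
    rw [Measure.volume_eq_prod]
    apply setIntegral_prod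
    rwa [← Measure.volume_eq_prod]
  -- marginal integrability
  have h1 : Integrable F ((volume.restrict (Ioo (0:ℝ) R)).prod
      (volume.restrict (Ioo (-π) π))) := by
    rw [Measure.prod_restrict, ← Measure.volume_eq_prod]
    exact hFint
  have hmarg : IntegrableOn (fun r => ∫ θ in Ioo (-π) π, F (r, θ)) (Ioo (0:ℝ) R) :=
    MeasureTheory.Integrable.integral_prod_left h1
  have hlow_int : IntegrableOn (fun r : ℝ => 2 * π * r ^ 2 * ‖deriv h z‖) (Ioo (0:ℝ) R) :=
    (Continuous.integrableOn_Icc (by fun_prop)).mono_set Ioo_subset_Icc_self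
  have hmono : ∫ r in Ioo (0:ℝ) R, 2 * π * r ^ 2 * ‖deriv h z‖
      ≤ ∫ r in Ioo (0:ℝ) R, ∫ θ in Ioo (-π) π, F (r, θ) := by
    apply setIntegral_mono_on hlow_int hmarg measurableSet_Ioo
    intro r hr
    exact circle_lower hd hz hr.1 hr.2.le
  have hcalc : ∫ r in Ioo (0:ℝ) R, 2 * π * r ^ 2 * ‖deriv h z‖
      = 2 * π * (R ^ 3 / 3) * ‖deriv h z‖ := by
    rw [← MeasureTheory.integral_Ioc_eq_integral_Ioo,
      ← intervalIntegral.integral_of_le hR.le]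
    have heq : (fun r : ℝ => 2 * π * r ^ 2 * ‖deriv h z‖)
        = fun r : ℝ => (2 * π * ‖deriv h z‖) * r ^ 2 := by
      funext r; ring
    rw [heq, intervalIntegral.integral_const_mul, integral_pow]
    norm_num
    ring
  rw [hstep_a, hstep_b, hstep_c]
  rw [← hcalc]
  exact hmono



/-- normalized area of unit disc -/
def V₁ : ℝ := (volume (ball (0:ℂ) 1)).toReal

lemma V₁_def : V₁ = (volume (ball (0:ℂ) 1)).toReal := rfl

lemma V₁_pos : 0 < V₁ := by
  rw [V₁, ENNReal.toReal_pos_iff]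
  exact ⟨measure_ball_pos volume 0 one_pos, measure_ball_lt_top⟩

lemma volume_ball_complex (z : ℂ) {R : ℝ} (hR : 0 ≤ R) :
    (volume (ball z R)).toReal = R ^ 2 * V₁ := by
  rw [Measure.addHaar_ball volume z hR, Complex.finrank_real_complex,
    ENNReal.toReal_mul, ENNReal.toReal_ofReal (by positivity)]
  rfl

def K₀ : ℝ := 9 * V₁ / (4 * π ^ 2)

lemma K₀_pos : 0 < K₀ := by
  have := V₁_pos
  rw [K₀]
  positivity

lemma deriv_sq_bound {h : ℂ → ℂ} (hd : DifferentiableOn ℂ h (ball (0:ℂ) 1))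
    {z : ℂ} (hz : ‖z‖ < 1) :
    ‖deriv h z‖ ^ 2 * ((1 - ‖z‖) / 2) ^ 4 ≤
      K₀ * ∫ w in ball z ((1 - ‖z‖) / 2), ‖h w‖ ^ 2 := by
  set R := (1 - ‖z‖) / 2 with hR_def
  have hR : 0 < R := by rw [hR_def]; linarith
  set I₁ := ∫ w in ball z R, ‖h w‖ with hI₁
  set I₂ := ∫ w in ball z R, ‖h w‖ ^ 2 with hI₂
  have hsub : ball z R ⊆ ball (0:ℂ) 1 :=
    (ball_subset_closedBall).trans (closedBall_sub_unit hz le_rfl)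
  have hI₁0 : 0 ≤ I₁ := setIntegral_nonneg measurableSet_ball fun w _ => norm_nonneg _
  have hI₂0 : 0 ≤ I₂ := setIntegral_nonneg measurableSet_ball fun w _ => by positivity
  -- Cauchy-Schwarz
  haveI : IsFiniteMeasure (volume.restrict (ball z R)) :=
    ⟨by rw [Measure.restrict_apply_univ]; exact measure_ball_lt_top⟩
  obtain ⟨Ch, hCh⟩ := (isCompact_closedBall z R).exists_bound_of_continuousOn
    (hd.continuousOn.mono (closedBall_sub_unit hz le_rfl)).norm
  have hmeas : AEStronglyMeasurable (fun w => ‖h w‖) (volume.restrict (ball z R)) :=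
    ((hd.continuousOn.mono hsub).norm).aestronglyMeasurable measurableSet_ball
  have hmem2 : MemLp (fun w => ‖h w‖) (ENNReal.ofReal 2) (volume.restrict (ball z R)) := by
    apply MemLp.of_bound hmeas Ch
    rw [ae_restrict_iff' measurableSet_ball]
    apply ae_of_all
    intro w hw
    rw [Real.norm_of_nonneg (norm_nonneg _)]
    simpa using hCh w (ball_subset_closedBall hw)
  have hCS := integral_mul_le_Lp_mul_Lq_of_nonneg
    (Real.holderConjugate_iff (p := 2) (q := 2) |>.mpr ⟨by norm_num, by norm_num⟩)
    (ae_of_all _ fun w => norm_nonneg (h w)) (ae_of_all _ fun _ => zero_le_one)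
    hmem2 (memLp_const 1)
  simp only [mul_one] at hCS
  have hrw2 : ∀ x : ℝ, x ^ (2:ℝ) = x ^ (2:ℕ) := fun x => by
    rw [show (2:ℝ) = ((2:ℕ):ℝ) by norm_num, Real.rpow_natCast]
  simp only [hrw2] at hCS
  rw [MeasureTheory.integral_const, smul_eq_mul] at hCS
  simp only [one_pow, mul_one] at hCS
  rw [measureReal_restrict_apply_univ, Measure.real, volume_ball_complex z hR.le] at hCS
  -- hCS : I₁ ≤ I₂ ^ (1/2) * (R^2*V₁) ^ (1/2)
  have hsq : ∀ x : ℝ, 0 ≤ x → (x ^ ((1:ℝ)/2)) ^ 2 = x := by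
    intro x hx
    rw [← Real.rpow_natCast (x ^ ((1:ℝ)/2)) 2, ← Real.rpow_mul hx]
    norm_num
  have hVR : (0:ℝ) ≤ R ^ 2 * V₁ := by have := V₁_pos; positivity
  have hI₁sq : I₁ ^ 2 ≤ I₂ * (R ^ 2 * V₁) := by
    calc I₁ ^ 2 ≤ (I₂ ^ ((1:ℝ)/2) * (R ^ 2 * V₁) ^ ((1:ℝ)/2)) ^ 2 :=
          pow_le_pow_left₀ hI₁0 hCS 2
      _ = I₂ * (R ^ 2 * V₁) := by
          rw [mul_pow, hsq _ hI₂0, hsq _ hVR]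
  have harea := area_lower hd hz
  rw [← hR_def, ← hI₁] at harea
  have hlhs0 : 0 ≤ 2 * π * (R ^ 3 / 3) * ‖deriv h z‖ := by positivity
  have h2 : (2 * π * (R ^ 3 / 3) * ‖deriv h z‖) ^ 2 ≤ I₂ * (R ^ 2 * V₁) :=
    le_trans (pow_le_pow_left₀ hlhs0 harea 2) hI₁sq
  have hπ := Real.pi_pos
  have hkey : (4 * π ^ 2 / 9) * (‖deriv h z‖ ^ 2 * R ^ 4) * R ^ 2 ≤ (I₂ * V₁) * R ^ 2 := by
    nlinarith [h2]
  have hdiv : (4 * π ^ 2 / 9) * (‖deriv h z‖ ^ 2 * R ^ 4) ≤ I₂ * V₁ :=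
    le_of_mul_le_mul_right hkey (by positivity)
  have : ‖deriv h z‖ ^ 2 * R ^ 4 ≤ I₂ * V₁ / (4 * π ^ 2 / 9) := by
    rw [le_div_iff₀ (by positivity)]
    linarith
  calc ‖deriv h z‖ ^ 2 * R ^ 4 ≤ I₂ * V₁ / (4 * π ^ 2 / 9) := this
    _ = K₀ * I₂ := by rw [K₀]; field_simp



def C₁ (m : ℕ) : ℝ := K₀ * 16 * 4 ^ (2 * m) * 9

lemma C₁_pos (m : ℕ) : 0 < C₁ m := by
  have := K₀_pos
  rw [C₁]
  positivity

def kern (z w : ℂ) : ℝ≥0∞ :=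
  if dist w z < (1 - ‖z‖) / 2 then ENNReal.ofReal ((((1 - ‖z‖) / 2) ^ 2)⁻¹) else 0

lemma kern_measurable : Measurable (fun p : ℂ × ℂ => kern p.1 p.2) := by
  unfold kern
  apply Measurable.ite
  · have : IsOpen {p : ℂ × ℂ | dist p.2 p.1 < (1 - ‖p.1‖) / 2} := by
      apply isOpen_lt
      · exact continuous_snd.dist continuous_fst
      · fun_prop
    exact this.measurableSet
  · apply ENNReal.measurable_ofReal.comp
    fun_prop
  · exact measurable_const

def Gfun (μ : Measure ℂ) (m : ℕ) (h : ℂ → ℂ) (w : ℂ) : ℝ :=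
  ‖h w‖ ^ 2 * (1 - ‖w‖ ^ 2) ^ (2 * m) * poissonInt μ w

lemma Gfun_measurable (μ : Measure ℂ) [IsFiniteMeasure μ] (m : ℕ) {h : ℂ → ℂ}
    (hmeas : Measurable h) : Measurable (Gfun μ m h) := by
  unfold Gfun
  apply Measurable.mul
  apply Measurable.mul
  · exact (hmeas.norm.pow measurable_const)
  · exact ((measurable_const.sub (measurable_norm.pow measurable_const)).pow measurable_const)
  · exact poissonInt_measurable μ

lemma Gfun_nonneg (μ : Measure ℂ) (m : ℕ) (h : ℂ → ℂ) {w : ℂ} (hw : ‖w‖ ≤ 1) :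
    0 ≤ Gfun μ m h w := by
  unfold Gfun
  have h1 : (0:ℝ) ≤ 1 - ‖w‖ ^ 2 := by nlinarith [norm_nonneg w]
  have h2 := poissonInt_nonneg μ hw
  positivity

lemma Gfun_integrableOn {μ : Measure ℂ} [IsFiniteMeasure μ]
    (hsp : μ ((Metric.sphere (0:ℂ) 1)ᶜ) = 0) {h : ℂ → ℂ} (hmeas : Measurable h)
    (hd : DifferentiableOn ℂ h (ball (0:ℂ) 1)) (m : ℕ) {z : ℂ} (hz : ‖z‖ < 1) :
    IntegrableOn (Gfun μ m h) (ball z ((1 - ‖z‖) / 2)) := by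
  set R := (1 - ‖z‖) / 2 with hR_def
  have hR : 0 < R := by rw [hR_def]; linarith
  obtain ⟨Ch, hCh⟩ := (isCompact_closedBall z R).exists_bound_of_continuousOn
    (hd.continuousOn.mono (closedBall_sub_unit hz le_rfl)).norm
  set M : ℝ := Ch ^ 2 * ((μ Set.univ).toReal * (2 * R⁻¹)) with hM_def
  haveI : IsFiniteMeasure (volume.restrict (ball z R)) :=
    ⟨by rw [Measure.restrict_apply_univ]; exact measure_ball_lt_top⟩
  apply Integrable.mono' (integrable_const M)
    ((Gfun_measurable μ m hmeas).aestronglyMeasurable)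
  rw [ae_restrict_iff' measurableSet_ball]
  apply ae_of_all
  intro w hw
  rw [mem_ball] at hw
  obtain ⟨hw1, hw2⟩ := ball_subset_unit hz hw
  have hPw0 : 0 ≤ poissonInt μ w := poissonInt_nonneg μ hw1.le
  have hb0 : (0:ℝ) ≤ 1 - ‖w‖ ^ 2 := by nlinarith [norm_nonneg w]
  have hb1 : (1 - ‖w‖ ^ 2) ^ (2 * m) ≤ 1 := by
    apply pow_le_one₀ hb0
    nlinarith [norm_nonneg w]
  have hhw : ‖h w‖ ≤ Ch := by
    simpa using hCh w (ball_subset_closedBall (mem_ball.mpr hw))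
  have hhw0 : (0:ℝ) ≤ ‖h w‖ := norm_nonneg _
  have hCh0 : 0 ≤ Ch := le_trans hhw0 hhw
  have hPwb : poissonInt μ w ≤ (μ Set.univ).toReal * (2 * R⁻¹) := by
    calc poissonInt μ w ≤ (μ Set.univ).toReal * (2 * (1 - ‖w‖)⁻¹) :=
          poissonInt_le_bound hsp hw1
      _ ≤ (μ Set.univ).toReal * (2 * R⁻¹) := by
          apply mul_le_mul_of_nonneg_left _ ENNReal.toReal_nonneg
          apply mul_le_mul_of_nonneg_left _ (by norm_num)
          exact inv_anti₀ hR hw2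
  rw [Real.norm_of_nonneg (Gfun_nonneg μ m h hw1.le)]
  unfold Gfun
  calc ‖h w‖ ^ 2 * (1 - ‖w‖ ^ 2) ^ (2 * m) * poissonInt μ w
      ≤ Ch ^ 2 * 1 * ((μ Set.univ).toReal * (2 * R⁻¹)) := by
        apply mul_le_mul _ hPwb hPw0 (by positivity)
        apply mul_le_mul _ hb1 (by positivity) (by positivity)
        exact pow_le_pow_left₀ hhw0 hhw 2
    _ = M := by rw [hM_def]; ring

lemma normsq_integrableOn {h : ℂ → ℂ} (hmeas : Measurable h)
    (hd : DifferentiableOn ℂ h (ball (0:ℂ) 1)) {z : ℂ} (hz : ‖z‖ < 1) :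
    IntegrableOn (fun w => ‖h w‖ ^ 2) (ball z ((1 - ‖z‖) / 2)) := by
  set R := (1 - ‖z‖) / 2 with hR_def
  obtain ⟨Ch, hCh⟩ := (isCompact_closedBall z R).exists_bound_of_continuousOn
    (hd.continuousOn.mono (closedBall_sub_unit hz le_rfl)).norm
  haveI : IsFiniteMeasure (volume.restrict (ball z R)) :=
    ⟨by rw [Measure.restrict_apply_univ]; exact measure_ball_lt_top⟩
  apply Integrable.mono' (integrable_const (Ch ^ 2))
    ((hmeas.norm.pow measurable_const).aestronglyMeasurable)
  rw [ae_restrict_iff' measurableSet_ball]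
  apply ae_of_all
  intro w hw
  have hhw : ‖h w‖ ≤ Ch := by simpa using hCh w (ball_subset_closedBall hw)
  rw [Real.norm_of_nonneg (by positivity)]
  exact pow_le_pow_left₀ (norm_nonneg _) hhw 2

lemma pointwise_master {μ : Measure ℂ} [IsFiniteMeasure μ]
    (hsp : μ ((Metric.sphere (0:ℂ) 1)ᶜ) = 0) {h : ℂ → ℂ} (hmeas : Measurable h)
    (hd : DifferentiableOn ℂ h (ball (0:ℂ) 1)) (m : ℕ) {z : ℂ} (hz : ‖z‖ < 1) :
    ENNReal.ofReal (‖deriv h z‖ ^ 2 * (1 - ‖z‖ ^ 2) ^ (2 * m + 2) * poissonInt μ z)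
      ≤ ENNReal.ofReal (C₁ m) *
        ∫⁻ w in ball (0:ℂ) 1, kern z w * ENNReal.ofReal (Gfun μ m h w) := by
  set R := (1 - ‖z‖) / 2 with hR_def
  have hR : 0 < R := by rw [hR_def]; linarith
  have hsub : ball z R ⊆ ball (0:ℂ) 1 :=
    ball_subset_closedBall.trans (closedBall_sub_unit hz le_rfl)
  set Pz := poissonInt μ z with hPz_def
  have hPz0 : 0 ≤ Pz := poissonInt_nonneg μ hz.le
  set a := 1 - ‖z‖ ^ 2 with ha_def
  have ha0 : 0 ≤ a := by rw [ha_def]; nlinarith [norm_nonneg z]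
  set cz := a ^ (2 * m + 2) * Pz with hcz_def
  have hcz0 : 0 ≤ cz := by positivity
  set I₂h := ∫ w in ball z R, ‖h w‖ ^ 2 with hI₂h
  have hI₂h0 : 0 ≤ I₂h := setIntegral_nonneg measurableSet_ball fun w _ => by positivity
  have hbound := deriv_sq_bound hd hz
  rw [← hR_def, ← hI₂h] at hbound
  -- step 1: real pointwise bound
  have real1 : ‖deriv h z‖ ^ 2 * cz ≤ K₀ * (R ^ 4)⁻¹ * cz * I₂h := by
    have hN : ‖deriv h z‖ ^ 2 ≤ K₀ * I₂h * (R ^ 4)⁻¹ := by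
      rw [← div_eq_mul_inv, le_div_iff₀ (by positivity)]
      linarith
    calc ‖deriv h z‖ ^ 2 * cz ≤ (K₀ * I₂h * (R ^ 4)⁻¹) * cz :=
          mul_le_mul_of_nonneg_right hN hcz0
      _ = K₀ * (R ^ 4)⁻¹ * cz * I₂h := by ring
  -- step 2: put under the integral
  have real2 : K₀ * (R ^ 4)⁻¹ * cz * I₂h
      = ∫ w in ball z R, K₀ * (R ^ 4)⁻¹ * cz * ‖h w‖ ^ 2 := by
    rw [hI₂h, ← MeasureTheory.integral_const_mul]
  -- step 3: pointwise comparison under the integral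
  have ha4R : a ≤ 4 * R := by rw [ha_def, hR_def]; nlinarith [norm_nonneg z, hz]
  have real3 : ∀ w ∈ ball z R, K₀ * (R ^ 4)⁻¹ * cz * ‖h w‖ ^ 2
      ≤ C₁ m * (R ^ 2)⁻¹ * Gfun μ m h w := by
    intro w hw
    rw [mem_ball] at hw
    obtain ⟨hw1, hw2⟩ := ball_subset_unit hz hw
    set b := 1 - ‖w‖ ^ 2 with hb_def
    have hb0 : 0 ≤ b := by rw [hb_def]; nlinarith [norm_nonneg w]
    have hPw0 : 0 ≤ poissonInt μ w := poissonInt_nonneg μ hw1.le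
    have hab : a ≤ 4 * b := by
      have hRb : R ≤ 1 - ‖w‖ := hw2
      have : 1 - ‖w‖ ≤ b := by rw [hb_def]; nlinarith [norm_nonneg w, hw1]
      linarith [ha4R]
    have t1 : a ^ (2 * m + 2) ≤ 16 * R ^ 2 * (4 ^ (2 * m) * b ^ (2 * m)) := by
      have e1 : a ^ (2 * m + 2) = a ^ (2 * m) * a ^ 2 := by rw [pow_add]
      have e2 : a ^ (2 * m) ≤ (4 * b) ^ (2 * m) := pow_le_pow_left₀ ha0 hab _
      have e3 : a ^ 2 ≤ (4 * R) ^ 2 := pow_le_pow_left₀ ha0 ha4R 2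
      calc a ^ (2 * m + 2) = a ^ (2 * m) * a ^ 2 := e1
        _ ≤ (4 * b) ^ (2 * m) * (4 * R) ^ 2 :=
            mul_le_mul e2 e3 (by positivity) (by positivity)
        _ = 16 * R ^ 2 * (4 ^ (2 * m) * b ^ (2 * m)) := by
            rw [mul_pow]; ring
    have t2 : Pz ≤ 9 * poissonInt μ w := poissonInt_compare hsp hz hw
    have hq0 : 0 ≤ K₀ * (R ^ 4)⁻¹ * ‖h w‖ ^ 2 := by
      have := K₀_pos
      positivity
    have tmul : a ^ (2 * m + 2) * Pz
        ≤ (16 * R ^ 2 * (4 ^ (2 * m) * b ^ (2 * m))) * (9 * poissonInt μ w) :=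
      mul_le_mul t1 t2 hPz0 (by positivity)
    have hmain : K₀ * (R ^ 4)⁻¹ * ‖h w‖ ^ 2 * (a ^ (2 * m + 2) * Pz)
        ≤ K₀ * (R ^ 4)⁻¹ * ‖h w‖ ^ 2 *
          ((16 * R ^ 2 * (4 ^ (2 * m) * b ^ (2 * m))) * (9 * poissonInt μ w)) :=
      mul_le_mul_of_nonneg_left tmul hq0
    have hY : K₀ * (R ^ 4)⁻¹ * ‖h w‖ ^ 2 *
          ((16 * R ^ 2 * (4 ^ (2 * m) * b ^ (2 * m))) * (9 * poissonInt μ w))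
        = C₁ m * (R ^ 2)⁻¹ * Gfun μ m h w := by
      rw [C₁]
      unfold Gfun
      rw [← hb_def]
      field_simp
    calc K₀ * (R ^ 4)⁻¹ * cz * ‖h w‖ ^ 2
        = K₀ * (R ^ 4)⁻¹ * ‖h w‖ ^ 2 * (a ^ (2 * m + 2) * Pz) := by
          rw [hcz_def]; ring
      _ ≤ _ := hmain
      _ = C₁ m * (R ^ 2)⁻¹ * Gfun μ m h w := hY
  -- step 4: integrate the comparison
  have hint1 : IntegrableOn (fun w => K₀ * (R ^ 4)⁻¹ * cz * ‖h w‖ ^ 2) (ball z R) :=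
    (normsq_integrableOn hmeas hd hz).const_mul _
  have hint2 : IntegrableOn (fun w => C₁ m * (R ^ 2)⁻¹ * Gfun μ m h w) (ball z R) :=
    (Gfun_integrableOn hsp hmeas hd m hz).const_mul _
  have real4 : ‖deriv h z‖ ^ 2 * cz ≤ ∫ w in ball z R, C₁ m * (R ^ 2)⁻¹ * Gfun μ m h w := by
    calc ‖deriv h z‖ ^ 2 * cz ≤ K₀ * (R ^ 4)⁻¹ * cz * I₂h := real1
      _ = ∫ w in ball z R, K₀ * (R ^ 4)⁻¹ * cz * ‖h w‖ ^ 2 := real2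
      _ ≤ ∫ w in ball z R, C₁ m * (R ^ 2)⁻¹ * Gfun μ m h w :=
          setIntegral_mono_on hint1 hint2 measurableSet_ball real3
  -- step 5: pass to ENNReal
  have step5 : ENNReal.ofReal (‖deriv h z‖ ^ 2 * cz)
      ≤ ∫⁻ w in ball z R, ENNReal.ofReal (C₁ m * (R ^ 2)⁻¹ * Gfun μ m h w) := by
    have hnonneg : (0 : ℂ → ℝ) ≤ᵐ[volume.restrict (ball z R)]
        fun w => C₁ m * (R ^ 2)⁻¹ * Gfun μ m h w := by
      refine (ae_restrict_iff' measurableSet_ball).2 (ae_of_all _ fun w hw => ?_)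
      have hw1 := (ball_subset_unit hz (mem_ball.mp hw)).1
      have := C₁_pos m
      have := Gfun_nonneg μ m h hw1.le
      simp only [Pi.zero_apply]
      positivity
    rw [← ofReal_integral_eq_lintegral_ofReal hint2 hnonneg]
    exact ENNReal.ofReal_le_ofReal real4
  -- step 6: rewrite integrand with the kernel
  have step6 : ∫⁻ w in ball z R, ENNReal.ofReal (C₁ m * (R ^ 2)⁻¹ * Gfun μ m h w)
      = ∫⁻ w in ball z R, ENNReal.ofReal (C₁ m) * (kern z w * ENNReal.ofReal (Gfun μ m h w)) := by
    apply setLIntegral_congr_fun measurableSet_ball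
    intro w hw
    rw [mem_ball] at hw
    have hkern : kern z w = ENNReal.ofReal ((R ^ 2)⁻¹) := by
      rw [kern, ← hR_def, if_pos hw]
    dsimp only
    rw [hkern, ENNReal.ofReal_mul (by have := C₁_pos m; positivity),
      ENNReal.ofReal_mul (le_of_lt (C₁_pos m)), mul_assoc]
  -- step 7: enlarge domain and pull out constant
  calc ENNReal.ofReal (‖deriv h z‖ ^ 2 * (1 - ‖z‖ ^ 2) ^ (2 * m + 2) * poissonInt μ z)
      = ENNReal.ofReal (‖deriv h z‖ ^ 2 * cz) := by
        rw [hcz_def, ← ha_def, ← hPz_def, mul_assoc]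
    _ ≤ ∫⁻ w in ball z R, ENNReal.ofReal (C₁ m) * (kern z w * ENNReal.ofReal (Gfun μ m h w)) := by
        rw [← step6]; exact step5
    _ ≤ ∫⁻ w in ball (0:ℂ) 1, ENNReal.ofReal (C₁ m) *
          (kern z w * ENNReal.ofReal (Gfun μ m h w)) :=
        lintegral_mono' (Measure.restrict_mono hsub le_rfl) le_rfl
    _ = ENNReal.ofReal (C₁ m) * ∫⁻ w in ball (0:ℂ) 1, kern z w * ENNReal.ofReal (Gfun μ m h w) :=
        lintegral_const_mul' _ _ ENNReal.ofReal_ne_top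

lemma kern_lintegral_bound (w : ℂ) :
    ∫⁻ z in ball (0:ℂ) 1, kern z w ≤ ENNReal.ofReal 9 * volume (ball (0:ℂ) 1) := by
  rcases le_or_gt (1 - ‖w‖) 0 with hw | hw
  · have hzero : ∀ z : ℂ, kern z w = 0 := by
      intro z
      rw [kern, if_neg]
      intro hc
      have h1 : 0 < (1 - ‖z‖) / 2 := lt_of_le_of_lt dist_nonneg hc
      have := (ball_subset_unit (by linarith) hc).2
      linarith
    simp only [hzero, lintegral_zero]
    exact zero_le
  · have hpoint : ∀ z : ℂ, kern z w ≤
        Set.indicator (ball w (1 - ‖w‖))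
          (fun _ => ENNReal.ofReal (9 * (((1 - ‖w‖) ^ 2)⁻¹))) z := by
      intro z
      rw [kern]
      split_ifs with hc
      · have h1 : 0 < (1 - ‖z‖) / 2 := lt_of_le_of_lt dist_nonneg hc
        have hz1 : ‖z‖ < 1 := by linarith
        obtain ⟨hw1, hw2⟩ := ball_subset_unit hz1 hc
        have hmem : z ∈ ball w (1 - ‖w‖) := by
          rw [mem_ball, dist_comm]
          exact lt_of_lt_of_le hc hw2
        rw [Set.indicator_of_mem hmem]
        apply ENNReal.ofReal_le_ofReal
        -- (R_z^2)⁻¹ ≤ 9 * ((1-‖w‖)^2)⁻¹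
        have hdist : ‖z‖ - ‖w‖ ≤ dist w z := by
          rw [dist_eq_norm, ← norm_sub_rev]
          exact norm_sub_norm_le z w
        have h3 : 1 - ‖w‖ ≤ 3 * ((1 - ‖z‖) / 2) := by linarith
        have h4 : (1 - ‖w‖) ^ 2 ≤ 9 * ((1 - ‖z‖) / 2) ^ 2 := by nlinarith
        have h9 : 9 * (((1 - ‖w‖) ^ 2)⁻¹) = ((1 - ‖w‖) ^ 2 / 9)⁻¹ := by
          rw [inv_div, div_eq_mul_inv]
        rw [h9]
        apply inv_anti₀ (by positivity)
        linarith
      · exact zero_le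
    calc ∫⁻ z in ball (0:ℂ) 1, kern z w
        ≤ ∫⁻ z in ball (0:ℂ) 1, Set.indicator (ball w (1 - ‖w‖))
            (fun _ => ENNReal.ofReal (9 * (((1 - ‖w‖) ^ 2)⁻¹))) z :=
          lintegral_mono hpoint
      _ ≤ ∫⁻ z, Set.indicator (ball w (1 - ‖w‖))
            (fun _ => ENNReal.ofReal (9 * (((1 - ‖w‖) ^ 2)⁻¹))) z :=
          setLIntegral_le_lintegral _ _
      _ = ENNReal.ofReal (9 * (((1 - ‖w‖) ^ 2)⁻¹)) * volume (ball w (1 - ‖w‖)) := by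
          rw [lintegral_indicator measurableSet_ball, setLIntegral_const]
      _ = ENNReal.ofReal 9 * volume (ball (0:ℂ) 1) := by
          rw [Measure.addHaar_ball volume w hw.le, Complex.finrank_real_complex,
            ← mul_assoc, ← ENNReal.ofReal_mul (by positivity)]
          congr 2
          rw [mul_assoc, inv_mul_cancel₀ (by positivity), mul_one]



lemma key_step (m : ℕ) {μ : Measure ℂ} [IsFiniteMeasure μ]
    (hsp : μ ((Metric.sphere (0:ℂ) 1)ᶜ) = 0) {h : ℂ → ℂ} (hmeas : Measurable h)
    (hd : DifferentiableOn ℂ h (ball (0:ℂ) 1)) :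
    ∫⁻ z in ball (0:ℂ) 1,
        ENNReal.ofReal (‖deriv h z‖ ^ 2 * (1 - ‖z‖ ^ 2) ^ (2 * m + 2) * poissonInt μ z)
      ≤ ENNReal.ofReal (C₁ m * (9 * V₁)) *
        ∫⁻ w in ball (0:ℂ) 1, ENNReal.ofReal (Gfun μ m h w) := by
  set B := ball (0:ℂ) 1 with hB
  set G : ℂ → ℝ≥0∞ := fun w => ENNReal.ofReal (Gfun μ m h w) with hG
  have hGmeas : Measurable G := (Gfun_measurable μ m hmeas).ennreal_ofReal
  have hfmeas : AEMeasurable (Function.uncurry fun z w => kern z w * G w)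
      ((volume.restrict B).prod (volume.restrict B)) := by
    apply Measurable.aemeasurable
    exact kern_measurable.mul (hGmeas.comp measurable_snd)
  have hVne : volume B ≠ ⊤ := measure_ball_lt_top.ne
  have stepA : ∫⁻ z in B,
      ENNReal.ofReal (‖deriv h z‖ ^ 2 * (1 - ‖z‖ ^ 2) ^ (2 * m + 2) * poissonInt μ z)
      ≤ ∫⁻ z in B, ENNReal.ofReal (C₁ m) * ∫⁻ w in B, kern z w * G w := by
    apply setLIntegral_mono' measurableSet_ball
    intro z hz
    have hz1 : ‖z‖ < 1 := by simpa [hB, mem_ball, dist_eq_norm] using hz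
    exact pointwise_master hsp hmeas hd m hz1
  have stepB : ∫⁻ z in B, ENNReal.ofReal (C₁ m) * ∫⁻ w in B, kern z w * G w
      = ENNReal.ofReal (C₁ m) * ∫⁻ z in B, ∫⁻ w in B, kern z w * G w :=
    lintegral_const_mul' _ _ ENNReal.ofReal_ne_top
  have stepC : ∫⁻ z in B, ∫⁻ w in B, kern z w * G w
      = ∫⁻ w in B, ∫⁻ z in B, kern z w * G w :=
    lintegral_lintegral_swap hfmeas
  have stepD : ∀ w : ℂ, ∫⁻ z in B, kern z w * G w ≤ G w * (ENNReal.ofReal 9 * volume B) := by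
    intro w
    have h1 : ∫⁻ z in B, kern z w * G w = G w * ∫⁻ z in B, kern z w := by
      rw [← lintegral_const_mul' (G w) _ ENNReal.ofReal_ne_top]
      exact lintegral_congr fun z => mul_comm _ _
    rw [h1]
    exact mul_le_mul_right (kern_lintegral_bound w) _
  have stepE : ∫⁻ w in B, G w * (ENNReal.ofReal 9 * volume B)
      = (∫⁻ w in B, G w) * (ENNReal.ofReal 9 * volume B) :=
    lintegral_mul_const' _ _ (ENNReal.mul_ne_top ENNReal.ofReal_ne_top hVne)
  have hVB : volume B = ENNReal.ofReal V₁ := by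
    rw [V₁_def, ENNReal.ofReal_toReal hVne]
  calc ∫⁻ z in B,
      ENNReal.ofReal (‖deriv h z‖ ^ 2 * (1 - ‖z‖ ^ 2) ^ (2 * m + 2) * poissonInt μ z)
      ≤ ∫⁻ z in B, ENNReal.ofReal (C₁ m) * ∫⁻ w in B, kern z w * G w := stepA
    _ = ENNReal.ofReal (C₁ m) * ∫⁻ z in B, ∫⁻ w in B, kern z w * G w := stepB
    _ = ENNReal.ofReal (C₁ m) * ∫⁻ w in B, ∫⁻ z in B, kern z w * G w := by rw [stepC]
    _ ≤ ENNReal.ofReal (C₁ m) * ∫⁻ w in B, G w * (ENNReal.ofReal 9 * volume B) :=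
        mul_le_mul_right (lintegral_mono fun w => stepD w) _
    _ = ENNReal.ofReal (C₁ m) * ((∫⁻ w in B, G w) * (ENNReal.ofReal 9 * volume B)) := by
        rw [stepE]
    _ = ENNReal.ofReal (C₁ m * (9 * V₁)) * ∫⁻ w in B, G w := by
        rw [hVB, ENNReal.ofReal_mul (C₁_pos m).le, ENNReal.ofReal_mul (by norm_num : (0:ℝ) ≤ 9)]
        ring

end Stmt11Aux

open Stmt11Aux Metric Set
open scoped Real ENNReal

theorem stmt11 (n : ℕ) :
    ∃ C : ℝ, 0 < C ∧
      ∀ μ : Measure ℂ, IsFiniteMeasure μ → μ ((Metric.sphere (0:ℂ) 1)ᶜ) = 0 →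
      ∀ f : ℂ → ℂ, DifferentiableOn ℂ f (Metric.ball (0:ℂ) 1) →
        (∫⁻ z in Metric.ball (0:ℂ) 1,
            ENNReal.ofReal (‖iteratedDeriv (n + 1) f z‖ ^ 2 * (1 - ‖z‖ ^ 2) ^ (2 * n)
              * poissonInt μ z))
          ≤ ENNReal.ofReal C *
            ∫⁻ z in Metric.ball (0:ℂ) 1,
              ENNReal.ofReal (‖deriv f z‖ ^ 2 * poissonInt μ z) := by
  induction n with
  | zero =>
    refine ⟨1, one_pos, fun μ hμ hsp f hf => ?_⟩
    rw [ENNReal.ofReal_one, one_mul]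
    apply le_of_eq
    apply lintegral_congr fun z => ?_
    rw [iteratedDeriv_one]
    norm_num
  | succ n IH =>
    obtain ⟨C, hC, hIH⟩ := IH
    have hV := V₁_pos
    have hC₁ := C₁_pos n
    refine ⟨C₁ n * (9 * V₁) * C, by positivity, fun μ hμ hsp f hf => ?_⟩
    set h : ℂ → ℂ := iteratedDeriv (n + 1) f with hh
    have hmeas : Measurable h := by
      rw [hh, iteratedDeriv_succ]
      exact measurable_deriv _
    have hdiff : DifferentiableOn ℂ h (ball (0:ℂ) 1) := by
      have := (hf.analyticOnNhd isOpen_ball).iterated_deriv (n + 1)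
      rw [hh, iteratedDeriv_eq_iterate]
      exact this.differentiableOn
    have hkey := key_step n hsp hmeas hdiff
    have hLHS : (∫⁻ z in ball (0:ℂ) 1,
        ENNReal.ofReal (‖iteratedDeriv (n + 1 + 1) f z‖ ^ 2 * (1 - ‖z‖ ^ 2) ^ (2 * (n + 1))
          * poissonInt μ z))
        = ∫⁻ z in ball (0:ℂ) 1,
          ENNReal.ofReal (‖deriv h z‖ ^ 2 * (1 - ‖z‖ ^ 2) ^ (2 * n + 2) * poissonInt μ z) := by
      apply lintegral_congr fun z => ?_
      rw [show 2 * (n + 1) = 2 * n + 2 by ring, show n + 1 + 1 = (n + 1) + 1 by ring,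
        iteratedDeriv_succ, hh]
    have hG : (fun w => ENNReal.ofReal (Gfun μ n h w))
        = fun w => ENNReal.ofReal (‖iteratedDeriv (n + 1) f w‖ ^ 2 * (1 - ‖w‖ ^ 2) ^ (2 * n)
          * poissonInt μ w) := rfl
    calc (∫⁻ z in ball (0:ℂ) 1,
        ENNReal.ofReal (‖iteratedDeriv (n + 1 + 1) f z‖ ^ 2 * (1 - ‖z‖ ^ 2) ^ (2 * (n + 1))
          * poissonInt μ z))
        = ∫⁻ z in ball (0:ℂ) 1,
          ENNReal.ofReal (‖deriv h z‖ ^ 2 * (1 - ‖z‖ ^ 2) ^ (2 * n + 2) * poissonInt μ z) := hLHS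
      _ ≤ ENNReal.ofReal (C₁ n * (9 * V₁)) *
          ∫⁻ w in ball (0:ℂ) 1, ENNReal.ofReal (Gfun μ n h w) := hkey
      _ ≤ ENNReal.ofReal (C₁ n * (9 * V₁)) * (ENNReal.ofReal C *
          ∫⁻ z in ball (0:ℂ) 1, ENNReal.ofReal (‖deriv f z‖ ^ 2 * poissonInt μ z)) := by
          rw [hG]
          exact mul_le_mul_right (hIH μ hμ hsp f hf) _
      _ = ENNReal.ofReal (C₁ n * (9 * V₁) * C) *
          ∫⁻ z in ball (0:ℂ) 1, ENNReal.ofReal (‖deriv f z‖ ^ 2 * poissonInt μ z) := by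
          rw [ENNReal.ofReal_mul (show (0:ℝ) ≤ C₁ n * (9 * V₁) by positivity), mul_assoc]
end
end

section
/- Let b > 0. There exists a constant C > 0, independent of η and z₀, such that for every z₀ ∈ 𝔻, every 0 < η ≤ 1, every w ∈ 𝔻 and every z in the Bergman ball B(z₀, η), one has |k_w(z) − k_w(z₀)| ≤ C η |k_w(z)|, where k_w(z) = (1−|z|²)^{b−1} / (1−z̄w)^{b+1}. -/
open MeasureTheory

noncomputable section

/-- The Möbius transformation `φ_z(w) = (z - w)/(1 - z̄w)`. -/
def moebius (z w : ℂ) : ℂ := (z - w) / (1 - (starRingEnd ℂ) z * w)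

/-- The Bergman metric `d(z,w) = log((1+|φ_z(w)|)/(1-|φ_z(w)|))`. -/
def bdist (z w : ℂ) : ℝ := Real.log ((1 + ‖moebius z w‖) / (1 - ‖moebius z w‖))

/-- The Bergman ball `B(z,r) = {w ∈ 𝔻 : d(z,w) < r}`. -/
def bball (z : ℂ) (r : ℝ) : Set ℂ := {w : ℂ | w ∈ Metric.ball (0:ℂ) 1 ∧ bdist z w < r}

/-- The kernel `k_w(z) = (1-|z|²)^{b-1} / (1-z̄w)^{b+1}`. -/
def kernK (b : ℝ) (w z : ℂ) : ℂ :=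
  (((1 - ‖z‖ ^ 2) ^ (b - 1) : ℝ) : ℂ) / (1 - (starRingEnd ℂ) z * w) ^ ((b : ℂ) + 1)

lemma norm_cexp_sub_one_le (v : ℂ) : ‖Complex.exp v - 1‖ ≤ ‖v‖ * Real.exp ‖v‖ := by
  have hder : ∀ t ∈ Set.Icc (0:ℝ) 1,
      HasDerivWithinAt (fun t : ℝ => Complex.exp ((t:ℂ) * v))
        (Complex.exp ((t:ℂ) * v) * v) (Set.Icc (0:ℝ) 1) t := by
    intro t ht
    have h1 : HasDerivAt (fun t : ℝ => ((t:ℂ) * v)) v t := by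
      simpa using (Complex.ofRealCLM.hasDerivAt (x := t)).mul_const v
    exact (h1.cexp).hasDerivWithinAt
  have hbound : ∀ t ∈ Set.Icc (0:ℝ) 1,
      ‖Complex.exp ((t:ℂ) * v) * v‖ ≤ Real.exp ‖v‖ * ‖v‖ := by
    intro t ht
    rw [norm_mul]
    gcongr
    rw [Complex.norm_exp]
    apply Real.exp_le_exp.2
    calc ((t:ℂ) * v).re ≤ ‖(t:ℂ) * v‖ := Complex.re_le_norm _
      _ = |t| * ‖v‖ := by rw [norm_mul]; simp
      _ ≤ 1 * ‖v‖ := by gcongr; rw [_root_.abs_of_nonneg ht.1]; exact ht.2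
      _ = ‖v‖ := one_mul _
  have := (convex_Icc (0:ℝ) 1).norm_image_sub_le_of_norm_hasDerivWithin_le
    hder hbound (Set.left_mem_Icc.2 zero_le_one) (Set.right_mem_Icc.2 zero_le_one)
  simpa [mul_comm] using this

lemma abs_rexp_sub_one_le (v : ℝ) : |Real.exp v - 1| ≤ |v| * Real.exp |v| := by
  have h := norm_cexp_sub_one_le (v : ℂ)
  have h1 : Complex.exp (v:ℂ) - 1 = ((Real.exp v - 1 : ℝ) : ℂ) := by
    push_cast [Complex.ofReal_exp]; ring
  rw [h1, Complex.norm_real, Complex.norm_real] at h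
  exact h

lemma abs_log_le_of_ge {x m : ℝ} (hm : 0 < m) (hm1 : m ≤ 1) (hx : m ≤ x) :
    |Real.log x| ≤ m⁻¹ * |x - 1| := by
  have hx0 : 0 < x := lt_of_lt_of_le hm hx
  have hmi : (1:ℝ) ≤ m⁻¹ := one_le_inv_iff₀.2 ⟨hm, hm1⟩
  rcases le_or_gt 1 x with h1 | h1
  · rw [_root_.abs_of_nonneg (Real.log_nonneg h1), _root_.abs_of_nonneg (by linarith)]
    nlinarith [Real.log_le_sub_one_of_pos hx0]
  · rw [abs_of_nonpos (Real.log_nonpos (le_of_lt hx0) (le_of_lt h1)),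
      abs_of_nonpos (by linarith)]
    have h2 : Real.log x⁻¹ ≤ x⁻¹ - 1 := Real.log_le_sub_one_of_pos (inv_pos.2 hx0)
    rw [Real.log_inv] at h2
    have h3 : x⁻¹ ≤ m⁻¹ := by gcongr
    have h5 : x⁻¹ - 1 = x⁻¹ * (1 - x) := by field_simp
    nlinarith [inv_pos.2 hx0, inv_pos.2 hm]

lemma norm_clog_sub_clog_le {x y : ℂ} {r : ℝ} (hr : 0 < r)
    (hx : r ≤ x.re) (hy : r ≤ y.re) :
    ‖Complex.log x - Complex.log y‖ ≤ ‖x - y‖ / r := by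
  set g : ℝ → ℂ := fun t => y + (t:ℂ) * (x - y) with hg
  have hre : ∀ t ∈ Set.Icc (0:ℝ) 1, r ≤ (g t).re := by
    intro t ht
    have : (g t).re = (1 - t) * y.re + t * x.re := by
      simp [hg, Complex.add_re, Complex.mul_re, Complex.sub_re]; ring
    rw [this]
    calc r = (1 - t) * r + t * r := by ring
      _ ≤ (1 - t) * y.re + t * x.re := by
          apply add_le_add
          · apply mul_le_mul_of_nonneg_left hy (by linarith [ht.2])
          · apply mul_le_mul_of_nonneg_left hx ht.1
  have hder : ∀ t ∈ Set.Icc (0:ℝ) 1,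
      HasDerivWithinAt (fun t : ℝ => Complex.log (g t)) ((x - y) / g t)
        (Set.Icc (0:ℝ) 1) t := by
    intro t ht
    have h1 : HasDerivAt g (x - y) t := by
      simpa [hg] using ((Complex.ofRealCLM.hasDerivAt (x := t)).mul_const (x - y)).const_add y
    have h2 : g t ∈ Complex.slitPlane := Or.inl (lt_of_lt_of_le hr (hre t ht))
    exact (h1.clog_real h2).hasDerivWithinAt
  have hbound : ∀ t ∈ Set.Icc (0:ℝ) 1, ‖(x - y) / g t‖ ≤ ‖x - y‖ / r := by
    intro t ht
    rw [norm_div]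
    apply div_le_div_of_nonneg_left (norm_nonneg _) hr
    calc r ≤ (g t).re := hre t ht
      _ ≤ ‖g t‖ := by exact Complex.re_le_norm _
  have := (convex_Icc (0:ℝ) 1).norm_image_sub_le_of_norm_hasDerivWithin_le
    hder hbound (Set.left_mem_Icc.2 zero_le_one) (Set.right_mem_Icc.2 zero_le_one)
  have h0 : g 0 = y := by simp [hg]
  have h1 : g 1 = x := by simp [hg]
  simpa [h0, h1] using this

lemma bergman_dist_bound {z₀ z : ℂ} {η : ℝ} (hz₀ : ‖z₀‖ < 1) (hz : ‖z‖ < 1)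
    (hη : 0 < η) (hη1 : η ≤ 1) (hbd : bdist z₀ z < η) :
    ‖z₀ - z‖ ≤ 3 * η * (1 - ‖z₀‖ ^ 2) ∧ ‖z₀ - z‖ ≤ 3 * η * (1 - ‖z‖ ^ 2) := by
  have hq : ∀ u : ℂ, ‖u‖ ^ 2 = Complex.normSq u := fun u => by
    rw [← Complex.sq_norm]
  rw [bdist] at hbd
  set D : ℂ := 1 - (starRingEnd ℂ) z₀ * z with hD
  have hid : Complex.normSq D = Complex.normSq (z₀ - z)
      + (1 - Complex.normSq z₀) * (1 - Complex.normSq z) := by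
    simp only [hD, Complex.normSq_apply, Complex.mul_re, Complex.mul_im, Complex.sub_re,
      Complex.sub_im, Complex.one_re, Complex.one_im, Complex.conj_re, Complex.conj_im]
    ring
  have hs₀ : 0 < 1 - ‖z₀‖ ^ 2 := by nlinarith [norm_nonneg z₀]
  have hs : 0 < 1 - ‖z‖ ^ 2 := by nlinarith [norm_nonneg z]
  have hlt : ‖z₀ - z‖ ^ 2 < ‖D‖ ^ 2 := by
    rw [hq, hq, hid]
    nlinarith [hq z₀, hq z, hq (z₀ - z)]
  have hDpos : 0 < ‖D‖ := by
    rcases (norm_nonneg D).lt_or_eq with h | h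
    · exact h
    · exfalso; nlinarith [norm_nonneg (z₀ - z)]
  set ρ : ℝ := ‖moebius z₀ z‖ with hρ
  have hρ_eq : ρ = ‖z₀ - z‖ / ‖D‖ := by rw [hρ, moebius, norm_div]
  have hρ0 : 0 ≤ ρ := norm_nonneg _
  have hρ1 : ρ < 1 := by
    rw [hρ_eq, div_lt_one hDpos]
    nlinarith [norm_nonneg (z₀ - z), norm_nonneg D]
  have hquot_pos : 0 < (1 + ρ) / (1 - ρ) := div_pos (by linarith) (by linarith)
  have hexp : (1 + ρ) / (1 - ρ) < Real.exp η := by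
    have h := Real.exp_lt_exp.2 hbd
    rwa [Real.exp_log hquot_pos] at h
  set E : ℝ := Real.exp η with hE
  have hEpos : 0 < E := Real.exp_pos η
  have hE1 : (1 - η) * E ≤ 1 := by
    have h1 : 1 - η ≤ Real.exp (-η) := by linarith [Real.add_one_le_exp (-η)]
    have h2 : Real.exp (-η) = E⁻¹ := by rw [hE, Real.exp_neg]
    rw [h2] at h1
    calc (1 - η) * E ≤ E⁻¹ * E := by nlinarith
      _ = 1 := inv_mul_cancel₀ (ne_of_gt hEpos)
  have hE3 : E ≤ 3 := by
    calc E ≤ Real.exp 1 := Real.exp_le_exp.2 hη1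
      _ ≤ 3 := by linarith [Real.exp_one_lt_d9.le]
  have hkey : (1 + ρ) < E * (1 - ρ) := by
    rwa [div_lt_iff₀ (by linarith)] at hexp
  have hρhalf : ρ ≤ 1 / 2 := by nlinarith
  have hρη : ρ ≤ 3 / 2 * η := by nlinarith
  have hnum : ‖z₀ - z‖ = ρ * ‖D‖ := by
    rw [hρ_eq, div_mul_cancel₀ _ (ne_of_gt hDpos)]
  have hcz₀ : (starRingEnd ℂ) z₀ * z₀ = ((‖z₀‖ ^ 2 : ℝ) : ℂ) := by
    rw [mul_comm, Complex.mul_conj, hq]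
  have hcz : (starRingEnd ℂ) z * z = ((‖z‖ ^ 2 : ℝ) : ℂ) := by
    rw [mul_comm, Complex.mul_conj, hq]
  have hDle₀ : ‖D‖ ≤ (1 - ‖z₀‖ ^ 2) + ‖z₀ - z‖ := by
    have hdec : D = ((1 - ‖z₀‖ ^ 2 : ℝ) : ℂ) + (starRingEnd ℂ) z₀ * (z₀ - z) := by
      rw [hD, Complex.ofReal_sub, Complex.ofReal_one, ← hcz₀]; ring
    calc ‖D‖ ≤ ‖((1 - ‖z₀‖ ^ 2 : ℝ) : ℂ)‖ + ‖(starRingEnd ℂ) z₀ * (z₀ - z)‖ := by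
          rw [hdec]; exact norm_add_le _ _
      _ ≤ (1 - ‖z₀‖ ^ 2) + ‖z₀ - z‖ := by
          apply add_le_add
          · rw [Complex.norm_real, Real.norm_eq_abs, _root_.abs_of_nonneg hs₀.le]
          · rw [norm_mul, RCLike.norm_conj]
            exact mul_le_of_le_one_left (norm_nonneg _) hz₀.le
  have hDconj : ‖D‖ = ‖1 - (starRingEnd ℂ) z * z₀‖ := by
    have h : (starRingEnd ℂ) D = 1 - (starRingEnd ℂ) z * z₀ := by
      rw [hD, map_sub, map_one, map_mul, Complex.conj_conj, mul_comm]
    rw [← h, RCLike.norm_conj]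
  have hDle : ‖D‖ ≤ (1 - ‖z‖ ^ 2) + ‖z₀ - z‖ := by
    have hdec : (1 : ℂ) - (starRingEnd ℂ) z * z₀ =
        ((1 - ‖z‖ ^ 2 : ℝ) : ℂ) + (starRingEnd ℂ) z * (z - z₀) := by
      rw [Complex.ofReal_sub, Complex.ofReal_one, ← hcz]; ring
    rw [hDconj]
    calc ‖(1 : ℂ) - (starRingEnd ℂ) z * z₀‖
        ≤ ‖((1 - ‖z‖ ^ 2 : ℝ) : ℂ)‖ + ‖(starRingEnd ℂ) z * (z - z₀)‖ := by
          rw [hdec]; exact norm_add_le _ _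
      _ ≤ (1 - ‖z‖ ^ 2) + ‖z₀ - z‖ := by
          apply add_le_add
          · rw [Complex.norm_real, Real.norm_eq_abs, _root_.abs_of_nonneg hs.le]
          · rw [norm_mul, RCLike.norm_conj, norm_sub_rev z z₀]
            exact mul_le_of_le_one_left (norm_nonneg _) hz.le
  have key : ∀ s : ℝ, 0 ≤ s → ‖D‖ ≤ s + ‖z₀ - z‖ → ‖z₀ - z‖ ≤ 3 * η * s := by
    intro s hs' hDs
    have h1 : ‖z₀ - z‖ ≤ ρ * s + ρ * ‖z₀ - z‖ := by
      calc ‖z₀ - z‖ = ρ * ‖D‖ := hnum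
        _ ≤ ρ * (s + ‖z₀ - z‖) := mul_le_mul_of_nonneg_left hDs hρ0
        _ = ρ * s + ρ * ‖z₀ - z‖ := by ring
    have h2 : ρ * ‖z₀ - z‖ ≤ (1 / 2) * ‖z₀ - z‖ :=
      mul_le_mul_of_nonneg_right hρhalf (norm_nonneg _)
    have h3 : ρ * s ≤ (3 / 2 * η) * s := mul_le_mul_of_nonneg_right hρη hs'
    linarith
  exact ⟨key _ hs₀.le hDle₀, key _ hs.le hDle⟩

set_option maxHeartbeats 1000000 in
theorem stmt13 (b : ℝ) (hb : 0 < b) :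
    ∃ C : ℝ, 0 < C ∧
      ∀ z₀ ∈ Metric.ball (0:ℂ) 1, ∀ η : ℝ, 0 < η → η ≤ 1 →
      ∀ w ∈ Metric.ball (0:ℂ) 1, ∀ z ∈ bball z₀ η,
        ‖kernK b w z - kernK b w z₀‖ ≤ C * η * ‖kernK b w z‖ := by
  have hb1 : (0:ℝ) < b + 1 := by linarith
  set c₁ : ℝ := 42 * |b - 1| * Real.exp (42 * |b - 1|) with hc₁def
  set c₂ : ℝ := 6 * (b + 1) * Real.exp (6 * (b + 1)) with hc₂def
  have hc₁ : 0 ≤ c₁ := by positivity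
  have hc₂ : 0 < c₂ := mul_pos (by linarith) (Real.exp_pos _)
  refine ⟨c₁ * (1 + c₂) + c₂ + 1, by nlinarith, ?_⟩
  intro z₀ hz₀ η hη hη1 w hw z hzmem
  obtain ⟨hzb, hbd⟩ := hzmem
  rw [Metric.mem_ball, dist_zero_right] at hz₀ hw hzb
  obtain ⟨hd₀, hd⟩ := bergman_dist_bound hz₀ hzb hη hη1 hbd
  have ha0 : (0:ℝ) ≤ ‖z‖ := norm_nonneg z
  have ha00 : (0:ℝ) ≤ ‖z₀‖ := norm_nonneg z₀
  set s : ℝ := 1 - ‖z‖ ^ 2 with hsdef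
  set s₀ : ℝ := 1 - ‖z₀‖ ^ 2 with hs₀def
  have hs : 0 < s := by rw [hsdef]; nlinarith
  have hs₀ : 0 < s₀ := by rw [hs₀def]; nlinarith
  set x : ℂ := 1 - (starRingEnd ℂ) z * w with hxdef
  set y : ℂ := 1 - (starRingEnd ℂ) z₀ * w with hydef
  -- real parts bounded below
  have hre : ∀ u : ℂ, ‖u‖ < 1 → 1 - ‖u‖ ≤ (1 - (starRingEnd ℂ) u * w).re := by
    intro u hu
    have h1 : ((starRingEnd ℂ) u * w).re ≤ ‖u‖ := by
      calc ((starRingEnd ℂ) u * w).re ≤ ‖(starRingEnd ℂ) u * w‖ := by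
            exact Complex.re_le_norm _
        _ = ‖u‖ * ‖w‖ := by rw [norm_mul, RCLike.norm_conj]
        _ ≤ ‖u‖ := mul_le_of_le_one_right (norm_nonneg u) hw.le
    have : (1 - (starRingEnd ℂ) u * w).re = 1 - ((starRingEnd ℂ) u * w).re := by
      simp [Complex.sub_re]
    rw [this]; linarith
  have hxre : 1 - ‖z‖ ≤ x.re := hre z hzb
  have hyre : 1 - ‖z₀‖ ≤ y.re := hre z₀ hz₀
  set r : ℝ := min (1 - ‖z‖) (1 - ‖z₀‖) with hrdef
  have hr : 0 < r := lt_min (by linarith) (by linarith)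
  have hxre' : r ≤ x.re := le_trans (min_le_left _ _) hxre
  have hyre' : r ≤ y.re := le_trans (min_le_right _ _) hyre
  -- ‖x - y‖ ≤ 6 η r
  have hxy : ‖x - y‖ ≤ 6 * η * r := by
    have h1 : x - y = ((starRingEnd ℂ) z₀ - (starRingEnd ℂ) z) * w := by
      rw [hxdef, hydef]; ring
    have h2 : ‖x - y‖ ≤ ‖z₀ - z‖ := by
      rw [h1, norm_mul, ← map_sub, RCLike.norm_conj]
      exact mul_le_of_le_one_right (norm_nonneg _) hw.le
    have h3 : ‖z₀ - z‖ ≤ 6 * η * (1 - ‖z₀‖) := by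
      have : 3 * η * s₀ ≤ 6 * η * (1 - ‖z₀‖) := by
        rw [hs₀def]; nlinarith [mul_nonneg hη.le (sq_nonneg (1 - ‖z₀‖))]
      linarith
    have h4 : ‖z₀ - z‖ ≤ 6 * η * (1 - ‖z‖) := by
      have : 3 * η * s ≤ 6 * η * (1 - ‖z‖) := by
        rw [hsdef]; nlinarith [mul_nonneg hη.le (sq_nonneg (1 - ‖z‖))]
      linarith
    rcases min_cases (1 - ‖z‖) (1 - ‖z₀‖) with ⟨hmin, _⟩ | ⟨hmin, _⟩ <;>
      rw [hrdef, hmin] <;> linarith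
  have hlog : ‖Complex.log x - Complex.log y‖ ≤ 6 * η := by
    calc ‖Complex.log x - Complex.log y‖ ≤ ‖x - y‖ / r := norm_clog_sub_clog_le hr hxre' hyre'
      _ ≤ 6 * η := by rw [div_le_iff₀ hr]; linarith
  -- the complex exponent factor Y
  set u : ℂ := ((b:ℂ) + 1) * (Complex.log x - Complex.log y) with hudef
  have hu : ‖u‖ ≤ 6 * (b + 1) * η := by
    have hc : ‖((b:ℂ) + 1)‖ = b + 1 := by
      have : ((b:ℂ) + 1) = ((b + 1 : ℝ) : ℂ) := by push_cast; ring
      rw [this, Complex.norm_real, Real.norm_eq_abs, _root_.abs_of_pos hb1]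
    rw [hudef, norm_mul, hc]
    calc (b + 1) * ‖Complex.log x - Complex.log y‖ ≤ (b + 1) * (6 * η) :=
          mul_le_mul_of_nonneg_left hlog hb1.le
      _ = 6 * (b + 1) * η := by ring
  have hu1 : ‖u‖ ≤ 6 * (b + 1) := by nlinarith
  set Y : ℂ := Complex.exp u with hYdef
  have hY1 : ‖Y - 1‖ ≤ c₂ * η := by
    calc ‖Y - 1‖ ≤ ‖u‖ * Real.exp ‖u‖ := norm_cexp_sub_one_le u
      _ ≤ (6 * (b + 1) * η) * Real.exp (6 * (b + 1)) := by
          apply mul_le_mul hu (Real.exp_le_exp.2 hu1) (Real.exp_pos _).le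
          positivity
      _ = c₂ * η := by rw [hc₂def]; ring
  have hYnorm : ‖Y‖ ≤ 1 + c₂ := by
    calc ‖Y‖ ≤ ‖Y - 1‖ + ‖(1:ℂ)‖ := by
          have := norm_add_le (Y - 1) (1:ℂ); simpa using this
      _ ≤ 1 + c₂ := by
          have : c₂ * η ≤ c₂ * 1 := mul_le_mul_of_nonneg_left hη1 hc₂.le
          simp only [norm_one]
          linarith
  -- the real ratio factor X
  set A : ℝ := s₀ / s with hAdef
  have hApos : 0 < A := div_pos hs₀ hs
  have habs : |s₀ - s| ≤ 2 * ‖z₀ - z‖ := by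
    have h1 : s₀ - s = (‖z‖ - ‖z₀‖) * (‖z‖ + ‖z₀‖) := by rw [hsdef, hs₀def]; ring
    rw [h1, abs_mul, _root_.abs_of_nonneg (by linarith : (0:ℝ) ≤ ‖z‖ + ‖z₀‖)]
    have h2 : |‖z‖ - ‖z₀‖| ≤ ‖z₀ - z‖ := by
      rw [← norm_sub_rev]; exact abs_norm_sub_norm_le z z₀
    calc |‖z‖ - ‖z₀‖| * (‖z‖ + ‖z₀‖) ≤ ‖z₀ - z‖ * 2 :=
          mul_le_mul h2 (by linarith) (by linarith) (norm_nonneg _)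
      _ = 2 * ‖z₀ - z‖ := by ring
  have hA1 : |A - 1| ≤ 6 * η := by
    have h1 : A - 1 = (s₀ - s) / s := by rw [hAdef]; field_simp
    rw [h1, abs_div, _root_.abs_of_pos hs, div_le_iff₀ hs]
    calc |s₀ - s| ≤ 2 * ‖z₀ - z‖ := habs
      _ ≤ 2 * (3 * η * s) := by linarith
      _ = 6 * η * s := by ring
  have hA7 : (7:ℝ)⁻¹ ≤ A := by
    have h2 : s - s₀ ≤ 2 * ‖z₀ - z‖ := by
      have := abs_le.1 habs; linarith [neg_abs_le (s₀ - s)]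
    have h2c : η * s₀ ≤ s₀ := mul_le_of_le_one_left hs₀.le hη1
    have h3 : s ≤ 7 * s₀ := by linarith [hd₀]
    rw [hAdef, le_div_iff₀ hs]
    linarith
  have hAlog : |Real.log A| ≤ 42 * η := by
    calc |Real.log A| ≤ ((7:ℝ)⁻¹)⁻¹ * |A - 1| :=
          abs_log_le_of_ge (by norm_num) (by norm_num) hA7
      _ = 7 * |A - 1| := by norm_num
      _ ≤ 42 * η := by linarith
  set X : ℝ := A ^ (b - 1) with hXdef
  have hX1 : |X - 1| ≤ c₁ * η := by
    have hv : X = Real.exp (Real.log A * (b - 1)) := by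
      rw [hXdef, Real.rpow_def_of_pos hApos]
    have h1 : |Real.log A * (b - 1)| ≤ 42 * η * |b - 1| := by
      rw [abs_mul]
      exact mul_le_mul_of_nonneg_right hAlog (abs_nonneg _)
    have h2 : |Real.log A * (b - 1)| ≤ 42 * |b - 1| := by nlinarith [abs_nonneg (b-1)]
    calc |X - 1| = |Real.exp (Real.log A * (b - 1)) - 1| := by rw [hv]
      _ ≤ |Real.log A * (b - 1)| * Real.exp |Real.log A * (b - 1)| :=
          abs_rexp_sub_one_le _
      _ ≤ (42 * η * |b - 1|) * Real.exp (42 * |b - 1|) := by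
          apply mul_le_mul h1 (Real.exp_le_exp.2 h2) (Real.exp_pos _).le
          positivity
      _ = c₁ * η := by rw [hc₁def]; ring
  -- the key identity
  have hx0 : x ≠ 0 := by
    intro h
    have h2 : (0:ℝ) < x.re := lt_of_lt_of_le hr hxre'
    rw [h] at h2
    simp at h2
  have hy0 : y ≠ 0 := by
    intro h
    have h2 : (0:ℝ) < y.re := lt_of_lt_of_le hr hyre'
    rw [h] at h2
    simp at h2
  have hident : kernK b w z₀ = kernK b w z * ((X:ℂ) * Y) := by
    have hP : ((s ^ (b - 1) : ℝ) : ℂ) ≠ 0 := by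
      exact_mod_cast (Real.rpow_pos_of_pos hs _).ne'
    have hEx : Complex.exp (Complex.log x * ((b:ℂ) + 1)) ≠ 0 := Complex.exp_ne_zero _
    have hEy : Complex.exp (Complex.log y * ((b:ℂ) + 1)) ≠ 0 := Complex.exp_ne_zero _
    have hXC : (X:ℂ) = ((s₀ ^ (b - 1) : ℝ) : ℂ) / ((s ^ (b - 1) : ℝ) : ℂ) := by
      rw [hXdef, hAdef, Real.div_rpow hs₀.le hs.le]
      push_cast
      ring
    have hYC : Y = Complex.exp (Complex.log x * ((b:ℂ) + 1)) /
        Complex.exp (Complex.log y * ((b:ℂ) + 1)) := by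
      rw [hYdef, hudef, ← Complex.exp_sub]
      congr 1
      ring
    have hkz : kernK b w z = ((s ^ (b - 1) : ℝ) : ℂ) /
        Complex.exp (Complex.log x * ((b:ℂ) + 1)) := by
      rw [kernK, Complex.cpow_def_of_ne_zero hx0]
    have hkz₀ : kernK b w z₀ = ((s₀ ^ (b - 1) : ℝ) : ℂ) /
        Complex.exp (Complex.log y * ((b:ℂ) + 1)) := by
      rw [kernK, Complex.cpow_def_of_ne_zero hy0]
    rw [hkz, hkz₀, hXC, hYC]
    field_simp
  -- final estimate
  have hsplit : kernK b w z - kernK b w z₀ =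
      kernK b w z * ((1 - (X:ℂ)) * Y + (1 - Y)) := by
    rw [hident]; ring
  have hnormX : ‖(1:ℂ) - (X:ℂ)‖ = |X - 1| := by
    have : (1:ℂ) - (X:ℂ) = ((1 - X : ℝ) : ℂ) := by push_cast; ring
    rw [this, Complex.norm_real, Real.norm_eq_abs, abs_sub_comm]
  have hfact : ‖(1 - (X:ℂ)) * Y + (1 - Y)‖ ≤ (c₁ * (1 + c₂) + c₂) * η := by
    calc ‖(1 - (X:ℂ)) * Y + (1 - Y)‖ ≤ ‖(1 - (X:ℂ)) * Y‖ + ‖(1:ℂ) - Y‖ := norm_add_le _ _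
      _ = ‖(1:ℂ) - (X:ℂ)‖ * ‖Y‖ + ‖Y - 1‖ := by rw [norm_mul, norm_sub_rev (1:ℂ) Y]
      _ ≤ (c₁ * η) * (1 + c₂) + c₂ * η := by
          apply add_le_add _ hY1
          rw [hnormX]
          apply mul_le_mul hX1 hYnorm (norm_nonneg _)
          positivity
      _ = (c₁ * (1 + c₂) + c₂) * η := by ring
  calc ‖kernK b w z - kernK b w z₀‖
      = ‖kernK b w z‖ * ‖(1 - (X:ℂ)) * Y + (1 - Y)‖ := by rw [hsplit, norm_mul]
    _ ≤ ‖kernK b w z‖ * ((c₁ * (1 + c₂) + c₂) * η) :=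
        mul_le_mul_of_nonneg_left hfact (norm_nonneg _)
    _ ≤ (c₁ * (1 + c₂) + c₂ + 1) * η * ‖kernK b w z‖ := by nlinarith [norm_nonneg (kernK b w z)]
end
end

section
/- Let μ be a finite positive Borel measure on the unit circle ∂𝔻, let 0 < η < 1, and let {z_j}_{j=1}^∞ ⊂ 𝔻 be an η-separated sequence. There exists a constant C > 0, depending only on η, such that for every analytic function f on 𝔻 with ∫_𝔻 |f'(z)|² P_μ(z) dA(z) < ∞, one has Σ_{j=1}^∞ (1−|z_j|)² |f'(z_j)|² P_μ(z_j) ≤ C ∫_𝔻 |f'(z)|² P_μ(z) dA(z). -/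
open MeasureTheory

noncomputable section

namespace Stmt15Aux

open Metric Set

lemma moebius_lb {η : ℝ} (hη0 : 0 < η) (hη1 : η < 1) {z w : ℂ}
    (h : η ≤ bdist z w) : η / 4 ≤ ‖moebius z w‖ := by
  by_contra hlt
  push_neg at hlt
  set ρ := ‖moebius z w‖ with hρ
  have hρ0 : 0 ≤ ρ := norm_nonneg _
  have hρ14 : ρ < 1 / 4 := by linarith
  have hpos : 0 < (1 + ρ) / (1 - ρ) := by
    apply div_pos <;> linarith
  have hlog : bdist z w ≤ (1 + ρ) / (1 - ρ) - 1 := Real.log_le_sub_one_of_pos hpos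
  have heq : (1 + ρ) / (1 - ρ) - 1 = 2 * ρ / (1 - ρ) := by
    rw [div_sub_one (by linarith : (1:ℝ) - ρ ≠ 0)]
    congr 1
    ring
  have hfinal : 2 * ρ / (1 - ρ) < η := by
    rw [div_lt_iff₀ (by linarith)]
    nlinarith [mul_lt_mul_of_pos_left hρ14 hη0]
  rw [heq] at hlog
  linarith [h.trans hlog]

lemma dist_lb {z w : ℂ} (hz : ‖z‖ < 1) (hw : ‖w‖ < 1) {δ : ℝ} (hδ : 0 < δ)
    (h : δ ≤ ‖moebius z w‖) :
    δ / 2 * ((1 - ‖z‖) + (1 - ‖w‖)) ≤ dist z w := by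
  set d : ℂ := 1 - (starRingEnd ℂ) z * w with hd
  have h0 : d ≠ 0 := by
    intro h0
    have : moebius z w = 0 := by
      rw [moebius, ← hd, h0, div_zero]
    rw [this, norm_zero] at h
    linarith
  have hzw : ‖moebius z w‖ * ‖d‖ = ‖z - w‖ := by
    rw [moebius, ← hd, norm_div, div_mul_cancel₀ _ (norm_ne_zero_iff.2 h0)]
  have hnorm : 1 - ‖z‖ * ‖w‖ ≤ ‖d‖ := by
    have h1 := norm_sub_norm_le (1 : ℂ) ((starRingEnd ℂ) z * w)
    rw [norm_one, norm_mul] at h1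
    simpa using h1
  have h2 : (1 - ‖z‖) + (1 - ‖w‖) ≤ 2 * ‖d‖ := by
    nlinarith [mul_nonneg (norm_nonneg z) (by linarith : (0:ℝ) ≤ 1 - ‖w‖),
      mul_nonneg (norm_nonneg w) (by linarith : (0:ℝ) ≤ 1 - ‖z‖)]
  rw [dist_eq_norm]
  calc δ / 2 * ((1 - ‖z‖) + (1 - ‖w‖)) ≤ δ / 2 * (2 * ‖d‖) := by
        apply mul_le_mul_of_nonneg_left h2 (by linarith)
    _ = δ * ‖d‖ := by ring
    _ ≤ ‖moebius z w‖ * ‖d‖ := mul_le_mul_of_nonneg_right h (norm_nonneg _)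
    _ = ‖z - w‖ := hzw

lemma poissonInt_nonneg (μ : Measure ℂ) {z : ℂ} (hz : ‖z‖ ≤ 1) : 0 ≤ poissonInt μ z := by
  rw [poissonInt]
  refine mul_nonneg (by positivity) (integral_nonneg fun ζ => ?_)
  have h1 : 0 ≤ 1 - ‖z‖ ^ 2 := by nlinarith [norm_nonneg z]
  positivity

lemma kernel_meas (z : ℂ) : Measurable fun ζ : ℂ => (1 - ‖z‖ ^ 2) / ‖ζ - z‖ ^ 2 :=
  measurable_const.div (((measurable_id.sub measurable_const).norm).pow_const 2)

lemma ae_sphere (μ : Measure ℂ) (hμ0 : μ ((sphere (0:ℂ) 1)ᶜ) = 0) :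
    ∀ᵐ ζ ∂μ, ‖ζ‖ = 1 := by
  rw [ae_iff]
  refine measure_mono_null ?_ hμ0
  intro ζ hζ
  simp only [mem_compl_iff, mem_sphere_iff_norm, sub_zero]
  exact hζ

lemma kernel_int (μ : Measure ℂ) [IsFiniteMeasure μ] (hμ0 : μ ((sphere (0:ℂ) 1)ᶜ) = 0)
    {z : ℂ} (hz : ‖z‖ < 1) :
    Integrable (fun ζ => (1 - ‖z‖ ^ 2) / ‖ζ - z‖ ^ 2) μ := by
  refine (integrable_const ((1 - ‖z‖ ^ 2) / (1 - ‖z‖) ^ 2)).mono'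
    (kernel_meas z).aestronglyMeasurable ?_
  filter_upwards [ae_sphere μ hμ0] with ζ hζ
  have h1 : 1 - ‖z‖ ≤ ‖ζ - z‖ := by
    have h2 := norm_sub_norm_le ζ z
    rw [hζ] at h2
    linarith
  have h2 : 0 ≤ 1 - ‖z‖ ^ 2 := by nlinarith [norm_nonneg z]
  have h3 : 0 < 1 - ‖z‖ := by linarith
  have h4 : (1 - ‖z‖) ^ 2 ≤ ‖ζ - z‖ ^ 2 := by nlinarith
  rw [Real.norm_eq_abs, abs_of_nonneg (div_nonneg h2 (by positivity))]
  exact div_le_div_of_nonneg_left h2 (by positivity) h4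

lemma kernel_harnack {c : ℝ} (hc0 : 0 < c) (hc1 : c < 1) {z w ζ : ℂ}
    (hz : ‖z‖ < 1) (hw : dist w z < c * (1 - ‖z‖)) (hζ : ‖ζ‖ = 1) :
    (1 - c) / (2 * (1 + c) ^ 2) * ((1 - ‖z‖ ^ 2) / ‖ζ - z‖ ^ 2)
      ≤ (1 - ‖w‖ ^ 2) / ‖ζ - w‖ ^ 2 := by
  have ha0 : 0 ≤ ‖z‖ := norm_nonneg _
  have hb0 : 0 ≤ ‖w‖ := norm_nonneg _
  have hρ : ‖w - z‖ < c * (1 - ‖z‖) := by rwa [dist_eq_norm] at hw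
  have hρ0 : 0 ≤ ‖w - z‖ := norm_nonneg _
  have hba : ‖w‖ - ‖z‖ ≤ ‖w - z‖ := norm_sub_norm_le w z
  have hb1 : ‖w‖ < 1 := by nlinarith
  have hdz : 1 - ‖z‖ ≤ ‖ζ - z‖ := by
    have h2 := norm_sub_norm_le ζ z
    rw [hζ] at h2
    linarith
  have hdz0 : 0 < ‖ζ - z‖ := by linarith
  have hew0 : 0 < ‖ζ - w‖ := by
    have h2 := norm_sub_norm_le ζ w
    rw [hζ] at h2
    linarith
  have h1 : ‖ζ - w‖ ≤ ‖ζ - z‖ + ‖w - z‖ := by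
    have heq : ζ - w = (ζ - z) + (z - w) := by ring
    rw [heq]
    calc ‖(ζ - z) + (z - w)‖ ≤ ‖ζ - z‖ + ‖z - w‖ := norm_add_le _ _
      _ = ‖ζ - z‖ + ‖w - z‖ := by rw [norm_sub_rev z w]
  have hew : ‖ζ - w‖ ≤ (1 + c) * ‖ζ - z‖ := by nlinarith
  have hnum : (1 - c) * (1 - ‖z‖) ≤ 1 - ‖w‖ ^ 2 := by nlinarith
  have h1a2 : 1 - ‖z‖ ^ 2 ≤ 2 * (1 - ‖z‖) := by nlinarith
  have hesq : ‖ζ - w‖ ^ 2 ≤ (1 + c) ^ 2 * ‖ζ - z‖ ^ 2 := by nlinarith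
  have m1 : (1 - ‖z‖ ^ 2) * ‖ζ - w‖ ^ 2 ≤ (2 * (1 - ‖z‖)) * ((1 + c) ^ 2 * ‖ζ - z‖ ^ 2) :=
    mul_le_mul h1a2 hesq (sq_nonneg _) (by nlinarith)
  have m2 : (1 - c) * ((1 - ‖z‖ ^ 2) * ‖ζ - w‖ ^ 2)
      ≤ (1 - c) * ((2 * (1 - ‖z‖)) * ((1 + c) ^ 2 * ‖ζ - z‖ ^ 2)) :=
    mul_le_mul_of_nonneg_left m1 (by linarith)
  have m3 : ((1 - c) * (1 - ‖z‖)) * ‖ζ - z‖ ^ 2 ≤ (1 - ‖w‖ ^ 2) * ‖ζ - z‖ ^ 2 :=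
    mul_le_mul_of_nonneg_right hnum (sq_nonneg _)
  have m4 : (2 * (1 + c) ^ 2) * (((1 - c) * (1 - ‖z‖)) * ‖ζ - z‖ ^ 2)
      ≤ (2 * (1 + c) ^ 2) * ((1 - ‖w‖ ^ 2) * ‖ζ - z‖ ^ 2) :=
    mul_le_mul_of_nonneg_left m3 (by positivity)
  have main : (1 - c) * ((1 - ‖z‖ ^ 2) * ‖ζ - w‖ ^ 2)
      ≤ (2 * (1 + c) ^ 2) * ((1 - ‖w‖ ^ 2) * ‖ζ - z‖ ^ 2) := by nlinarith [m2, m4]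
  rw [div_mul_div_comm, div_le_div_iff₀ (mul_pos (by positivity) (pow_pos hdz0 2)) (pow_pos hew0 2)]
  nlinarith [main]

lemma poisson_harnack (μ : Measure ℂ) [IsFiniteMeasure μ]
    (hμ0 : μ ((sphere (0:ℂ) 1)ᶜ) = 0) {c : ℝ} (hc0 : 0 < c) (hc1 : c < 1)
    {z w : ℂ} (hz : ‖z‖ < 1) (hw : w ∈ ball z (c * (1 - ‖z‖))) :
    (1 - c) / (2 * (1 + c) ^ 2) * poissonInt μ z ≤ poissonInt μ w := by
  have hwz : dist w z < c * (1 - ‖z‖) := mem_ball.mp hw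
  have hw1 : ‖w‖ < 1 := by
    have h1 : ‖w‖ - ‖z‖ ≤ ‖w - z‖ := norm_sub_norm_le w z
    have h2 : ‖w - z‖ < c * (1 - ‖z‖) := by rwa [dist_eq_norm] at hwz
    nlinarith
  rw [poissonInt, poissonInt, ← mul_assoc,
    mul_comm ((1 - c) / (2 * (1 + c) ^ 2)) (2 * Real.pi)⁻¹, mul_assoc]
  refine mul_le_mul_of_nonneg_left ?_ (by positivity)
  rw [← integral_const_mul]
  refine integral_mono_ae ((kernel_int μ hμ0 hz).const_mul _) (kernel_int μ hμ0 hw1) ?_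
  filter_upwards [ae_sphere μ hμ0] with ζ hζ
  exact kernel_harnack hc0 hc1 hz hwz hζ

lemma circle_submean {F : ℂ → ℂ} {c : ℂ} {s : ℝ} (hs : 0 < s)
    (hF : ContinuousOn F (closedBall c s))
    (hd : ∀ x ∈ ball c s, DifferentiableAt ℂ F x) :
    2 * Real.pi * ‖F c‖ ≤ ∫ θ in (0:ℝ)..(2 * Real.pi), ‖F (circleMap c s θ)‖ := by
  have hcau := Complex.circleIntegral_sub_center_inv_smul_of_differentiable_on_off_countable hs
    countable_empty hF (fun x hx => hd x hx.1)
  have hnorm : ‖(2 * (Real.pi : ℂ) * Complex.I : ℂ) • F c‖ = 2 * Real.pi * ‖F c‖ := by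
    rw [norm_smul, norm_mul, norm_mul, Complex.norm_I]
    simp [Real.pi_nonneg, abs_of_nonneg]
  calc 2 * Real.pi * ‖F c‖ = ‖(∮ z in C(c, s), (z - c)⁻¹ • F z)‖ := by
        rw [hcau, hnorm]
    _ ≤ ∫ θ in (0:ℝ)..(2 * Real.pi),
          ‖deriv (circleMap c s) θ • ((circleMap c s θ - c)⁻¹ • F (circleMap c s θ))‖ := by
        rw [circleIntegral]
        exact intervalIntegral.norm_integral_le_integral_norm (by positivity)
    _ = ∫ θ in (0:ℝ)..(2 * Real.pi), ‖F (circleMap c s θ)‖ := by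
        apply intervalIntegral.integral_congr
        intro θ _
        have h2 : ‖circleMap 0 s θ‖ = s := by
          simp [norm_circleMap_zero, abs_of_pos hs]
        simp only [deriv_circleMap, circleMap_sub_center, norm_smul, norm_mul,
          norm_inv, h2, Complex.norm_I]
        field_simp

lemma area_submean {F : ℂ → ℂ} (hm : Measurable F) {c : ℂ} {r : ℝ} (hr : 0 < r)
    (hd : ∀ x ∈ closedBall c r, DifferentiableAt ℂ F x) :
    Real.pi * r ^ 2 * ‖F c‖ ≤ ∫ w in ball c r, ‖F w‖ := by
  have hFc : ContinuousOn F (closedBall c r) :=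
    fun x hx => (hd x hx).continuousAt.continuousWithinAt
  obtain ⟨M, hM⟩ := (isCompact_closedBall c r).exists_bound_of_continuousOn hFc
  have hM0 : 0 ≤ M := le_trans (norm_nonneg _) (hM c (mem_closedBall_self hr.le))
  set G : ℂ → ℝ := (ball (0:ℂ) r).indicator (fun w => ‖F (c + w)‖) with hGdef
  have hG_nonneg : ∀ u, 0 ≤ G u := by
    intro u
    rw [hGdef]
    by_cases hu : u ∈ ball (0:ℂ) r
    · rw [indicator_of_mem hu]; positivity
    · rw [indicator_of_notMem hu]
  have hG_le : ∀ u, G u ≤ M := by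
    intro u
    rw [hGdef]
    by_cases hu : u ∈ ball (0:ℂ) r
    · rw [indicator_of_mem hu]
      apply hM
      rw [mem_closedBall, dist_eq_norm, add_sub_cancel_left]
      exact (mem_ball_zero_iff.mp hu).le
    · rw [indicator_of_notMem hu]; exact hM0
  have hGmeas : Measurable G :=
    Measurable.indicator ((hm.comp (measurable_const.add measurable_id)).norm) measurableSet_ball
  have htrans : ∫ w, G w = ∫ w in ball c r, ‖F w‖ := by
    have h1 : ∀ w : ℂ, G w = (ball c r).indicator (fun u => ‖F u‖) (c + w) := by
      intro w
      rw [hGdef]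
      by_cases hw : w ∈ ball (0:ℂ) r
      · rw [indicator_of_mem hw, indicator_of_mem]
        rw [mem_ball, dist_eq_norm, add_sub_cancel_left]
        exact mem_ball_zero_iff.mp hw
      · rw [indicator_of_notMem hw, indicator_of_notMem]
        intro hcw
        apply hw
        rw [mem_ball, dist_eq_norm, add_sub_cancel_left] at hcw
        exact mem_ball_zero_iff.mpr hcw
    calc ∫ w, G w = ∫ w, (ball c r).indicator (fun u => ‖F u‖) (c + w) := by
          exact integral_congr_ae (Filter.Eventually.of_forall h1)
      _ = ∫ u, (ball c r).indicator (fun u => ‖F u‖) u :=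
          integral_add_left_eq_self _ c
      _ = ∫ w in ball c r, ‖F w‖ := integral_indicator measurableSet_ball
  set K : ℝ × ℝ → ℝ := fun p => p.1 • G (Complex.polarCoord.symm p) with hKdef
  have hpolar : (∫ p in polarCoord.target, K p) = ∫ w, G w :=
    Complex.integral_comp_polarCoord_symm G
  set S : Set (ℝ × ℝ) := Ioo (0:ℝ) r ×ˢ Ioo (-Real.pi) Real.pi with hSdef
  have hSmeas : MeasurableSet S := measurableSet_Ioo.prod measurableSet_Ioo
  have htargeteq : polarCoord.target = Ioi (0:ℝ) ×ˢ Ioo (-Real.pi) Real.pi := rfl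
  have hSsub : S ⊆ polarCoord.target := by
    rw [htargeteq, hSdef]
    exact prod_mono Ioo_subset_Ioi_self subset_rfl
  have hψcont : Continuous fun p : ℝ × ℝ => (Complex.polarCoord.symm p : ℂ) := by
    simp only [Complex.polarCoord_symm_apply]
    fun_prop
  have hKmeas : Measurable K := by
    rw [hKdef]
    exact measurable_fst.smul (hGmeas.comp hψcont.measurable)
  have hSvol : volume S < ⊤ := by
    rw [hSdef, Measure.volume_eq_prod ℝ ℝ, Measure.prod_prod]
    exact ENNReal.mul_lt_top (by simp [Real.volume_Ioo]) (by simp [Real.volume_Ioo])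
  have hKint : IntegrableOn K S := by
    refine Integrable.mono' (g := fun _ => r * M) (integrableOn_const hSvol.ne) hKmeas.aestronglyMeasurable ?_
    rw [ae_restrict_iff' hSmeas]
    refine Filter.Eventually.of_forall fun p hp => ?_
    obtain ⟨hp1, _⟩ := hp
    rw [hKdef]
    dsimp only
    rw [Real.norm_eq_abs, smul_eq_mul,
      abs_of_nonneg (mul_nonneg hp1.1.le (hG_nonneg _))]
    exact mul_le_mul hp1.2.le (hG_le _) (hG_nonneg _) hr.le
  have htarget : (∫ p in polarCoord.target, K p) = ∫ p in S, K p := by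
    have heq : EqOn K (S.indicator K) polarCoord.target := by
      intro p hp
      by_cases hpS : p ∈ S
      · rw [indicator_of_mem hpS]
      · rw [indicator_of_notMem hpS]
        rw [htargeteq] at hp
        have hp1 : 0 < p.1 := hp.1
        have hp2 : p.2 ∈ Ioo (-Real.pi) Real.pi := hp.2
        have hge : r ≤ p.1 := by
          by_contra hlt
          push_neg at hlt
          exact hpS ⟨⟨hp1, hlt⟩, hp2⟩
        have hGz : G (Complex.polarCoord.symm p) = 0 := by
          rw [hGdef]
          apply indicator_of_notMem
          rw [mem_ball_zero_iff]
          push_neg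
          rw [Complex.norm_polarCoord_symm, abs_of_pos hp1]
          exact hge
        rw [hKdef]
        dsimp only
        rw [hGz, smul_zero]
    rw [setIntegral_congr_fun (polarCoord.open_target.measurableSet) heq,
      setIntegral_indicator hSmeas, inter_eq_self_of_subset_right hSsub]
  have hfub : (∫ p in S, K p)
      = ∫ x in Ioo (0:ℝ) r, ∫ y in Ioo (-Real.pi) Real.pi, K (x, y) := by
    rw [hSdef] at hKint ⊢
    rw [Measure.volume_eq_prod ℝ ℝ] at hKint ⊢
    exact setIntegral_prod K hKint
  have hKxy : ∀ x ∈ Ioo (0:ℝ) r, ∀ y : ℝ, K (x, y) = x * ‖F (circleMap c x y)‖ := by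
    intro x hx y
    have hmem : Complex.polarCoord.symm (x, y) ∈ ball (0:ℂ) r := by
      rw [mem_ball_zero_iff, Complex.norm_polarCoord_symm]
      simpa [abs_of_pos hx.1] using hx.2
    have hcm : c + Complex.polarCoord.symm (x, y) = circleMap c x y := by
      rw [Complex.polarCoord_symm_apply, circleMap, Complex.exp_mul_I]
      simp [Complex.ofReal_cos, Complex.ofReal_sin]
    simp only [hKdef, hGdef, smul_eq_mul, indicator_of_mem hmem, hcm]
  have hinner : ∀ x ∈ Ioo (0:ℝ) r,
      2 * Real.pi * ‖F c‖ * x ≤ ∫ y in Ioo (-Real.pi) Real.pi, K (x, y) := by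
    intro x hx
    have hx0 : 0 < x := hx.1
    have hxr : x < r := hx.2
    have h2 : (∫ y in Ioo (-Real.pi) Real.pi, K (x, y))
        = x * ∫ y in Ioo (-Real.pi) Real.pi, ‖F (circleMap c x y)‖ := by
      rw [← integral_const_mul]
      exact setIntegral_congr_fun measurableSet_Ioo fun y _ => hKxy x hx y
    have hper : Function.Periodic (fun y => ‖F (circleMap c x y)‖) (2 * Real.pi) :=
      fun y => congrArg (fun u => ‖F u‖) (periodic_circleMap c x y)
    have h3 : (∫ y in Ioo (-Real.pi) Real.pi, ‖F (circleMap c x y)‖)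
        = ∫ y in (0:ℝ)..(2 * Real.pi), ‖F (circleMap c x y)‖ := by
      rw [← integral_Ioc_eq_integral_Ioo,
        ← intervalIntegral.integral_of_le (by linarith [Real.pi_pos] : -Real.pi ≤ Real.pi)]
      have hp := hper.intervalIntegral_add_eq (-Real.pi) 0
      rw [show -Real.pi + 2 * Real.pi = Real.pi by ring, zero_add] at hp
      exact hp
    have h4 : 2 * Real.pi * ‖F c‖ ≤ ∫ y in (0:ℝ)..(2 * Real.pi), ‖F (circleMap c x y)‖ := by
      apply circle_submean hx0
      · exact hFc.mono (closedBall_subset_closedBall hxr.le)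
      · intro u hu
        exact hd u ((ball_subset_closedBall.trans (closedBall_subset_closedBall hxr.le)) hu)
    rw [h2, h3]
    calc 2 * Real.pi * ‖F c‖ * x = x * (2 * Real.pi * ‖F c‖) := by ring
      _ ≤ x * ∫ y in (0:ℝ)..(2 * Real.pi), ‖F (circleMap c x y)‖ :=
        mul_le_mul_of_nonneg_left h4 hx0.le
  have houter_int : IntegrableOn
      (fun x => ∫ y in Ioo (-Real.pi) Real.pi, K (x, y)) (Ioo (0:ℝ) r) := by
    have hKint' : Integrable K
        ((volume.restrict (Ioo (0:ℝ) r)).prod (volume.restrict (Ioo (-Real.pi) Real.pi))) := by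
      rw [Measure.prod_restrict]
      rw [hSdef, Measure.volume_eq_prod ℝ ℝ] at hKint
      exact hKint
    exact hKint'.integral_prod_left
  have hconst_int : IntegrableOn (fun x => 2 * Real.pi * ‖F c‖ * x) (Ioo (0:ℝ) r) :=
    ((continuous_const.mul continuous_id).integrableOn_Icc).mono_set Ioo_subset_Icc_self
  have houter : (∫ x in Ioo (0:ℝ) r, 2 * Real.pi * ‖F c‖ * x)
      ≤ ∫ x in Ioo (0:ℝ) r, ∫ y in Ioo (-Real.pi) Real.pi, K (x, y) :=
    setIntegral_mono_on hconst_int houter_int measurableSet_Ioo hinner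
  have hval : (∫ x in Ioo (0:ℝ) r, 2 * Real.pi * ‖F c‖ * x) = Real.pi * r ^ 2 * ‖F c‖ := by
    rw [integral_const_mul, ← integral_Ioc_eq_integral_Ioo,
      ← intervalIntegral.integral_of_le hr.le, integral_id]
    ring
  linarith [htrans, hpolar, htarget, hfub, houter, hval]

end Stmt15Aux

open Metric Set Stmt15Aux

theorem stmt15 (η : ℝ) (hη0 : 0 < η) (hη1 : η < 1) :
    ∃ C : ℝ, 0 < C ∧
      ∀ μ : Measure ℂ, IsFiniteMeasure μ → μ ((Metric.sphere (0:ℂ) 1)ᶜ) = 0 →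
      ∀ z : ℕ → ℂ, (∀ j, z j ∈ Metric.ball (0:ℂ) 1) →
        (∀ j k, j ≠ k → η ≤ bdist (z j) (z k)) →
      ∀ f : ℂ → ℂ, DifferentiableOn ℂ f (Metric.ball (0:ℂ) 1) →
        (∫⁻ w in Metric.ball (0:ℂ) 1,
            ENNReal.ofReal (‖deriv f w‖ ^ 2 * poissonInt μ w)) < ⊤ →
        (∑' j, ENNReal.ofReal ((1 - ‖z j‖) ^ 2 * ‖deriv f (z j)‖ ^ 2 * poissonInt μ (z j)))
          ≤ ENNReal.ofReal C *
            ∫⁻ w in Metric.ball (0:ℂ) 1,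
              ENNReal.ofReal (‖deriv f w‖ ^ 2 * poissonInt μ w) := by
  classical
  set c : ℝ := η / 16 with hcdef
  have hc0 : 0 < c := by rw [hcdef]; positivity
  have hc1 : c < 1 := by rw [hcdef]; linarith
  set κ : ℝ := (1 - c) / (2 * (1 + c) ^ 2) with hκdef
  have hκ0 : 0 < κ := by
    rw [hκdef]
    apply div_pos (by linarith) (by positivity)
  have hπ := Real.pi_pos
  refine ⟨(κ * (Real.pi * c ^ 2))⁻¹, by positivity, ?_⟩
  intro μ hμfin hμ0 z hz hsep f hf _hfin
  have hz1 : ∀ j, ‖z j‖ < 1 := fun j => mem_ball_zero_iff.mp (hz j)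
  have hr0 : ∀ j, 0 < c * (1 - ‖z j‖) := fun j => by
    have := hz1 j
    have h1 : 0 < 1 - ‖z j‖ := by linarith
    positivity
  have hBsub : ∀ j, closedBall (z j) (c * (1 - ‖z j‖)) ⊆ ball (0:ℂ) 1 := by
    intro j w hwmem
    rw [mem_ball_zero_iff]
    rw [mem_closedBall, dist_eq_norm] at hwmem
    have h2 : ‖w‖ - ‖z j‖ ≤ ‖w - z j‖ := norm_sub_norm_le w (z j)
    have := hz1 j
    nlinarith [norm_nonneg (z j)]
  have hfa : AnalyticOnNhd ℂ f (ball (0:ℂ) 1) := hf.analyticOnNhd isOpen_ball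
  have hfd : AnalyticOnNhd ℂ (deriv f) (ball (0:ℂ) 1) := hfa.deriv
  have hFd : ∀ x ∈ ball (0:ℂ) 1, DifferentiableAt ℂ (fun w => (deriv f w) ^ 2) x := by
    intro x hx
    exact ((hfd x hx).differentiableAt).pow 2
  have hFm : Measurable fun w : ℂ => (deriv f w) ^ 2 := (measurable_deriv f).pow_const 2
  have hFnorm : ∀ w : ℂ, ‖(deriv f w) ^ 2‖ = ‖deriv f w‖ ^ 2 := fun w => norm_pow _ 2
  have key : ∀ j, ENNReal.ofReal ((1 - ‖z j‖) ^ 2 * ‖deriv f (z j)‖ ^ 2 * poissonInt μ (z j))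
      ≤ ENNReal.ofReal ((κ * (Real.pi * c ^ 2))⁻¹) *
        ∫⁻ w in ball (z j) (c * (1 - ‖z j‖)),
          ENNReal.ofReal (‖deriv f w‖ ^ 2 * poissonInt μ w) := by
    intro j
    have hzj1 := hz1 j
    have h1zj : 0 < 1 - ‖z j‖ := by linarith
    have hPj : 0 ≤ poissonInt μ (z j) := poissonInt_nonneg μ hzj1.le
    have harea : Real.pi * (c * (1 - ‖z j‖)) ^ 2 * ‖(deriv f (z j)) ^ 2‖
        ≤ ∫ w in ball (z j) (c * (1 - ‖z j‖)), ‖(deriv f w) ^ 2‖ :=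
      area_submean hFm (hr0 j) (fun x hx => hFd x (hBsub j hx))
    have hFint : IntegrableOn (fun w => ‖(deriv f w) ^ 2‖) (ball (z j) (c * (1 - ‖z j‖))) := by
      refine (ContinuousOn.integrableOn_compact (isCompact_closedBall _ _)
        ?_).mono_set ball_subset_closedBall
      exact fun x hx => ((hFd x (hBsub j hx)).continuousAt.continuousWithinAt).norm
    have hoi : ENNReal.ofReal (∫ w in ball (z j) (c * (1 - ‖z j‖)), ‖(deriv f w) ^ 2‖)
        = ∫⁻ w in ball (z j) (c * (1 - ‖z j‖)), ENNReal.ofReal ‖(deriv f w) ^ 2‖ :=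
      ofReal_integral_eq_lintegral_ofReal hFint
        (Filter.Eventually.of_forall fun w => norm_nonneg _)
    have step1 : ENNReal.ofReal (κ * poissonInt μ (z j)) *
        ENNReal.ofReal (∫ w in ball (z j) (c * (1 - ‖z j‖)), ‖(deriv f w) ^ 2‖)
        ≤ ∫⁻ w in ball (z j) (c * (1 - ‖z j‖)),
            ENNReal.ofReal (‖deriv f w‖ ^ 2 * poissonInt μ w) := by
      rw [hoi, ← lintegral_const_mul' _ _ ENNReal.ofReal_ne_top]
      refine lintegral_mono_ae ?_
      filter_upwards [ae_restrict_mem measurableSet_ball] with w hwmem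
      rw [← ENNReal.ofReal_mul (by positivity)]
      apply ENNReal.ofReal_le_ofReal
      rw [hFnorm]
      have hhar : κ * poissonInt μ (z j) ≤ poissonInt μ w := by
        rw [hκdef]
        exact poisson_harnack μ hμ0 hc0 hc1 hzj1 hwmem
      calc κ * poissonInt μ (z j) * ‖deriv f w‖ ^ 2
          ≤ poissonInt μ w * ‖deriv f w‖ ^ 2 :=
            mul_le_mul_of_nonneg_right hhar (by positivity)
        _ = ‖deriv f w‖ ^ 2 * poissonInt μ w := mul_comm _ _
    have hcomb : ENNReal.ofReal (κ * poissonInt μ (z j)) *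
        ENNReal.ofReal (Real.pi * (c * (1 - ‖z j‖)) ^ 2 * ‖(deriv f (z j)) ^ 2‖)
        ≤ ∫⁻ w in ball (z j) (c * (1 - ‖z j‖)),
            ENNReal.ofReal (‖deriv f w‖ ^ 2 * poissonInt μ w) :=
      le_trans (mul_le_mul_right (ENNReal.ofReal_le_ofReal harea) _) step1
    have hid : (κ * (Real.pi * c ^ 2))⁻¹ *
        (κ * poissonInt μ (z j) * (Real.pi * (c * (1 - ‖z j‖)) ^ 2 * ‖(deriv f (z j)) ^ 2‖))
        = (1 - ‖z j‖) ^ 2 * ‖deriv f (z j)‖ ^ 2 * poissonInt μ (z j) := by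
      rw [hFnorm]
      field_simp
    calc ENNReal.ofReal ((1 - ‖z j‖) ^ 2 * ‖deriv f (z j)‖ ^ 2 * poissonInt μ (z j))
        = ENNReal.ofReal ((κ * (Real.pi * c ^ 2))⁻¹ *
            (κ * poissonInt μ (z j) *
              (Real.pi * (c * (1 - ‖z j‖)) ^ 2 * ‖(deriv f (z j)) ^ 2‖))) := by rw [hid]
      _ = ENNReal.ofReal ((κ * (Real.pi * c ^ 2))⁻¹) *
            ENNReal.ofReal (κ * poissonInt μ (z j) *
              (Real.pi * (c * (1 - ‖z j‖)) ^ 2 * ‖(deriv f (z j)) ^ 2‖)) :=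
          ENNReal.ofReal_mul (by positivity)
      _ = ENNReal.ofReal ((κ * (Real.pi * c ^ 2))⁻¹) *
            (ENNReal.ofReal (κ * poissonInt μ (z j)) *
              ENNReal.ofReal (Real.pi * (c * (1 - ‖z j‖)) ^ 2 * ‖(deriv f (z j)) ^ 2‖)) := by
          rw [ENNReal.ofReal_mul (by positivity)]
      _ ≤ ENNReal.ofReal ((κ * (Real.pi * c ^ 2))⁻¹) *
            ∫⁻ w in ball (z j) (c * (1 - ‖z j‖)),
              ENNReal.ofReal (‖deriv f w‖ ^ 2 * poissonInt μ w) :=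
          mul_le_mul_right hcomb _
  have hdisj : Pairwise (Function.onFun Disjoint fun j => ball (z j) (c * (1 - ‖z j‖))) := by
    intro j k hjk
    apply ball_disjoint_ball
    have hm := moebius_lb hη0 hη1 (hsep j k hjk)
    have hdlb := dist_lb (hz1 j) (hz1 k) (by linarith : (0:ℝ) < η / 4) hm
    have h1 : (0:ℝ) ≤ (1 - ‖z j‖) + (1 - ‖z k‖) := by
      have := hz1 j; have := hz1 k; linarith
    calc c * (1 - ‖z j‖) + c * (1 - ‖z k‖)
        = c * ((1 - ‖z j‖) + (1 - ‖z k‖)) := by ring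
      _ ≤ η / 4 / 2 * ((1 - ‖z j‖) + (1 - ‖z k‖)) := by
          apply mul_le_mul_of_nonneg_right _ h1
          rw [hcdef]; linarith
      _ ≤ dist (z j) (z k) := hdlb
  calc (∑' j, ENNReal.ofReal ((1 - ‖z j‖) ^ 2 * ‖deriv f (z j)‖ ^ 2 * poissonInt μ (z j)))
      ≤ ∑' j, ENNReal.ofReal ((κ * (Real.pi * c ^ 2))⁻¹) *
          ∫⁻ w in ball (z j) (c * (1 - ‖z j‖)),
            ENNReal.ofReal (‖deriv f w‖ ^ 2 * poissonInt μ w) :=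
        ENNReal.tsum_le_tsum key
    _ = ENNReal.ofReal ((κ * (Real.pi * c ^ 2))⁻¹) *
          ∑' j, ∫⁻ w in ball (z j) (c * (1 - ‖z j‖)),
            ENNReal.ofReal (‖deriv f w‖ ^ 2 * poissonInt μ w) := ENNReal.tsum_mul_left
    _ = ENNReal.ofReal ((κ * (Real.pi * c ^ 2))⁻¹) *
          ∫⁻ w in ⋃ j, ball (z j) (c * (1 - ‖z j‖)),
            ENNReal.ofReal (‖deriv f w‖ ^ 2 * poissonInt μ w) := by
        rw [lintegral_iUnion (fun j => measurableSet_ball) hdisj]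
    _ ≤ ENNReal.ofReal ((κ * (Real.pi * c ^ 2))⁻¹) *
          ∫⁻ w in ball (0:ℂ) 1,
            ENNReal.ofReal (‖deriv f w‖ ^ 2 * poissonInt μ w) := by
        apply mul_le_mul_right
        refine lintegral_mono' (Measure.restrict_mono ?_ le_rfl) le_rfl
        exact iUnion_subset fun j => ball_subset_closedBall.trans (hBsub j)
end
end

section
/- Let μ be a finite positive Borel measure on the unit circle ∂𝔻 and let 0 < η < 1. There exists a constant C > 0, depending only on η, such that for every η/2-separated sequence {z_j}_{j=1}^∞ ⊂ 𝔻 (so that the Bergman balls B(z_j, η/4) are pairwise disjoint), every sequence {λ_j}_{j=1}^∞ ⊂ ℂ with Σ_j |λ_j|² P_μ(z_j) < ∞, and every sequence {c_j}_{j=1}^∞ ⊂ ℂ with |c_j| ≤ 1 for all j, one has ∫_𝔻 | Σ_{j=1}^∞ λ_j c_j (1−|z_j|²)/|B(z_j, η/4)| · χ_{B(z_j, η/4)}(z) |² P_μ(z) dA(z) ≤ C Σ_{j=1}^∞ |λ_j|² P_μ(z_j), where |B(z_j,η/4)| denotes the area of B(z_j,η/4) and χ_E the indicator function of E. -/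
open MeasureTheory

noncomputable section

lemma sq_norm_eq (x : ℂ) : ‖x‖^2 = Complex.normSq x := by
  rw [Complex.sq_norm]

lemma key_identity (z w : ℂ) :
    ‖1 - (starRingEnd ℂ) z * w‖^2 - ‖z - w‖^2 = (1 - ‖z‖^2) * (1 - ‖w‖^2) := by
  simp only [sq_norm_eq, Complex.normSq_apply, Complex.sub_re, Complex.sub_im, Complex.one_re,
    Complex.one_im, Complex.mul_re, Complex.mul_im, Complex.conj_re, Complex.conj_im]
  ring

lemma denom_pos {z w : ℂ} (hz : ‖z‖ < 1) (hw : ‖w‖ ≤ 1) :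
    0 < ‖1 - (starRingEnd ℂ) z * w‖ := by
  rw [norm_pos_iff]
  intro h
  have h1 : (starRingEnd ℂ) z * w = 1 := by linear_combination -h
  have : ‖(starRingEnd ℂ) z * w‖ < 1 := by
    rw [norm_mul, RCLike.norm_conj]
    nlinarith [norm_nonneg z, norm_nonneg w]
  rw [h1] at this; simp at this

/-- pseudohyperbolic radius corresponding to Bergman radius r -/
def sr (r : ℝ) : ℝ := (Real.exp r - 1) / (Real.exp r + 1)

lemma exp_pos1 {r : ℝ} (hr : 0 < r) : 1 < Real.exp r := by
  have := Real.add_one_le_exp r; linarith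

lemma sr_pos {r : ℝ} (hr : 0 < r) : 0 < sr r :=
  div_pos (by linarith [exp_pos1 hr]) (by linarith [Real.exp_pos r])

lemma sr_lt_one (r : ℝ) : sr r < 1 :=
  (div_lt_one (by linarith [Real.exp_pos r])).2 (by linarith)

lemma norm_sub_lt_denom {z w : ℂ} (hz : ‖z‖ < 1) (hw : ‖w‖ < 1) :
    ‖z - w‖ < ‖1 - (starRingEnd ℂ) z * w‖ := by
  have h := key_identity z w
  have hD := denom_pos hz hw.le
  have hz2 : ‖z‖^2 < 1 := by nlinarith [norm_nonneg z]
  have hw2 : ‖w‖^2 < 1 := by nlinarith [norm_nonneg w]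
  have hsq : ‖z - w‖^2 < ‖1 - (starRingEnd ℂ) z * w‖^2 := by
    nlinarith [mul_pos (by linarith : (0:ℝ) < 1-‖z‖^2) (by linarith : (0:ℝ) < 1-‖w‖^2)]
  exact lt_of_pow_lt_pow_left₀ 2 hD.le hsq

lemma bdist_lt_iff {z w : ℂ} (hz : ‖z‖ < 1) (hw : ‖w‖ < 1) {r : ℝ} (hr : 0 < r) :
    bdist z w < r ↔ ‖z - w‖ < sr r * ‖1 - (starRingEnd ℂ) z * w‖ := by
  have hD := denom_pos hz hw.le
  have hmn : ‖moebius z w‖ = ‖z - w‖ / ‖1 - (starRingEnd ℂ) z * w‖ := norm_div _ _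
  set t := ‖moebius z w‖ with ht
  have ht0 : 0 ≤ t := norm_nonneg _
  have ht1 : t < 1 := by
    rw [hmn, div_lt_one hD]; exact norm_sub_lt_denom hz hw
  have htD : t * ‖1 - (starRingEnd ℂ) z * w‖ = ‖z - w‖ := by
    rw [hmn]; exact div_mul_cancel₀ _ hD.ne'
  have hpos : 0 < (1 + t) / (1 - t) := div_pos (by linarith) (by linarith)
  have he := Real.exp_pos r
  have hsr : sr r * (Real.exp r + 1) = Real.exp r - 1 :=
    div_mul_cancel₀ _ (by linarith)
  rw [bdist, Real.log_lt_iff_lt_exp hpos, div_lt_iff₀ (by linarith)]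
  constructor
  · intro h; nlinarith
  · intro h; nlinarith

lemma ball_identity (s : ℝ) (z w : ℂ) :
    (1 - s^2*‖z‖^2) * (‖z - w‖^2 - s^2*‖1 - (starRingEnd ℂ) z * w‖^2)
    = ‖((1 - s^2*‖z‖^2 : ℝ) : ℂ) * w - ((1 - s^2 : ℝ) : ℂ) * z‖^2 - s^2*(1 - ‖z‖^2)^2 := by
  simp only [sq_norm_eq, Complex.normSq_apply, Complex.sub_re, Complex.sub_im, Complex.one_re,
    Complex.one_im, Complex.mul_re, Complex.mul_im, Complex.conj_re, Complex.conj_im,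
    Complex.ofReal_re, Complex.ofReal_im]
  ring

lemma rho_lt_imp_mem_disc {z w : ℂ} {s : ℝ} (hz : ‖z‖ < 1) (hs1 : s < 1)
    (h : ‖z - w‖ < s * ‖1 - (starRingEnd ℂ) z * w‖) : ‖w‖ < 1 := by
  have hk := key_identity z w
  have hA : 0 ≤ ‖z - w‖ := norm_nonneg _
  have hB : 0 ≤ ‖1 - (starRingEnd ℂ) z * w‖ := norm_nonneg _
  have hz2 : ‖z‖^2 < 1 := by nlinarith [norm_nonneg z]
  have hsB : 0 < s * ‖1 - (starRingEnd ℂ) z * w‖ := lt_of_le_of_lt hA h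
  have hBpos : 0 < ‖1 - (starRingEnd ℂ) z * w‖ := by
    rcases hB.lt_or_eq with h1 | h1
    · exact h1
    · exfalso; rw [← h1] at hsB; simp at hsB
  have hs0 : 0 < s := by
    by_contra h'; push_neg at h'; nlinarith
  have h1 : ‖z - w‖^2 < (s * ‖1 - (starRingEnd ℂ) z * w‖)^2 := pow_lt_pow_left₀ h hA two_ne_zero
  have h2 : (s * ‖1 - (starRingEnd ℂ) z * w‖)^2 ≤ ‖1 - (starRingEnd ℂ) z * w‖^2 := by
    nlinarith [mul_nonneg (by nlinarith : (0:ℝ) ≤ 1 - s^2) (sq_nonneg ‖1 - (starRingEnd ℂ) z * w‖)]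
  by_contra hv
  push_neg at hv
  nlinarith [mul_nonneg (by linarith : (0:ℝ) ≤ 1 - ‖z‖^2)
    (by nlinarith : (0:ℝ) ≤ ‖w‖^2 - 1)]

lemma bball_eq_ball {z : ℂ} (hz : ‖z‖ < 1) {r : ℝ} (hr : 0 < r) :
    bball z r = Metric.ball
      ((((1 - sr r^2) / (1 - sr r^2*‖z‖^2) : ℝ) : ℂ) * z)
      (sr r * (1 - ‖z‖^2) / (1 - sr r^2*‖z‖^2)) := by
  have hs0 : 0 < sr r := sr_pos hr
  have hs1 : sr r < 1 := sr_lt_one r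
  set s := sr r with hs
  have hu0 : (0:ℝ) ≤ ‖z‖^2 := sq_nonneg _
  have hu1 : ‖z‖^2 < 1 := by nlinarith [norm_nonneg z]
  have hm : 0 < 1 - s^2*‖z‖^2 := by nlinarith
  set m : ℝ := 1 - s^2*‖z‖^2 with hmdef
  ext w
  have key : (‖z - w‖ < s * ‖1 - (starRingEnd ℂ) z * w‖) ↔
      w ∈ Metric.ball ((((1 - s^2) / m : ℝ) : ℂ) * z) (s * (1 - ‖z‖^2) / m) := by
    rw [Metric.mem_ball, dist_eq_norm, lt_div_iff₀ hm]
    have hmw : ((m:ℝ) : ℂ) * (w - (((1 - s^2) / m : ℝ) : ℂ) * z)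
        = ((m : ℝ) : ℂ) * w - ((1 - s^2 : ℝ) : ℂ) * z := by
      have hmne : ((m:ℝ):ℂ) ≠ 0 := Complex.ofReal_ne_zero.2 hm.ne'
      rw [Complex.ofReal_div, mul_sub, ← mul_assoc, mul_div_cancel₀ _ hmne]
    have hnorm : ‖((m:ℝ):ℂ) * w - ((1 - s^2 : ℝ) : ℂ) * z‖
        = m * ‖w - (((1 - s^2) / m : ℝ) : ℂ) * z‖ := by
      rw [← hmw, norm_mul, Complex.norm_real, Real.norm_of_nonneg hm.le]
    have hid := ball_identity s z w
    rw [hnorm] at hid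
    have hA : 0 ≤ ‖z - w‖ := norm_nonneg _
    have hB : 0 ≤ s * ‖1 - (starRingEnd ℂ) z * w‖ := by positivity
    have hN : 0 ≤ ‖w - (((1 - s^2) / m : ℝ) : ℂ) * z‖ := norm_nonneg _
    constructor
    · intro h
      have hsq : ‖z - w‖^2 < (s * ‖1 - (starRingEnd ℂ) z * w‖)^2 := by
        exact pow_lt_pow_left₀ h hA two_ne_zero
      have h2 : (m * ‖w - (((1 - s^2) / m : ℝ) : ℂ) * z‖)^2 < (s*(1-‖z‖^2))^2 := by
        nlinarith
      have h3 : m * ‖w - (((1 - s^2) / m : ℝ) : ℂ) * z‖ < s*(1-‖z‖^2) :=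
        lt_of_pow_lt_pow_left₀ 2 (mul_nonneg hs0.le (by linarith)) h2
      linarith [h3]
    · intro h
      have h2 : (m * ‖w - (((1 - s^2) / m : ℝ) : ℂ) * z‖)^2 < (s*(1-‖z‖^2))^2 := by
        exact pow_lt_pow_left₀ (by linarith) (mul_nonneg hm.le (norm_nonneg _)) two_ne_zero
      have hsq : ‖z - w‖^2 < (s * ‖1 - (starRingEnd ℂ) z * w‖)^2 := by nlinarith
      exact lt_of_pow_lt_pow_left₀ 2 hB hsq
  constructor
  · rintro ⟨hw, hbd⟩
    have hw1 : ‖w‖ < 1 := by simpa [Metric.mem_ball, dist_eq_norm] using hw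
    exact key.1 ((bdist_lt_iff hz hw1 hr).1 hbd)
  · intro h
    have hrho := key.2 h
    have hw1 : ‖w‖ < 1 := rho_lt_imp_mem_disc hz hs1 hrho
    exact ⟨by simpa [Metric.mem_ball, dist_eq_norm] using hw1, (bdist_lt_iff hz hw1 hr).2 hrho⟩

lemma norm_one_sub_conj_comm (z w : ℂ) :
    ‖1 - (starRingEnd ℂ) w * z‖ = ‖1 - (starRingEnd ℂ) z * w‖ := by
  have : (1 - (starRingEnd ℂ) w * z) = (starRingEnd ℂ) (1 - (starRingEnd ℂ) z * w) := by
    simp [map_sub, map_mul, mul_comm]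
  rw [this, RCLike.norm_conj]

lemma ring_ineq {a b : ℂ} (ha : ‖a‖ < 1) (hb : ‖b‖ < 1) :
    ‖a - b‖ * (1 + ‖a‖*‖b‖) ≤ (‖a‖ + ‖b‖) * ‖1 - (starRingEnd ℂ) a * b‖ := by
  have ht : |((starRingEnd ℂ) a * b).re| ≤ ‖a‖*‖b‖ := by
    calc |((starRingEnd ℂ) a * b).re| ≤ ‖(starRingEnd ℂ) a * b‖ := Complex.abs_re_le_norm _
    _ = ‖a‖*‖b‖ := by rw [norm_mul, RCLike.norm_conj]
  have h1 : ‖a - b‖^2 = ‖a‖^2 + ‖b‖^2 - 2*((starRingEnd ℂ) a * b).re := by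
    simp only [sq_norm_eq, Complex.normSq_apply, Complex.sub_re, Complex.sub_im,
      Complex.mul_re, Complex.mul_im, Complex.conj_re, Complex.conj_im]
    ring
  have h2 : ‖1 - (starRingEnd ℂ) a * b‖^2 = 1 - 2*((starRingEnd ℂ) a * b).re + ‖a‖^2*‖b‖^2 := by
    simp only [sq_norm_eq, Complex.normSq_apply, Complex.sub_re, Complex.sub_im,
      Complex.one_re, Complex.one_im, Complex.mul_re, Complex.mul_im,
      Complex.conj_re, Complex.conj_im]
    ring
  have ha0 : 0 ≤ ‖a‖ := norm_nonneg _
  have hb0 : 0 ≤ ‖b‖ := norm_nonneg _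
  have habs := abs_le.1 ht
  have hsq : (‖a - b‖ * (1 + ‖a‖*‖b‖))^2 ≤ ((‖a‖ + ‖b‖) * ‖1 - (starRingEnd ℂ) a * b‖)^2 := by
    rw [mul_pow, mul_pow, h1, h2]
    nlinarith [mul_nonneg (mul_nonneg (by linarith : (0:ℝ) ≤ ((starRingEnd ℂ) a * b).re + ‖a‖*‖b‖)
      (by nlinarith : (0:ℝ) ≤ 1 - ‖a‖^2)) (by nlinarith : (0:ℝ) ≤ 1 - ‖b‖^2)]
  exact le_of_pow_le_pow_left₀ two_ne_zero (by positivity) hsq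

set_option maxHeartbeats 800000 in
lemma sep_of_two_balls {z₁ z₂ w : ℂ} {s : ℝ} (hz₁ : ‖z₁‖ < 1) (hz₂ : ‖z₂‖ < 1) (hw : ‖w‖ < 1)
    (hs0 : 0 < s) (hs1 : s < 1)
    (h1 : ‖z₁ - w‖ < s * ‖1 - (starRingEnd ℂ) z₁ * w‖)
    (h2 : ‖z₂ - w‖ < s * ‖1 - (starRingEnd ℂ) z₂ * w‖) :
    ‖z₁ - z₂‖ * (1 + s^2) < 2*s*‖1 - (starRingEnd ℂ) z₁ * z₂‖ := by
  have hd₁ : 0 < ‖1 - (starRingEnd ℂ) w * z₁‖ := denom_pos hw hz₁.le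
  have hd₂ : 0 < ‖1 - (starRingEnd ℂ) w * z₂‖ := denom_pos hw hz₂.le
  have hd₁' : (1 - (starRingEnd ℂ) w * z₁) ≠ 0 := norm_pos_iff.1 hd₁
  have hd₂' : (1 - (starRingEnd ℂ) w * z₂) ≠ 0 := norm_pos_iff.1 hd₂
  have hW : (0:ℝ) < 1 - ‖w‖^2 := by nlinarith [norm_nonneg w]
  set a := moebius w z₁ with hadef
  set b := moebius w z₂ with hbdef
  have hna : ‖a‖ = ‖z₁ - w‖ / ‖1 - (starRingEnd ℂ) z₁ * w‖ := by
    rw [hadef, moebius, norm_div, norm_sub_rev, norm_one_sub_conj_comm]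
  have hnb : ‖b‖ = ‖z₂ - w‖ / ‖1 - (starRingEnd ℂ) z₂ * w‖ := by
    rw [hbdef, moebius, norm_div, norm_sub_rev, norm_one_sub_conj_comm]
  have has : ‖a‖ < s := by
    rw [hna, div_lt_iff₀ (denom_pos hz₁ hw.le)]; linarith [h1]
  have hbs : ‖b‖ < s := by
    rw [hnb, div_lt_iff₀ (denom_pos hz₂ hw.le)]; linarith [h2]
  have ha1 : ‖a‖ < 1 := has.trans hs1
  have hb1 : ‖b‖ < 1 := hbs.trans hs1
  -- identity for a - b
  have idA : ‖a - b‖ * (‖1 - (starRingEnd ℂ) w * z₁‖ * ‖1 - (starRingEnd ℂ) w * z₂‖)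
      = (1 - ‖w‖^2) * ‖z₁ - z₂‖ := by
    have : (a - b) * ((1 - (starRingEnd ℂ) w * z₁) * (1 - (starRingEnd ℂ) w * z₂))
        = (((1 - ‖w‖^2 : ℝ)) : ℂ) * (z₂ - z₁) := by
      rw [hadef, hbdef, moebius, moebius]
      have hc : ((1 - ‖w‖^2 : ℝ) : ℂ) = 1 - (starRingEnd ℂ) w * w := by
        rw [Complex.conj_mul']; push_cast; ring
      rw [hc]
      rw [div_sub_div _ _ hd₁' hd₂', div_mul_eq_mul_div, div_eq_iff (mul_ne_zero hd₁' hd₂')]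
      ring
    have hn := congrArg norm this
    simp only [norm_mul, Complex.norm_real, Real.norm_of_nonneg hW.le,
      norm_sub_rev z₂ z₁] at hn
    exact hn
  -- identity for 1 - conj a * b
  have idB : ‖1 - (starRingEnd ℂ) a * b‖ * (‖1 - (starRingEnd ℂ) w * z₁‖ * ‖1 - (starRingEnd ℂ) w * z₂‖)
      = (1 - ‖w‖^2) * ‖1 - (starRingEnd ℂ) z₁ * z₂‖ := by
    have hd₁c : (1 - w * (starRingEnd ℂ) z₁) ≠ 0 := by
      intro h
      apply hd₁'
      have := congrArg (starRingEnd ℂ) h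
      simpa [map_sub, map_mul, mul_comm] using this
    have : (1 - (starRingEnd ℂ) a * b) * ((1 - w * (starRingEnd ℂ) z₁) * (1 - (starRingEnd ℂ) w * z₂))
        = (((1 - ‖w‖^2 : ℝ)) : ℂ) * (1 - (starRingEnd ℂ) z₁ * z₂) := by
      rw [hadef, hbdef, moebius, moebius]
      have hc : ((1 - ‖w‖^2 : ℝ) : ℂ) = 1 - (starRingEnd ℂ) w * w := by
        rw [Complex.conj_mul']; push_cast; ring
      rw [hc, map_div₀, map_sub, map_sub, map_mul]
      simp only [map_one, Complex.conj_conj]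
      rw [div_mul_div_comm, one_sub_div (mul_ne_zero hd₁c hd₂'), div_mul_eq_mul_div,
        div_eq_iff (mul_ne_zero hd₁c hd₂')]
      ring
    have hn := congrArg norm this
    have hconj : ‖1 - w * (starRingEnd ℂ) z₁‖ = ‖1 - (starRingEnd ℂ) w * z₁‖ := by
      have he : (1 - w * (starRingEnd ℂ) z₁) = (starRingEnd ℂ) (1 - (starRingEnd ℂ) w * z₁) := by
        simp [map_sub, map_mul]
      rw [he, RCLike.norm_conj]
    simp only [norm_mul, Complex.norm_real, Real.norm_of_nonneg hW.le, hconj] at hn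
    exact hn
  have hN : 0 < ‖1 - (starRingEnd ℂ) z₁ * z₂‖ := denom_pos hz₁ hz₂.le
  have hri := ring_ineq ha1 hb1
  -- multiply ring_ineq by D₁D₂ and use identities
  have hD : 0 < ‖1 - (starRingEnd ℂ) w * z₁‖ * ‖1 - (starRingEnd ℂ) w * z₂‖ := mul_pos hd₁ hd₂
  have hmain : ‖z₁ - z₂‖ * (1 + ‖a‖*‖b‖) ≤ (‖a‖ + ‖b‖) * ‖1 - (starRingEnd ℂ) z₁ * z₂‖ := by
    have h3 := mul_le_mul_of_nonneg_right hri hD.le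
    rw [show ‖a - b‖ * (1 + ‖a‖*‖b‖) * (‖1 - (starRingEnd ℂ) w * z₁‖ * ‖1 - (starRingEnd ℂ) w * z₂‖)
        = (‖a - b‖ * (‖1 - (starRingEnd ℂ) w * z₁‖ * ‖1 - (starRingEnd ℂ) w * z₂‖)) * (1 + ‖a‖*‖b‖) by ring,
      idA,
      show (‖a‖ + ‖b‖) * ‖1 - (starRingEnd ℂ) a * b‖ * (‖1 - (starRingEnd ℂ) w * z₁‖ * ‖1 - (starRingEnd ℂ) w * z₂‖)
        = (‖a‖ + ‖b‖) * (‖1 - (starRingEnd ℂ) a * b‖ * (‖1 - (starRingEnd ℂ) w * z₁‖ * ‖1 - (starRingEnd ℂ) w * z₂‖)) by ring,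
      idB] at h3
    have h4 : (1 - ‖w‖^2) * (‖z₁ - z₂‖ * (1 + ‖a‖*‖b‖))
        ≤ (1 - ‖w‖^2) * ((‖a‖ + ‖b‖) * ‖1 - (starRingEnd ℂ) z₁ * z₂‖) := by
      calc (1 - ‖w‖^2) * (‖z₁ - z₂‖ * (1 + ‖a‖*‖b‖))
          = (1 - ‖w‖^2) * ‖z₁ - z₂‖ * (1 + ‖a‖*‖b‖) := by ring
        _ ≤ (‖a‖ + ‖b‖) * ((1 - ‖w‖^2) * ‖1 - (starRingEnd ℂ) z₁ * z₂‖) := h3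
        _ = (1 - ‖w‖^2) * ((‖a‖ + ‖b‖) * ‖1 - (starRingEnd ℂ) z₁ * z₂‖) := by ring
    exact le_of_mul_le_mul_left h4 hW
  have ha0 : 0 ≤ ‖a‖ := norm_nonneg _
  have hb0 : 0 ≤ ‖b‖ := norm_nonneg _
  have hxy : (‖a‖ + ‖b‖) * (1 + s^2) < 2*s*(1 + ‖a‖*‖b‖) := by
    nlinarith [mul_pos (sub_pos.2 has) (by nlinarith : (0:ℝ) < 1 - s*‖b‖),
      mul_pos (sub_pos.2 hbs) (by nlinarith : (0:ℝ) < 1 - s*‖a‖)]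
  have hC : (‖z₁ - z₂‖ * (1 + s^2)) * (1 + ‖a‖*‖b‖)
      < (2*s*‖1 - (starRingEnd ℂ) z₁ * z₂‖) * (1 + ‖a‖*‖b‖) := by
    calc (‖z₁ - z₂‖ * (1 + s^2)) * (1 + ‖a‖*‖b‖)
        = (‖z₁ - z₂‖ * (1 + ‖a‖*‖b‖)) * (1 + s^2) := by ring
      _ ≤ ((‖a‖ + ‖b‖) * ‖1 - (starRingEnd ℂ) z₁ * z₂‖) * (1 + s^2) :=
          mul_le_mul_of_nonneg_right hmain (by positivity)
      _ = ((‖a‖ + ‖b‖) * (1 + s^2)) * ‖1 - (starRingEnd ℂ) z₁ * z₂‖ := by ring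
      _ < (2*s*(1 + ‖a‖*‖b‖)) * ‖1 - (starRingEnd ℂ) z₁ * z₂‖ :=
          mul_lt_mul_of_pos_right hxy hN
      _ = (2*s*‖1 - (starRingEnd ℂ) z₁ * z₂‖) * (1 + ‖a‖*‖b‖) := by ring
  have hab0 : (0:ℝ) < 1 + ‖a‖*‖b‖ := by positivity
  exact lt_of_mul_lt_mul_right hC hab0.le

lemma sr_double (r : ℝ) : sr (2*r) * (1 + sr r^2) = 2 * sr r := by
  have hE := Real.exp_pos r
  have h2 : Real.exp (2*r) = Real.exp r ^ 2 := by
    rw [two_mul, Real.exp_add]; ring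
  rw [sr, sr, h2]
  have h3 : Real.exp r + 1 ≠ 0 := by positivity
  have h4 : Real.exp r ^ 2 + 1 ≠ 0 := by positivity
  field_simp
  ring

lemma bdist_two_balls {z₁ z₂ w : ℂ} (hz₁ : ‖z₁‖ < 1) (hz₂ : ‖z₂‖ < 1) (hw : ‖w‖ < 1)
    {r : ℝ} (hr : 0 < r) (h1 : bdist z₁ w < r) (h2 : bdist z₂ w < r) :
    bdist z₁ z₂ < 2*r := by
  rw [bdist_lt_iff hz₁ hw hr] at h1
  rw [bdist_lt_iff hz₂ hw hr] at h2
  rw [bdist_lt_iff hz₁ hz₂ (by linarith)]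
  have key := sep_of_two_balls hz₁ hz₂ hw (sr_pos hr) (sr_lt_one r) h1 h2
  have hd := sr_double r
  have hp : (0:ℝ) < 1 + sr r^2 := by positivity
  have hC : ‖z₁ - z₂‖ * (1 + sr r^2)
      < (sr (2*r) * ‖1 - (starRingEnd ℂ) z₁ * z₂‖) * (1 + sr r^2) := by
    calc ‖z₁ - z₂‖ * (1 + sr r^2) < 2 * sr r * ‖1 - (starRingEnd ℂ) z₁ * z₂‖ := key
      _ = (sr (2*r) * (1 + sr r^2)) * ‖1 - (starRingEnd ℂ) z₁ * z₂‖ := by rw [hd]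
      _ = (sr (2*r) * ‖1 - (starRingEnd ℂ) z₁ * z₂‖) * (1 + sr r^2) := by ring
  exact lt_of_mul_lt_mul_right hC hp.le

lemma norm_sphere_eq {z ζ : ℂ} (hζ : ‖ζ‖ = 1) : ‖1 - (starRingEnd ℂ) z * ζ‖ = ‖ζ - z‖ := by
  have hzz : (starRingEnd ℂ) ζ * ζ = 1 := by
    rw [Complex.conj_mul', hζ]; push_cast; ring
  have he : 1 - (starRingEnd ℂ) z * ζ = ((starRingEnd ℂ) ζ - (starRingEnd ℂ) z) * ζ := by
    rw [sub_mul, hzz]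
  rw [he, norm_mul, hζ, mul_one, ← map_sub, RCLike.norm_conj]

set_option maxHeartbeats 800000 in
lemma kernel_comp {z w ζ : ℂ} (hz : ‖z‖ < 1) (hw : ‖w‖ < 1) (hζ : ‖ζ‖ = 1) {s : ℝ}
    (hs0 : 0 < s) (hs1 : s < 1)
    (hrho : ‖z - w‖ ≤ s * ‖1 - (starRingEnd ℂ) z * w‖) :
    (1 - ‖w‖^2)/‖ζ - w‖^2 ≤ ((1+s)^2/(1-s)^4) * ((1 - ‖z‖^2)/‖ζ - z‖^2) := by
  have hu : ‖z‖^2 < 1 := by nlinarith [norm_nonneg z]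
  have hv : ‖w‖^2 < 1 := by nlinarith [norm_nonneg w]
  have dz : 0 < ‖ζ - z‖ := by
    rw [norm_sub_pos_iff]; intro h; rw [h] at hζ; rw [hζ] at hz; exact absurd hz (by norm_num)
  have dw : 0 < ‖ζ - w‖ := by
    rw [norm_sub_pos_iff]; intro h; rw [h] at hζ; rw [hζ] at hw; exact absurd hw (by norm_num)
  have ez : ‖1 - (starRingEnd ℂ) z * ζ‖ = ‖ζ - z‖ := norm_sphere_eq hζ
  have ew : ‖1 - (starRingEnd ℂ) w * ζ‖ = ‖ζ - w‖ := norm_sphere_eq hζ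
  -- c2 : ‖1 - z̄w‖ ≤ ‖ζ-z‖ + ‖ζ-w‖
  have c2 : ‖1 - (starRingEnd ℂ) z * w‖ ≤ ‖ζ - z‖ + ‖ζ - w‖ := by
    have he : 1 - (starRingEnd ℂ) z * w
        = (1 - (starRingEnd ℂ) z * ζ) + (starRingEnd ℂ) z * (ζ - w) := by ring
    rw [he]
    calc ‖(1 - (starRingEnd ℂ) z * ζ) + (starRingEnd ℂ) z * (ζ - w)‖
        ≤ ‖1 - (starRingEnd ℂ) z * ζ‖ + ‖(starRingEnd ℂ) z * (ζ - w)‖ := norm_add_le _ _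
      _ ≤ ‖ζ - z‖ + ‖ζ - w‖ := by
          rw [ez, norm_mul, RCLike.norm_conj]
          nlinarith [norm_nonneg (ζ - w)]
  -- c1 : (1-s)‖ζ-z‖ ≤ (1+s)‖ζ-w‖
  have c1 : (1-s) * ‖ζ - z‖ ≤ (1+s) * ‖ζ - w‖ := by
    have he : 1 - (starRingEnd ℂ) w * ζ
        = (1 - (starRingEnd ℂ) z * ζ) + ((starRingEnd ℂ) z - (starRingEnd ℂ) w) * ζ := by ring
    have hge : ‖ζ - w‖ ≥ ‖ζ - z‖ - ‖z - w‖ := by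
      rw [← ew, he]
      have hn : ‖((starRingEnd ℂ) z - (starRingEnd ℂ) w) * ζ‖ = ‖z - w‖ := by
        rw [norm_mul, hζ, mul_one, ← map_sub, RCLike.norm_conj]
      have h5 : ‖1 - (starRingEnd ℂ) z * ζ‖
          ≤ ‖1 - (starRingEnd ℂ) z * ζ + ((starRingEnd ℂ) z - (starRingEnd ℂ) w) * ζ‖
            + ‖((starRingEnd ℂ) z - (starRingEnd ℂ) w) * ζ‖ := by
        have he2 : (1 - (starRingEnd ℂ) z * ζ)
            = (1 - (starRingEnd ℂ) z * ζ + ((starRingEnd ℂ) z - (starRingEnd ℂ) w) * ζ)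
              - ((starRingEnd ℂ) z - (starRingEnd ℂ) w) * ζ := by ring
        exact (congrArg norm he2).le.trans (norm_sub_le _ _)
      rw [ez] at h5
      linarith [h5, hn.le, hn.ge]
    nlinarith [hge, hrho, c2]
  -- hA : (1-‖w‖²)(1-s)² ≤ (1-‖z‖²)
  have c3 : ‖1 - (starRingEnd ℂ) z * w‖ * (1-s) ≤ 1 - ‖z‖^2 := by
    have he : 1 - (starRingEnd ℂ) z * w
        = (1 - (starRingEnd ℂ) z * z) + (starRingEnd ℂ) z * (z - w) := by ring
    have h1 : ‖1 - (starRingEnd ℂ) z * w‖ ≤ (1 - ‖z‖^2) + ‖z - w‖ := by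
      rw [he]
      calc ‖(1 - (starRingEnd ℂ) z * z) + (starRingEnd ℂ) z * (z - w)‖
          ≤ ‖1 - (starRingEnd ℂ) z * z‖ + ‖(starRingEnd ℂ) z * (z - w)‖ := norm_add_le _ _
        _ ≤ (1 - ‖z‖^2) + ‖z - w‖ := by
            rw [norm_mul, RCLike.norm_conj]
            have h2 : (1 : ℂ) - (starRingEnd ℂ) z * z = ((1 - ‖z‖^2 : ℝ) : ℂ) := by
              rw [Complex.conj_mul']; push_cast; ring
            rw [h2, Complex.norm_real, Real.norm_of_nonneg (by linarith)]
            nlinarith [norm_nonneg (z - w)]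
    nlinarith [h1, hrho, norm_nonneg (1 - (starRingEnd ℂ) z * w)]
  have c4 : (1 - ‖z‖^2) * (1 - ‖w‖^2) ≤ ‖1 - (starRingEnd ℂ) z * w‖^2 := by
    have := key_identity z w
    nlinarith [sq_nonneg ‖z - w‖]
  have hA : (1 - ‖w‖^2) * (1-s)^2 ≤ 1 - ‖z‖^2 := by
    have hsq3 : (‖1 - (starRingEnd ℂ) z * w‖ * (1-s))^2 ≤ (1 - ‖z‖^2)^2 :=
      pow_le_pow_left₀ (mul_nonneg (norm_nonneg _) (by linarith)) c3 2
    nlinarith [c4, hsq3, mul_pos (sub_pos.2 hu) (sub_pos.2 hu)]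
  have hB : (1-s)^2 * ‖ζ - z‖^2 ≤ (1+s)^2 * ‖ζ - w‖^2 := by
    have := pow_le_pow_left₀ (mul_nonneg (by linarith) dz.le) c1 2
    nlinarith [this]
  have X : (1 - ‖w‖^2) * ‖ζ - z‖^2 * (1-s)^4 ≤ (1+s)^2 * (1 - ‖z‖^2) * ‖ζ - w‖^2 := by
    nlinarith [mul_le_mul hA hB (by positivity) (by linarith : (0:ℝ) ≤ 1 - ‖z‖^2)]
  rw [div_mul_div_comm, div_le_div_iff₀ (by positivity)
    (mul_pos (pow_pos (by linarith : (0:ℝ) < 1 - s) 4) (by positivity))]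
  nlinarith [X]


lemma kernel_measurable (w : ℂ) : Measurable (fun ζ : ℂ => (1 - ‖w‖^2) / ‖ζ - w‖^2) := by
  apply Measurable.div measurable_const
  fun_prop

lemma kernel_nonneg {w : ℂ} (hw : ‖w‖ ≤ 1) (ζ : ℂ) : 0 ≤ (1 - ‖w‖^2) / ‖ζ - w‖^2 := by
  apply div_nonneg _ (sq_nonneg _)
  nlinarith [norm_nonneg w]

lemma kernel_integrable {μ : Measure ℂ} [IsFiniteMeasure μ]
    (hsph : μ ((Metric.sphere (0:ℂ) 1)ᶜ) = 0) {w : ℂ} (hw : ‖w‖ < 1) :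
    Integrable (fun ζ : ℂ => (1 - ‖w‖^2) / ‖ζ - w‖^2) μ := by
  apply Integrable.mono' (integrable_const ((1 - ‖w‖^2) / (1 - ‖w‖)^2))
    (kernel_measurable w).aestronglyMeasurable
  apply (ae_iff.2 _)
  apply measure_mono_null _ hsph
  intro ζ hζ
  simp only [Set.mem_setOf_eq, not_le] at hζ
  simp only [Set.mem_compl_iff, Metric.mem_sphere]
  intro hmem
  have hζ1 : ‖ζ‖ = 1 := by simpa [dist_eq_norm] using hmem
  have hd : 1 - ‖w‖ ≤ ‖ζ - w‖ := by
    have := norm_sub_norm_le ζ w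
    linarith [this, hζ1.le, hζ1.ge]
  have h0 : (0:ℝ) < 1 - ‖w‖ := by linarith
  have hb : (1 - ‖w‖^2) / ‖ζ - w‖^2 ≤ (1 - ‖w‖^2) / (1 - ‖w‖)^2 := by
    apply div_le_div_of_nonneg_left (by nlinarith [norm_nonneg w]) (by positivity)
    nlinarith [hd]
  have hnn := kernel_nonneg hw.le ζ
  rw [Real.norm_of_nonneg hnn] at hζ
  linarith

lemma poisson_nonneg' (μ : Measure ℂ) {w : ℂ} (hw : ‖w‖ ≤ 1) : 0 ≤ poissonInt μ w := by
  apply mul_nonneg (by positivity)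
  exact integral_nonneg (kernel_nonneg hw)

lemma poisson_mono {μ : Measure ℂ} [IsFiniteMeasure μ]
    (hsph : μ ((Metric.sphere (0:ℂ) 1)ᶜ) = 0) {z w : ℂ} (hz : ‖z‖ < 1) (hw : ‖w‖ < 1)
    {s : ℝ} (hs0 : 0 < s) (hs1 : s < 1)
    (hrho : ‖z - w‖ ≤ s * ‖1 - (starRingEnd ℂ) z * w‖) :
    poissonInt μ w ≤ ((1+s)^2/(1-s)^4) * poissonInt μ z := by
  have hK : 0 < (1+s)^2/(1-s)^4 :=
    div_pos (by positivity) (pow_pos (by linarith) 4)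
  have hint : (∫ ζ, (1 - ‖w‖^2) / ‖ζ - w‖^2 ∂μ)
      ≤ ∫ ζ, ((1+s)^2/(1-s)^4) * ((1 - ‖z‖^2) / ‖ζ - z‖^2) ∂μ := by
    apply integral_mono_ae (kernel_integrable hsph hw)
      ((kernel_integrable hsph hz).const_mul _)
    apply (ae_iff.2 _)
    apply measure_mono_null _ hsph
    intro ζ hζ
    simp only [Set.mem_setOf_eq, not_le] at hζ
    simp only [Set.mem_compl_iff, Metric.mem_sphere]
    intro hmem
    have hζ1 : ‖ζ‖ = 1 := by simpa [dist_eq_norm] using hmem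
    exact absurd (kernel_comp hz hw hζ1 hs0 hs1 hrho) (by linarith)
  rw [MeasureTheory.integral_const_mul] at hint
  rw [poissonInt, poissonInt]
  have h2π : (0:ℝ) ≤ (2 * Real.pi)⁻¹ := by positivity
  calc (2 * Real.pi)⁻¹ * ∫ ζ, (1 - ‖w‖^2) / ‖ζ - w‖^2 ∂μ
      ≤ (2 * Real.pi)⁻¹ * ((1+s)^2/(1-s)^4 * ∫ ζ, (1 - ‖z‖^2) / ‖ζ - z‖^2 ∂μ) :=
        mul_le_mul_of_nonneg_left hint h2π
    _ = (1+s)^2/(1-s)^4 * ((2 * Real.pi)⁻¹ * ∫ ζ, (1 - ‖z‖^2) / ‖ζ - z‖^2 ∂μ) := by ring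

theorem stmt19 (η : ℝ) (hη0 : 0 < η) (hη1 : η < 1) :
    ∃ C : ℝ, 0 < C ∧
      ∀ μ : Measure ℂ, IsFiniteMeasure μ → μ ((Metric.sphere (0:ℂ) 1)ᶜ) = 0 →
      ∀ z : ℕ → ℂ, (∀ j, z j ∈ Metric.ball (0:ℂ) 1) →
        (∀ j k, j ≠ k → η / 2 ≤ bdist (z j) (z k)) →
      ∀ lam : ℕ → ℂ,
        (∑' j, ENNReal.ofReal (‖lam j‖ ^ 2 * poissonInt μ (z j))) < ⊤ →
      ∀ c : ℕ → ℂ, (∀ j, ‖c j‖ ≤ 1) →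
        (∫⁻ w in Metric.ball (0:ℂ) 1,
            ENNReal.ofReal
              (‖∑' j, lam j * c j *
                  (((1 - ‖z j‖ ^ 2) / (volume (bball (z j) (η / 4))).toReal : ℝ) : ℂ) *
                  (bball (z j) (η / 4)).indicator (fun _ => (1:ℂ)) w‖ ^ 2
                * poissonInt μ w))
          ≤ ENNReal.ofReal C *
              ∑' j, ENNReal.ofReal (‖lam j‖ ^ 2 * poissonInt μ (z j)) := by
  have hr : (0:ℝ) < η/4 := by linarith
  set s : ℝ := sr (η/4) with hsdef
  have hs0 : 0 < s := sr_pos hr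
  have hs1 : s < 1 := sr_lt_one _
  set K : ℝ := (1+s)^2/(1-s)^4 with hKdef
  have hK0 : 0 < K := div_pos (by positivity) (pow_pos (by linarith) 4)
  refine ⟨K / (Real.pi * s^2), div_pos hK0 (by positivity), ?_⟩
  intro μ hfin hsph z hzmem hsep lam _hlam c hc
  haveI := hfin
  have hz1 : ∀ j, ‖z j‖ < 1 := by
    intro j
    have := hzmem j
    rwa [Metric.mem_ball, dist_eq_norm, sub_zero] at this
  -- geometry of the balls
  set ctr : ℕ → ℂ := fun j => (((1 - s^2) / (1 - s^2*‖z j‖^2) : ℝ) : ℂ) * z j with hctr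
  set rad : ℕ → ℝ := fun j => s * (1 - ‖z j‖^2) / (1 - s^2*‖z j‖^2) with hrad
  have hBeq : ∀ j, bball (z j) (η/4) = Metric.ball (ctr j) (rad j) := fun j =>
    bball_eq_ball (hz1 j) hr
  have hu1 : ∀ j, ‖z j‖^2 < 1 := fun j => by nlinarith [norm_nonneg (z j), hz1 j]
  have hm : ∀ j, 0 < 1 - s^2*‖z j‖^2 := fun j => by nlinarith [hu1 j, sq_nonneg ‖z j‖]
  have hradpos : ∀ j, 0 < rad j := fun j =>
    div_pos (mul_pos hs0 (by linarith [hu1 j])) (hm j)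
  have hradge : ∀ j, s * (1 - ‖z j‖^2) ≤ rad j := by
    intro j
    rw [hrad]
    rw [le_div_iff₀ (hm j)]
    have h1 : 0 ≤ s * (1 - ‖z j‖^2) := by nlinarith [hu1 j]
    nlinarith [sq_nonneg (s*‖z j‖)]
  have hvol : ∀ j, volume (bball (z j) (η/4)) = ENNReal.ofReal (rad j^2 * Real.pi) := by
    intro j
    rw [hBeq j, Complex.volume_ball]
    have hpi : (NNReal.pi : ENNReal) = ENNReal.ofReal Real.pi := by
      rw [← NNReal.coe_real_pi, ENNReal.ofReal_coe_nnreal]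
    rw [hpi, ← ENNReal.ofReal_pow (hradpos j).le, ← ENNReal.ofReal_mul (by positivity)]
  have hVpos : ∀ j, 0 < (volume (bball (z j) (η/4))).toReal := by
    intro j
    rw [hvol j, ENNReal.toReal_ofReal (by positivity)]
    exact mul_pos (pow_pos (hradpos j) 2) Real.pi_pos
  set t : ℕ → ℝ := fun j => (1 - ‖z j‖ ^ 2) / (volume (bball (z j) (η / 4))).toReal with htdef
  -- disjointness
  have hdisj : ∀ j k, j ≠ k → ∀ w, w ∈ bball (z j) (η/4) → w ∈ bball (z k) (η/4) → False := by
    intro j k hjk w hwj hwk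
    obtain ⟨hw1, hbj⟩ := hwj
    obtain ⟨_, hbk⟩ := hwk
    have hw1' : ‖w‖ < 1 := by rwa [Metric.mem_ball, dist_eq_norm, sub_zero] at hw1
    have := bdist_two_balls (hz1 j) (hz1 k) hw1' hr hbj hbk
    have h2 : 2*(η/4) = η/2 := by ring
    rw [h2] at this
    exact absurd (hsep j k hjk) (by linarith)
  -- pointwise estimate
  have hP0 : ∀ j, 0 ≤ poissonInt μ (z j) := fun j => poisson_nonneg' μ (hz1 j).le
  set M : ℕ → ENNReal := fun j =>
    ENNReal.ofReal (‖lam j‖^2 * t j^2 * (K * poissonInt μ (z j))) with hM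
  have hpt : ∀ w : ℂ, ENNReal.ofReal
      (‖∑' j, lam j * c j * ((t j : ℝ) : ℂ) *
          (bball (z j) (η/4)).indicator (fun _ => (1:ℂ)) w‖^2 * poissonInt μ w)
      ≤ ∑' j, Set.indicator (bball (z j) (η/4)) (fun _ => M j) w := by
    intro w
    by_cases hex : ∃ j0, w ∈ bball (z j0) (η/4)
    · obtain ⟨j0, hj0⟩ := hex
      have hzero : ∀ j, j ≠ j0 → lam j * c j * ((t j : ℝ) : ℂ) *
          (bball (z j) (η/4)).indicator (fun _ => (1:ℂ)) w = 0 := by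
        intro j hj
        have hnot : w ∉ bball (z j) (η/4) := fun hw => hdisj j j0 hj w hw hj0
        rw [Set.indicator_of_notMem hnot, mul_zero]
      rw [tsum_eq_single j0 hzero, Set.indicator_of_mem hj0]
      have hj0' : w ∈ Metric.ball (0:ℂ) 1 ∧ bdist (z j0) w < η/4 := hj0
      have hw1' : ‖w‖ < 1 := by
        have := hj0'.1
        rwa [Metric.mem_ball, dist_eq_norm, sub_zero] at this
      have hrho : ‖z j0 - w‖ ≤ s * ‖1 - (starRingEnd ℂ) (z j0) * w‖ :=
        ((bdist_lt_iff (hz1 j0) hw1' hr).1 hj0'.2).le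
      have hPmono : poissonInt μ w ≤ K * poissonInt μ (z j0) :=
        poisson_mono hsph (hz1 j0) hw1' hs0 hs1 hrho
      have hPw0 : 0 ≤ poissonInt μ w := poisson_nonneg' μ hw1'.le
      have hnorm : ‖lam j0 * c j0 * ((t j0 : ℝ) : ℂ) * 1‖^2 ≤ ‖lam j0‖^2 * t j0^2 := by
        rw [mul_one, norm_mul, norm_mul, Complex.norm_real, Real.norm_eq_abs]
        have h1 : (‖lam j0‖ * ‖c j0‖ * |t j0|)^2 = ‖lam j0‖^2 * ‖c j0‖^2 * t j0^2 := by
          rw [mul_pow, mul_pow, _root_.sq_abs]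
        rw [h1]
        nlinarith [mul_nonneg (mul_nonneg (sq_nonneg ‖lam j0‖) (sq_nonneg (t j0)))
          (by nlinarith [norm_nonneg (c j0), hc j0] : (0:ℝ) ≤ 1 - ‖c j0‖^2)]
      calc ENNReal.ofReal (‖lam j0 * c j0 * ((t j0 : ℝ) : ℂ) * 1‖^2 * poissonInt μ w)
          ≤ M j0 := by
            rw [hM]
            apply ENNReal.ofReal_le_ofReal
            exact mul_le_mul hnorm hPmono hPw0
              (mul_nonneg (sq_nonneg _) (sq_nonneg _))
        _ ≤ ∑' j, Set.indicator (bball (z j) (η/4)) (fun _ => M j) w := by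
            have h6 := ENNReal.le_tsum (f := fun j => Set.indicator (bball (z j) (η/4))
              (fun _ => M j) w) j0
            rwa [Set.indicator_of_mem hj0] at h6
    · push_neg at hex
      have hzero : ∀ j, lam j * c j * ((t j : ℝ) : ℂ) *
          (bball (z j) (η/4)).indicator (fun _ => (1:ℂ)) w = 0 := by
        intro j
        rw [Set.indicator_of_notMem (hex j), mul_zero]
      rw [tsum_congr hzero, tsum_zero, norm_zero]
      simp
  -- the integral chain
  have hmeas : ∀ j, Measurable (fun w => Set.indicator (bball (z j) (η/4))
      (fun _ => M j) w) := by
    intro j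
    apply measurable_const.indicator
    rw [hBeq j]
    exact measurableSet_ball
  have hperterm : ∀ j, M j * volume (bball (z j) (η/4))
      ≤ ENNReal.ofReal (K / (Real.pi * s^2)) *
          ENNReal.ofReal (‖lam j‖^2 * poissonInt μ (z j)) := by
    intro j
    have hVval : (volume (bball (z j) (η/4))).toReal = rad j^2 * Real.pi := by
      rw [hvol j, ENNReal.toReal_ofReal (by positivity)]
    have hVpos' := hVpos j
    rw [hvol j, hM]
    rw [← ENNReal.ofReal_mul (mul_nonneg (mul_nonneg (sq_nonneg ‖lam j‖) (sq_nonneg (t j)))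
      (mul_nonneg hK0.le (hP0 j)))]
    rw [← ENNReal.ofReal_mul (le_of_lt (div_pos hK0 (by positivity)))]
    apply ENNReal.ofReal_le_ofReal
    -- real inequality
    have htj : t j = (1 - ‖z j‖^2) / (rad j^2 * Real.pi) := by
      rw [htdef]; simp only []; rw [hVval]
    have key1 : t j^2 * (rad j^2 * Real.pi) ≤ 1/(s^2*Real.pi) := by
      have hR : 0 < rad j^2 * Real.pi := mul_pos (pow_pos (hradpos j) 2) Real.pi_pos
      rw [htj, div_pow, div_mul_eq_mul_div, div_le_div_iff₀ (by positivity) (by positivity)]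
      have hsq : (s * (1 - ‖z j‖^2))^2 ≤ rad j^2 :=
        pow_le_pow_left₀ (by nlinarith [hu1 j]) (hradge j) 2
      nlinarith [hsq, Real.pi_pos, sq_nonneg (1 - ‖z j‖^2), pow_pos (hradpos j) 2,
        mul_pos (pow_pos (hradpos j) 2) Real.pi_pos]
    have hfac : 0 ≤ ‖lam j‖^2 * (K * poissonInt μ (z j)) := by
      apply mul_nonneg (sq_nonneg _) (mul_nonneg hK0.le (hP0 j))
    calc ‖lam j‖^2 * t j^2 * (K * poissonInt μ (z j)) * (rad j^2 * Real.pi)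
        = (‖lam j‖^2 * (K * poissonInt μ (z j))) * (t j^2 * (rad j^2 * Real.pi)) := by ring
      _ ≤ (‖lam j‖^2 * (K * poissonInt μ (z j))) * (1/(s^2*Real.pi)) :=
          mul_le_mul_of_nonneg_left key1 hfac
      _ = K / (Real.pi * s^2) * (‖lam j‖^2 * poissonInt μ (z j)) := by
          field_simp
  calc (∫⁻ w in Metric.ball (0:ℂ) 1,
        ENNReal.ofReal (‖∑' j, lam j * c j * ((t j : ℝ) : ℂ) *
            (bball (z j) (η/4)).indicator (fun _ => (1:ℂ)) w‖^2 * poissonInt μ w))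
      ≤ ∫⁻ w in Metric.ball (0:ℂ) 1,
          ∑' j, Set.indicator (bball (z j) (η/4)) (fun _ => M j) w :=
        lintegral_mono hpt
    _ ≤ ∫⁻ w, ∑' j, Set.indicator (bball (z j) (η/4)) (fun _ => M j) w :=
        lintegral_mono' Measure.restrict_le_self le_rfl
    _ = ∑' j, ∫⁻ w, Set.indicator (bball (z j) (η/4)) (fun _ => M j) w :=
        lintegral_tsum (fun j => (hmeas j).aemeasurable)
    _ = ∑' j, M j * volume (bball (z j) (η/4)) := by
        apply tsum_congr
        intro j
        rw [lintegral_indicator (by rw [hBeq j]; exact measurableSet_ball) _,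
          setLIntegral_const]
    _ ≤ ∑' j, ENNReal.ofReal (K / (Real.pi * s^2)) *
          ENNReal.ofReal (‖lam j‖^2 * poissonInt μ (z j)) :=
        ENNReal.tsum_le_tsum hperterm
    _ = ENNReal.ofReal (K / (Real.pi * s^2)) *
          ∑' j, ENNReal.ofReal (‖lam j‖^2 * poissonInt μ (z j)) :=
        ENNReal.tsum_mul_left
end
end
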